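/- arXiv:2502.10936 — 9 statements merged into one kernel-verified Lean document; each statement's English description precedes it below -/
import Mathlib

section
/- Let p : Q̄_T → ℝ be bounded and measurable, and let u ∈ Z^1 satisfy u(x,0) ≥ 0 for all x ∈ Ω̄ and ∂_t u(x,t) ≥ ∫_Ω J(x,y) u(y,t) dy + p(x,t) u(x,t) for all x ∈ Ω̄ and t ∈ (0,T]. Then u(x,t) ≥ 0 for all (x,t) ∈ Q̄_T. -/
open MeasureTheory Set Function
open Topology Filter

lemma mvt_lb {f g : ℝ → ℝ} {a b m : ℝ} (hab : a ≤ b)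
    (hf : ContinuousOn f (Icc a b))
    (hf' : ∀ t ∈ Ioo a b, HasDerivAt f (g t) t)
    (hm : ∀ t ∈ Ioo a b, m ≤ g t) :
    f a + m * (b - a) ≤ f b := by
  have hmono : MonotoneOn (fun t => f t - m * t) (Icc a b) := by
    apply monotoneOn_of_hasDerivWithinAt_nonneg (convex_Icc a b)
      (hf.sub ((continuous_const.mul continuous_id).continuousOn))
      (f' := fun t => g t - m)
    · intro t ht
      rw [interior_Icc] at ht
      exact (((hf' t ht).sub (((hasDerivAt_id t).const_mul m).congr_deriv (by ring)))).hasDerivWithinAt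
    · intro t ht
      rw [interior_Icc] at ht
      have := hm t ht
      linarith
  have := hmono (left_mem_Icc.2 hab) (right_mem_Icc.2 hab) hab
  simp only at this
  nlinarith

set_option maxHeartbeats 2000000 in
/-- Maximum principle (nonnegativity) for the scalar nonlocal equation
`∂ₜ u ≥ ∫_Ω J(x,y) u(y,t) dy + p(x,t) u(x,t)` with nonnegative initial data. -/
theorem stmt_0 {N : ℕ} (Ω : Set (Fin N → ℝ)) (hΩne : Ω.Nonempty)
    (hΩopen : IsOpen Ω) (hΩbdd : Bornology.IsBounded Ω)
    (T : ℝ) (hT : 0 < T)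
    -- the kernel J satisfies condition (J)
    (J : (Fin N → ℝ) → (Fin N → ℝ) → ℝ)
    (hJcont : Continuous (Function.uncurry J))
    (hJnn : ∀ x y, 0 ≤ J x y)
    (hJdiag : ∀ x, 0 < J x x)
    (hJint : ∀ x, (∫ y, J x y) = 1)
    -- p is bounded and measurable on Q̄_T
    (p : (Fin N → ℝ) → ℝ → ℝ)
    (hpmeas : Measurable (Function.uncurry p))
    (hpbdd : ∃ M : ℝ, ∀ x ∈ closure Ω, ∀ t ∈ Icc (0:ℝ) T, |p x t| ≤ M)
    -- u ∈ Z¹ : bounded measurable, with u(x,·) ∈ C¹([0,T]) with derivative ut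
    (u ut : (Fin N → ℝ) → ℝ → ℝ)
    (humeas : Measurable (Function.uncurry u))
    (hubdd : ∃ M : ℝ, ∀ x ∈ closure Ω, ∀ t ∈ Icc (0:ℝ) T, |u x t| ≤ M)
    (huderiv : ∀ x ∈ closure Ω, ∀ t ∈ Icc (0:ℝ) T,
      HasDerivWithinAt (u x) (ut x t) (Icc (0:ℝ) T) t)
    (hutcont : ∀ x ∈ closure Ω, ContinuousOn (ut x) (Icc (0:ℝ) T))
    -- initial data and differential inequality
    (hinit : ∀ x ∈ closure Ω, 0 ≤ u x 0)
    (hineq : ∀ x ∈ closure Ω, ∀ t ∈ Ioc (0:ℝ) T,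
      (∫ y in Ω, J x y * u y t) + p x t * u x t ≤ ut x t) :
    ∀ x ∈ closure Ω, ∀ t ∈ Icc (0:ℝ) T, 0 ≤ u x t := by
  classical
  obtain ⟨M₀, hM₀⟩ := hpbdd
  obtain ⟨B₀, hB₀⟩ := hubdd
  set M : ℝ := max M₀ 0 with hMdef
  set B : ℝ := max B₀ 0 with hBdef
  have hMnn : 0 ≤ M := le_max_right _ _
  have hBnn : 0 ≤ B := le_max_right _ _
  have hM : ∀ x ∈ closure Ω, ∀ t ∈ Icc (0:ℝ) T, |p x t| ≤ M :=
    fun x hx t ht => le_trans (hM₀ x hx t ht) (le_max_left _ _)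
  have hB : ∀ x ∈ closure Ω, ∀ t ∈ Icc (0:ℝ) T, |u x t| ≤ B :=
    fun x hx t ht => le_trans (hB₀ x hx t ht) (le_max_left _ _)
  set K : ℝ := M + 1 with hKdef
  have hKpos : 0 < K := by positivity
  set C : ℝ := (1 + M + K) * B with hCdef
  have hCnn : 0 ≤ C := by positivity
  set w : (Fin N → ℝ) → ℝ → ℝ := fun x t => Real.exp (-K * t) * u x t with hwdef
  set wt : (Fin N → ℝ) → ℝ → ℝ :=
    fun x t => Real.exp (-K * t) * (ut x t - K * u x t) with hwtdef
  have hwderiv : ∀ x ∈ closure Ω, ∀ t ∈ Icc (0:ℝ) T,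
      HasDerivWithinAt (w x) (wt x t) (Icc (0:ℝ) T) t := by
    intro x hx t ht
    have h1 : HasDerivAt (fun s => Real.exp (-K * s)) (Real.exp (-K * t) * -K) t :=
      ((hasDerivAt_id t).const_mul (-K)).congr_deriv (by ring) |>.exp
    have := (h1.hasDerivWithinAt.mul (huderiv x hx t ht))
    refine this.congr_deriv ?_
    show _ = Real.exp (-K * t) * (ut x t - K * u x t)
    ring
  have hwcont : ∀ x ∈ closure Ω, ContinuousOn (w x) (Icc (0:ℝ) T) :=
    fun x hx t ht => ((hwderiv x hx t ht).continuousWithinAt)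
  have hJxint : ∀ x : Fin N → ℝ, Integrable (fun y => J x y) := by
    intro x
    by_contra h
    have h1 := hJint x
    rw [integral_undef h] at h1
    exact one_ne_zero h1.symm
  have hJΩle : ∀ x : Fin N → ℝ, (∫ y in Ω, J x y) ≤ 1 := by
    intro x
    rw [← hJint x]
    exact setIntegral_le_integral (hJxint x) (Filter.Eventually.of_forall (hJnn x))
  have key_int : ∀ x : Fin N → ℝ, ∀ t : ℝ, ∀ A : ℝ, 0 ≤ A →
      (∀ y ∈ closure Ω, -A ≤ u y t) → -A ≤ ∫ y in Ω, J x y * u y t := by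
    intro x t A hA hu
    by_cases hI : IntegrableOn (fun y => J x y * u y t) Ω volume
    · have hI2 : IntegrableOn (fun y => J x y * (-A)) Ω volume :=
        ((hJxint x).integrableOn).mul_const _
      have hmono : (∫ y in Ω, J x y * (-A)) ≤ ∫ y in Ω, J x y * u y t := by
        refine setIntegral_mono_on hI2 hI hΩopen.measurableSet ?_
        intro y hy
        exact mul_le_mul_of_nonneg_left (hu y (subset_closure hy)) (hJnn x y)
      have heq : (∫ y in Ω, J x y * (-A)) = (∫ y in Ω, J x y) * (-A) :=
        integral_mul_const _ _
      have h0 : (0:ℝ) ≤ ∫ y in Ω, J x y :=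
        integral_nonneg (fun y => hJnn x y)
      nlinarith [hJΩle x, mul_nonneg hA (by linarith [hJΩle x] :
        (0:ℝ) ≤ 1 - ∫ y in Ω, J x y)]
    · rw [integral_undef hI]
      linarith
  have hwt_lb : ∀ x ∈ closure Ω, ∀ t ∈ Ioc (0:ℝ) T, -C ≤ wt x t := by
    intro x hx t ht
    have htI : t ∈ Icc (0:ℝ) T := ⟨le_of_lt ht.1, ht.2⟩
    have hut : (∫ y in Ω, J x y * u y t) + p x t * u x t ≤ ut x t := hineq x hx t ht
    have hint : -B ≤ ∫ y in Ω, J x y * u y t := by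
      refine key_int x t B hBnn ?_
      intro y hy
      linarith [(abs_le.1 (hB y hy t htI)).1]
    have hpu : -(M * B) ≤ p x t * u x t := by
      have h1 : |p x t * u x t| ≤ M * B := by
        rw [abs_mul]
        exact mul_le_mul (hM x hx t htI) (hB x hx t htI) (abs_nonneg _) hMnn
      linarith [(abs_le.1 h1).1]
    have hKu : K * u x t ≤ K * B :=
      mul_le_mul_of_nonneg_left (abs_le.1 (hB x hx t htI)).2 hKpos.le
    have h2 : -C ≤ ut x t - K * u x t := by
      simp only [hCdef]
      nlinarith
    have hexp : Real.exp (-K * t) ≤ 1 := by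
      apply Real.exp_le_one_iff.2
      nlinarith [mul_pos hKpos ht.1]
    have hexp0 : 0 < Real.exp (-K * t) := Real.exp_pos _
    simp only [hwtdef]
    nlinarith [mul_le_mul_of_nonneg_left h2 hexp0.le,
      mul_nonneg hCnn (by linarith : (0:ℝ) ≤ 1 - Real.exp (-K * t))]
  have hwt_sharp : ∀ x ∈ closure Ω, ∀ t ∈ Ioc (0:ℝ) T, ∀ A : ℝ, 0 ≤ A →
      (∀ y ∈ closure Ω, -A ≤ w y t) → w x t ≤ 0 → -A - w x t ≤ wt x t := by
    intro x hx t ht A hA hwA hw0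
    have htI : t ∈ Icc (0:ℝ) T := ⟨le_of_lt ht.1, ht.2⟩
    have hexp0 : 0 < Real.exp (-K * t) := Real.exp_pos _
    have hexpK : 0 < Real.exp (K * t) := Real.exp_pos _
    have hEE : Real.exp (-K * t) * Real.exp (K * t) = 1 := by
      rw [← Real.exp_add]; ring_nf; exact Real.exp_zero
    have hscale : ∀ z : ℝ, Real.exp (K * t) * (Real.exp (-K * t) * z) = z := by
      intro z
      linear_combination z * hEE
    have hut : (∫ y in Ω, J x y * u y t) + p x t * u x t ≤ ut x t := hineq x hx t ht
    have hint : -(A * Real.exp (K * t)) ≤ ∫ y in Ω, J x y * u y t := by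
      refine key_int x t (A * Real.exp (K * t)) (by positivity) ?_
      intro y hy
      have h1 : -A ≤ Real.exp (-K * t) * u y t := hwA y hy
      have h3 := mul_le_mul_of_nonneg_left h1 hexpK.le
      rw [hscale] at h3
      linarith
    have hu0 : u x t ≤ 0 := by
      have h1 : Real.exp (-K * t) * u x t ≤ 0 := hw0
      have h3 := mul_le_mul_of_nonneg_left h1 hexpK.le
      rw [hscale] at h3
      linarith
    have hp1 : p x t - K ≤ -1 := by
      have := (abs_le.1 (hM x hx t htI)).2
      simp only [hKdef]; linarith
    have hpK : -(u x t) ≤ (p x t - K) * u x t := by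
      nlinarith [mul_nonneg (by linarith : (0:ℝ) ≤ -(p x t - K) - 1)
        (by linarith : (0:ℝ) ≤ -(u x t))]
    have h2 : -(A * Real.exp (K * t)) - u x t ≤ ut x t - K * u x t := by nlinarith
    have h3 := mul_le_mul_of_nonneg_left h2 hexp0.le
    have h4 : Real.exp (-K * t) * (-(A * Real.exp (K * t)) - u x t)
        = -A - Real.exp (-K * t) * u x t := by
      linear_combination (-A) * hEE
    simp only [hwtdef, hwdef]
    linarith [h3, h4.symm.le, h4.le]
  -- main barrier estimate
  have main : ∀ ε : ℝ, 0 < ε → ∀ x ∈ closure Ω, ∀ t ∈ Icc (0:ℝ) T,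
      -(ε * (1 + t)) ≤ w x t := by
    intro ε hε
    set S : Set ℝ := {t | t ∈ Icc (0:ℝ) T ∧
      ∀ x ∈ closure Ω, ∀ s ∈ Icc (0:ℝ) t, -(ε * (1 + s)) ≤ w x s} with hSdef
    have h0S : (0:ℝ) ∈ S := by
      refine ⟨⟨le_refl _, le_of_lt hT⟩, ?_⟩
      intro x hx s hs
      have hs0 : s = 0 := le_antisymm hs.2 hs.1
      subst hs0
      have hw00 : w x 0 = u x 0 := by simp [hwdef]
      rw [hw00]
      nlinarith [hinit x hx]
    have hSne : S.Nonempty := ⟨0, h0S⟩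
    have hSbdd : BddAbove S := ⟨T, fun t ht => ht.1.2⟩
    set τ := sSup S with hτdef
    have hτmem : τ ∈ Icc (0:ℝ) T :=
      ⟨le_csSup hSbdd h0S, csSup_le hSne (fun t ht => ht.1.2)⟩
    have hτS : τ ∈ S := by
      refine ⟨hτmem, ?_⟩
      intro x hx s hs
      rcases lt_or_eq_of_le hs.2 with h | h
      · obtain ⟨a, haS, hsa⟩ := exists_lt_of_lt_csSup hSne h
        exact haS.2 x hx s ⟨hs.1, le_of_lt hsa⟩
      · subst h
        rcases eq_or_lt_of_le hτmem.1 with h0 | h0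
        · rw [← h0]
          have hw00 : w x 0 = u x 0 := by simp [hwdef]
          rw [hw00]
          nlinarith [hinit x hx]
        · set f : ℝ → ℝ := fun r => w x r + ε * (1 + r) with hfdef
          have hfc : ContinuousWithinAt f (Ico 0 τ) τ := by
            have h1 : ContinuousWithinAt f (Icc (0:ℝ) T) τ := by
              apply ContinuousWithinAt.add
              · exact hwcont x hx τ hτmem
              · exact (continuous_const.mul (continuous_const.add continuous_id)).continuousWithinAt
            exact h1.mono (fun r hr => ⟨hr.1, le_trans (le_of_lt hr.2) hτmem.2⟩)
          have hnb : (𝓝[Ico (0:ℝ) τ] τ).NeBot := by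
            apply mem_closure_iff_nhdsWithin_neBot.1
            rw [closure_Ico (ne_of_lt h0)]
            exact ⟨hτmem.1, le_refl _⟩
          have hev : ∀ᶠ r in 𝓝[Ico (0:ℝ) τ] τ, 0 ≤ f r := by
            filter_upwards [self_mem_nhdsWithin] with r hr
            obtain ⟨a, haS, hra⟩ := exists_lt_of_lt_csSup hSne hr.2
            have := haS.2 x hx r ⟨hr.1, le_of_lt hra⟩
            simp only [hfdef]
            linarith
          have hfτ : 0 ≤ f τ := ge_of_tendsto hfc hev
          simp only [hfdef] at hfτ
          linarith
    have hτT : τ = T := by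
      by_contra hneq
      have hτltT : τ < T := lt_of_le_of_ne hτmem.2 hneq
      set δ : ℝ := min (T - τ) (ε / (C + 1)) with hδdef
      have hδpos : 0 < δ := lt_min (by linarith) (by positivity)
      have hδle : δ ≤ ε / (C + 1) := min_le_right _ _
      have hδleT : δ ≤ T - τ := min_le_left _ _
      have hδC : C * δ ≤ ε := by
        have h3 : C * (ε / (C + 1)) ≤ ε := by
          rw [← mul_div_assoc, div_le_iff₀ (by positivity : (0:ℝ) < C + 1)]
          nlinarith
        nlinarith [mul_le_mul_of_nonneg_left hδle hCnn]
      have hτδT : τ + δ ≤ T := by linarith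
      have hmemS : τ + δ ∈ S := by
        refine ⟨⟨by linarith [hτmem.1], hτδT⟩, ?_⟩
        intro x hx s hs
        rcases le_or_gt s τ with hsτ | hsτ
        · exact hτS.2 x hx s ⟨hs.1, hsτ⟩
        · by_contra hcon
          push_neg at hcon
          have ht1T : s ≤ T := le_trans hs.2 hτδT
          set S2 : Set ℝ := Icc τ s ∩ (fun r => w x r + ε * (1 + r)) ⁻¹' (Ici 0)
            with hS2def
          have hS2closed : IsClosed S2 := by
            rw [hS2def]
            apply ContinuousOn.preimage_isClosed_of_isClosed _ isClosed_Icc isClosed_Ici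
            apply ContinuousOn.add
            · exact (hwcont x hx).mono (fun r hr => ⟨le_trans hτmem.1 hr.1, le_trans hr.2 ht1T⟩)
            · exact (continuous_const.mul (continuous_const.add continuous_id)).continuousOn
          have hτS2 : τ ∈ S2 := by
            rw [hS2def]
            refine ⟨⟨le_refl _, le_of_lt hsτ⟩, ?_⟩
            have := hτS.2 x hx τ ⟨hτmem.1, le_refl _⟩
            simp only [mem_preimage, mem_Ici]
            linarith
          have hS2ne : S2.Nonempty := ⟨τ, hτS2⟩
          have hS2bdd : BddAbove S2 := by
            refine ⟨s, fun r hr => ?_⟩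
            rw [hS2def] at hr
            exact hr.1.2
          set t0 := sSup S2 with ht0def
          have ht0S2 : t0 ∈ S2 := hS2closed.csSup_mem hS2ne hS2bdd
          rw [hS2def] at ht0S2
          have ht0mem : t0 ∈ Icc τ s := ht0S2.1
          have ht0w : -(ε * (1 + t0)) ≤ w x t0 := by
            have := ht0S2.2
            simp only [mem_preimage, mem_Ici] at this
            linarith
          have ht0lt : t0 < s := by
            rcases lt_or_eq_of_le ht0mem.2 with h | h
            · exact h
            · exfalso
              rw [h] at ht0w
              linarith
          have hbad : ∀ r ∈ Ioc t0 s, w x r < -(ε * (1 + r)) := by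
            intro r hr
            by_contra hcon2
            push_neg at hcon2
            have hrS2 : r ∈ S2 := by
              rw [hS2def]
              refine ⟨⟨le_trans ht0mem.1 (le_of_lt hr.1), hr.2⟩, ?_⟩
              simp only [mem_preimage, mem_Ici]
              linarith
            exact absurd (le_csSup hS2bdd hrS2) (not_le.2 hr.1)
          have hA : ∀ y ∈ closure Ω, ∀ r ∈ Icc τ s,
              -(ε * (1 + τ) + C * δ) ≤ w y r := by
            intro y hy r hr
            have hrT : r ∈ Icc (0:ℝ) T := ⟨le_trans hτmem.1 hr.1, le_trans hr.2 ht1T⟩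
            have hmvt : w y τ + (-C) * (r - τ) ≤ w y r := by
              apply mvt_lb hr.1
              · exact (hwcont y hy).mono (fun z hz =>
                  ⟨le_trans hτmem.1 hz.1, le_trans hz.2 hrT.2⟩)
              · intro z hz
                have hzT : z ∈ Icc (0:ℝ) T :=
                  ⟨le_trans hτmem.1 (le_of_lt hz.1), le_trans (le_of_lt hz.2) hrT.2⟩
                apply (hwderiv y hy z hzT).hasDerivAt
                apply Icc_mem_nhds
                · exact lt_of_le_of_lt hτmem.1 hz.1
                · exact lt_of_lt_of_le hz.2 hrT.2
              · intro z hz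
                exact hwt_lb y hy z ⟨lt_of_le_of_lt hτmem.1 hz.1,
                  le_trans (le_of_lt hz.2) hrT.2⟩
            have hwτ : -(ε * (1 + τ)) ≤ w y τ := hτS.2 y hy τ ⟨hτmem.1, le_refl _⟩
            have hrδ : r - τ ≤ δ := by linarith [hr.2, hs.2]
            nlinarith [mul_le_mul_of_nonneg_left hrδ hCnn, sub_nonneg.2 hr.1]
          have hwt2 : ∀ r ∈ Ioo t0 s, -ε ≤ wt x r := by
            intro r hr
            have hrI : r ∈ Ioc (0:ℝ) T :=
              ⟨lt_of_le_of_lt (le_trans hτmem.1 ht0mem.1) hr.1,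
               le_trans (le_of_lt hr.2) ht1T⟩
            have hwr : w x r < -(ε * (1 + r)) := hbad r ⟨hr.1, le_of_lt hr.2⟩
            have hw0 : w x r ≤ 0 := by
              nlinarith [mul_pos hε (by linarith [hrI.1] : (0:ℝ) < 1 + r)]
            have hrτ : τ ≤ r := le_trans ht0mem.1 (le_of_lt hr.1)
            have hAnn : (0:ℝ) ≤ ε * (1 + τ) + C * δ := by
              nlinarith [mul_nonneg hε.le (by linarith [hτmem.1] : (0:ℝ) ≤ 1 + τ),
                mul_nonneg hCnn hδpos.le]
            have hsharp := hwt_sharp x hx r hrI (ε * (1 + τ) + C * δ) hAnn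
              (fun y hy => hA y hy r ⟨hrτ, le_of_lt hr.2⟩) hw0
            nlinarith [mul_nonneg hε.le (sub_nonneg.2 hrτ)]
          have hmvt2 : w x t0 + (-ε) * (s - t0) ≤ w x s := by
            apply mvt_lb (le_of_lt ht0lt)
            · exact (hwcont x hx).mono (fun z hz =>
                ⟨le_trans hτmem.1 (le_trans ht0mem.1 hz.1), le_trans hz.2 ht1T⟩)
            · intro z hz
              have hzT : z ∈ Icc (0:ℝ) T :=
                ⟨le_trans hτmem.1 (le_trans ht0mem.1 (le_of_lt hz.1)),
                 le_trans (le_of_lt hz.2) ht1T⟩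
              apply (hwderiv x hx z hzT).hasDerivAt
              apply Icc_mem_nhds
              · exact lt_of_le_of_lt (le_trans hτmem.1 ht0mem.1) hz.1
              · exact lt_of_lt_of_le hz.2 ht1T
            · exact hwt2
          nlinarith
      have : τ + δ ≤ τ := le_csSup hSbdd hmemS
      linarith
    intro x hx t ht
    exact hτS.2 x hx t ⟨ht.1, hτT ▸ ht.2⟩
  -- conclude
  intro x hx t ht
  have hw0 : 0 ≤ w x t := by
    by_contra h
    push_neg at h
    have h1t : (0:ℝ) < 1 + t := by linarith [ht.1]
    have hεpos : 0 < -(w x t) / (2 * (1 + t)) :=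
      div_pos (by linarith) (by linarith)
    have hmain := main (-(w x t) / (2 * (1 + t))) hεpos x hx t ht
    have hcalc : -(w x t) / (2 * (1 + t)) * (1 + t) = -(w x t) / 2 := by
      field_simp
    rw [hcalc] at hmain
    linarith
  have hexp0 : 0 < Real.exp (-K * t) := Real.exp_pos _
  have hexpK : 0 < Real.exp (K * t) := Real.exp_pos _
  have hEE : Real.exp (-K * t) * Real.exp (K * t) = 1 := by
    rw [← Real.exp_add]; ring_nf; exact Real.exp_zero
  have hscale : Real.exp (K * t) * (Real.exp (-K * t) * u x t) = u x t := by
    linear_combination (u x t) * hEE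
  have h1 : (0:ℝ) ≤ Real.exp (-K * t) * u x t := hw0
  have h3 := mul_le_mul_of_nonneg_left h1 hexpK.le
  rw [mul_zero, hscale] at h3
  exact h3
end

section
/- Let p : Q̄_T → ℝ be bounded and measurable, and let u ∈ Z^1 satisfy u(x,0) ≥ 0 for all x ∈ Ω̄ and ∂_t u(x,t) ≥ ∫_Ω J(x,y) u(y,t) dy + p(x,t) u(x,t) for all x ∈ Ω̄ and t ∈ (0,T]. If u(x₀,0) > 0 for some x₀ ∈ Ω̄, then u(x₀,t) > 0 for all t ∈ [0,T]. -/
open MeasureTheory Set Function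

/-- if moreover `u(x₀,0) > 0` for some `x₀ ∈ Ω̄`, then `u(x₀,t) > 0`
for all `t ∈ [0,T]`. -/
theorem stmt_1 {N : ℕ} (Ω : Set (Fin N → ℝ)) (hΩne : Ω.Nonempty)
    (hΩopen : IsOpen Ω) (hΩbdd : Bornology.IsBounded Ω)
    (T : ℝ) (hT : 0 < T)
    -- the kernel J satisfies condition (J)
    (J : (Fin N → ℝ) → (Fin N → ℝ) → ℝ)
    (hJcont : Continuous (Function.uncurry J))
    (hJnn : ∀ x y, 0 ≤ J x y)
    (hJdiag : ∀ x, 0 < J x x)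
    (hJint : ∀ x, (∫ y, J x y) = 1)
    -- p is bounded and measurable on Q̄_T
    (p : (Fin N → ℝ) → ℝ → ℝ)
    (hpmeas : Measurable (Function.uncurry p))
    (hpbdd : ∃ M : ℝ, ∀ x ∈ closure Ω, ∀ t ∈ Icc (0:ℝ) T, |p x t| ≤ M)
    -- u ∈ Z¹ : bounded measurable, with u(x,·) ∈ C¹([0,T]) with derivative ut
    (u ut : (Fin N → ℝ) → ℝ → ℝ)
    (humeas : Measurable (Function.uncurry u))
    (hubdd : ∃ M : ℝ, ∀ x ∈ closure Ω, ∀ t ∈ Icc (0:ℝ) T, |u x t| ≤ M)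
    (huderiv : ∀ x ∈ closure Ω, ∀ t ∈ Icc (0:ℝ) T,
      HasDerivWithinAt (u x) (ut x t) (Icc (0:ℝ) T) t)
    (hutcont : ∀ x ∈ closure Ω, ContinuousOn (ut x) (Icc (0:ℝ) T))
    (hinit : ∀ x ∈ closure Ω, 0 ≤ u x 0)
    (hineq : ∀ x ∈ closure Ω, ∀ t ∈ Ioc (0:ℝ) T,
      (∫ y in Ω, J x y * u y t) + p x t * u x t ≤ ut x t)
    (x₀ : Fin N → ℝ) (hx₀ : x₀ ∈ closure Ω) (hx₀pos : 0 < u x₀ 0) :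
    ∀ t ∈ Icc (0:ℝ) T, 0 < u x₀ t := by
  classical
  obtain ⟨Mp, hMp⟩ := hpbdd
  obtain ⟨Mu0, hMu0⟩ := hubdd
  set M : ℝ := max Mp 0 with hMdef
  have hM0 : (0:ℝ) ≤ M := le_max_right _ _
  have hpM : ∀ x ∈ closure Ω, ∀ t ∈ Icc (0:ℝ) T, |p x t| ≤ M :=
    fun x hx t ht => (hMp x hx t ht).trans (le_max_left _ _)
  set Mu : ℝ := max Mu0 0 with hMudef
  have hMu0' : (0:ℝ) ≤ Mu := le_max_right _ _
  have huM : ∀ x ∈ closure Ω, ∀ t ∈ Icc (0:ℝ) T, |u x t| ≤ Mu :=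
    fun x hx t ht => (hMu0 x hx t ht).trans (le_max_left _ _)
  set C : ℝ := M + 1 with hCdef
  have hC0 : (0:ℝ) < C := by positivity
  -- continuity of u x on [0,T]
  have hucont : ∀ x ∈ closure Ω, ContinuousOn (u x) (Icc (0:ℝ) T) :=
    fun x hx t htm => (huderiv x hx t htm).continuousWithinAt
  -- measurability of sections
  have humeas' : ∀ t : ℝ, Measurable fun y => u y t :=
    fun t => humeas.comp (measurable_id.prodMk measurable_const)
  -- J x is continuous and integrable
  have hJxc : ∀ x, Continuous (J x) := fun x => hJcont.comp (Continuous.prodMk_right x)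
  have hJx : ∀ x, Integrable (J x) := by
    intro x
    by_contra h
    have := hJint x
    rw [integral_undef h] at this
    exact one_ne_zero this.symm
  -- integrability of the kernel term
  have hint : ∀ x, ∀ t ∈ Icc (0:ℝ) T, IntegrableOn (fun y => J x y * u y t) Ω := by
    intro x t ht
    have hmeas : Measurable fun y => J x y * u y t := ((hJxc x).measurable).mul (humeas' t)
    refine Integrable.mono' (((hJx x).const_mul Mu).restrict (s := Ω))
      hmeas.aestronglyMeasurable ?_
    refine (ae_restrict_iff' hΩopen.measurableSet).2 (Filter.Eventually.of_forall ?_)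
    intro y hy
    have h1 : |u y t| ≤ Mu := huM y (subset_closure hy) t ht
    have h2 : ‖J x y * u y t‖ = J x y * |u y t| := by
      rw [Real.norm_eq_abs, abs_mul, abs_of_nonneg (hJnn x y)]
    rw [h2, mul_comm Mu (J x y)]
    exact mul_le_mul_of_nonneg_left h1 (hJnn x y)
  have hJΩle : ∀ x, (∫ y in Ω, J x y) ≤ 1 := by
    intro x
    rw [← hJint x]
    exact setIntegral_le_integral (hJx x) (Filter.Eventually.of_forall (hJnn x))
  -- lower bound on the kernel integral
  have hlow : ∀ x, ∀ t ∈ Icc (0:ℝ) T, ∀ b : ℝ, 0 ≤ b → (∀ y ∈ closure Ω, -b ≤ u y t) →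
      -b ≤ ∫ y in Ω, J x y * u y t := by
    intro x t ht b hb hby
    have h1 : (∫ y in Ω, J x y * (-b)) ≤ ∫ y in Ω, J x y * u y t := by
      refine setIntegral_mono_on (((hJx x).restrict).mul_const _) (hint x t ht)
        hΩopen.measurableSet ?_
      intro y hy
      exact mul_le_mul_of_nonneg_left (hby y (subset_closure hy)) (hJnn x y)
    have h2 : (∫ y in Ω, J x y * (-b)) = (∫ y in Ω, J x y) * (-b) := by
      rw [integral_mul_const]
    have h3 : -b ≤ (∫ y in Ω, J x y) * (-b) := by
      have := mul_le_mul_of_nonpos_right (hJΩle x) (neg_nonpos.2 hb)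
      linarith
    linarith
  -- FTC
  have hFTC : ∀ x ∈ closure Ω, ∀ a b : ℝ, 0 ≤ a → a ≤ b → b ≤ T →
      (∫ s in a..b, ut x s) = u x b - u x a := by
    intro x hx a b ha hab hbT
    have hsub : Icc a b ⊆ Icc 0 T := Icc_subset_Icc ha hbT
    refine intervalIntegral.integral_eq_sub_of_hasDeriv_right_of_le hab
      ((hucont x hx).mono hsub) ?_
      (((hutcont x hx).mono hsub).intervalIntegrable_of_Icc hab)
    intro s hs
    have hsmem : s ∈ Ioo (0:ℝ) T := ⟨lt_of_le_of_lt ha hs.1, lt_of_lt_of_le hs.2 hbT⟩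
    have hd : HasDerivAt (u x) (ut x s) s :=
      (huderiv x hx s (Ioo_subset_Icc_self hsmem)).hasDerivAt
        (Icc_mem_nhds hsmem.1 hsmem.2)
    exact hd.hasDerivWithinAt
  -- key induction
  have hkey : ∀ k : ℕ, ∀ t ∈ Icc (0:ℝ) T, ∀ x ∈ closure Ω,
      -(Mu * (C*t)^k / (k.factorial : ℝ)) ≤ u x t := by
    intro k
    induction k with
    | zero =>
      intro t ht x hx
      have := abs_le.1 (huM x hx t ht)
      simpa using this.1
    | succ k ih =>
      intro t ht x hx
      have hCt : (0:ℝ) ≤ C * t := mul_nonneg hC0.le ht.1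
      have hRHSnn : 0 ≤ Mu * (C*t)^(k+1) / ((k+1).factorial : ℝ) := by
        have := pow_nonneg hCt (k+1)
        have hf : (0:ℝ) < ((k+1).factorial : ℝ) := by
          exact_mod_cast Nat.factorial_pos _
        positivity
      by_cases hneg : 0 ≤ u x t
      · linarith
      push_neg at hneg
      -- last zero of u x before t
      set S : Set ℝ := Icc 0 t ∩ (u x) ⁻¹' (Ici 0) with hSdef
      have hS0 : (0:ℝ) ∈ S := ⟨⟨le_refl 0, ht.1⟩, hinit x hx⟩
      have hSbdd : BddAbove S := ⟨t, fun s hs => hs.1.2⟩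
      have hScl : IsClosed S :=
        ContinuousOn.preimage_isClosed_of_isClosed
          ((hucont x hx).mono (Icc_subset_Icc le_rfl ht.2)) isClosed_Icc isClosed_Ici
      set t₀ : ℝ := sSup S with ht₀def
      have ht₀S : t₀ ∈ S := hScl.csSup_mem ⟨0, hS0⟩ hSbdd
      have ht₀0 : 0 ≤ t₀ := ht₀S.1.1
      have ht₀t : t₀ < t := lt_of_le_of_ne ht₀S.1.2 (by
        intro h
        exact absurd (h ▸ ht₀S.2) (not_le.2 hneg))
      have husneg : ∀ s ∈ Ioc t₀ t, u x s < 0 := by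
        intro s hs
        by_contra h
        push_neg at h
        have : s ∈ S := ⟨⟨ht₀0.trans hs.1.le, hs.2⟩, h⟩
        exact absurd (le_csSup hSbdd this) (not_le.2 hs.1)
      set c₁ : ℝ := Mu * C^(k+1) / (k.factorial : ℝ) with hc₁def
      have hc₁nn : 0 ≤ c₁ := by
        have hf : (0:ℝ) < (k.factorial : ℝ) := by exact_mod_cast Nat.factorial_pos _
        positivity
      -- pointwise bound on ut on Ioc t₀ t
      have hptw : ∀ s ∈ Ioc t₀ t, -(c₁ * s^k) ≤ ut x s := by
        intro s hs
        have hsIcc : s ∈ Icc (0:ℝ) T := ⟨ht₀0.trans hs.1.le, hs.2.trans ht.2⟩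
        have hsIoc : s ∈ Ioc (0:ℝ) T := ⟨lt_of_le_of_lt ht₀0 hs.1, hsIcc.2⟩
        have hs0 : (0:ℝ) ≤ s := hsIcc.1
        set b : ℝ := Mu * (C*s)^k / (k.factorial : ℝ) with hbdef
        have hbnn : 0 ≤ b := by
          have hf : (0:ℝ) < (k.factorial : ℝ) := by exact_mod_cast Nat.factorial_pos _
          have := pow_nonneg (mul_nonneg hC0.le hs0) k
          positivity
        have h1 := hineq x hx s hsIoc
        have h2 : -b ≤ ∫ y in Ω, J x y * u y s :=
          hlow x s hsIcc b hbnn (fun y hy => ih s hsIcc y hy)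
        have hus : -b ≤ u x s := ih s hsIcc x hx
        have husn : u x s < 0 := husneg s hs
        have hp := abs_le.1 (hpM x hx s hsIcc)
        have h3 : -(M * b) ≤ p x s * u x s := by nlinarith
        have hcb : c₁ * s^k = C * b := by
          rw [hbdef, hc₁def, mul_pow]
          ring
        rw [hcb]
        have : -(C * b) = -b + -(M * b) := by rw [hCdef]; ring
        linarith
      -- integrate
      have hutint : IntervalIntegrable (ut x) volume t₀ t :=
        ((hutcont x hx).mono (Icc_subset_Icc ht₀0 ht.2)).intervalIntegrable_of_Icc ht₀t.le
      have hmono : (∫ s in t₀..t, -(c₁ * s^k)) ≤ ∫ s in t₀..t, ut x s := by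
        rw [intervalIntegral.integral_of_le ht₀t.le, intervalIntegral.integral_of_le ht₀t.le]
        refine setIntegral_mono_on ?_ ?_ measurableSet_Ioc hptw
        · exact ((continuous_const.mul (continuous_pow k)).neg.integrableOn_Ioc)
        · exact hutint.1
      have hval : (∫ s in t₀..t, -(c₁ * s^k))
          = -(c₁ * ((t^(k+1) - t₀^(k+1))/((k:ℝ)+1))) := by
        rw [intervalIntegral.integral_neg, intervalIntegral.integral_const_mul,
          integral_pow]
      have hftc := hFTC x hx t₀ t ht₀0 ht₀t.le ht.2
      have hfin : -(c₁ * ((t^(k+1) - t₀^(k+1))/((k:ℝ)+1))) + u x t₀ ≤ u x t := by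
        rw [← hval]
        have := hmono.trans_eq hftc
        linarith
      have ht₀pow : 0 ≤ t₀^(k+1) := pow_nonneg ht₀0 _
      have hut₀ : 0 ≤ u x t₀ := ht₀S.2
      have hgoal : Mu * (C*t)^(k+1) / ((k+1).factorial : ℝ)
          = c₁ * (t^(k+1) / ((k:ℝ)+1)) := by
        rw [hc₁def, mul_pow, Nat.factorial_succ]
        have hf : ((k.factorial : ℝ)) ≠ 0 := by
          exact_mod_cast (Nat.factorial_pos k).ne'
        push_cast
        field_simp
      rw [hgoal]
      have hdiv : 0 ≤ t₀^(k+1) / ((k:ℝ)+1) := by positivity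
      have : c₁ * ((t^(k+1) - t₀^(k+1))/((k:ℝ)+1)) ≤ c₁ * (t^(k+1)/((k:ℝ)+1)) := by
        apply mul_le_mul_of_nonneg_left _ hc₁nn
        have hk1 : (0:ℝ) < (k:ℝ)+1 := by positivity
        exact (div_le_div_iff_of_pos_right hk1).2 (by linarith)
      linarith
  -- nonnegativity of u on Q̄_T
  have hnonneg : ∀ t ∈ Icc (0:ℝ) T, ∀ x ∈ closure Ω, 0 ≤ u x t := by
    intro t ht x hx
    have hlim : Filter.Tendsto (fun k : ℕ => -(Mu * (C*t)^k / (k.factorial : ℝ)))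
        Filter.atTop (nhds 0) := by
      have h1 := (FloorSemiring.tendsto_pow_div_factorial_atTop (K := ℝ) (C*t)).const_mul Mu
      have h2 := h1.neg
      simp only [mul_zero, neg_zero] at h2
      convert h2 using 2 with k
      rw [mul_div_assoc]
    exact le_of_tendsto hlim (Filter.Eventually.of_forall (fun k => hkey k t ht x hx))
  -- final positivity at x₀
  intro t ht
  rcases eq_or_lt_of_le ht.1 with h0 | h0
  · rw [← h0]; exact hx₀pos
  set g : ℝ → ℝ := fun s => u x₀ s * Real.exp (M * s) with hgdef
  set g' : ℝ → ℝ := fun s => (ut x₀ s + M * u x₀ s) * Real.exp (M * s) with hg'def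
  have hsub : Icc (0:ℝ) t ⊆ Icc (0:ℝ) T := Icc_subset_Icc le_rfl ht.2
  have hgc : ContinuousOn g (Icc 0 t) :=
    ((hucont x₀ hx₀).mono hsub).mul
      ((Real.continuous_exp.comp (continuous_const.mul continuous_id)).continuousOn)
  have hg'c : ContinuousOn g' (Icc 0 t) :=
    (((hutcont x₀ hx₀).mono hsub).add
      (continuousOn_const.mul ((hucont x₀ hx₀).mono hsub))).mul
      ((Real.continuous_exp.comp (continuous_const.mul continuous_id)).continuousOn)
  have hgderiv : ∀ s ∈ Ioo (0:ℝ) t, HasDerivWithinAt g (g' s) (Ioi s) s := by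
    intro s hs
    have hsmem : s ∈ Ioo (0:ℝ) T := ⟨hs.1, lt_of_lt_of_le hs.2 ht.2⟩
    have h1 : HasDerivAt (u x₀) (ut x₀ s) s :=
      (huderiv x₀ hx₀ s (Ioo_subset_Icc_self hsmem)).hasDerivAt
        (Icc_mem_nhds hsmem.1 hsmem.2)
    have h2 : HasDerivAt (fun s => Real.exp (M * s)) (Real.exp (M * s) * (M * 1)) s :=
      ((hasDerivAt_id s).const_mul M).exp
    have h3 := h1.mul h2
    have : ut x₀ s * Real.exp (M * s) + u x₀ s * (Real.exp (M * s) * (M * 1)) = g' s := by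
      rw [hg'def]; ring
    rw [this] at h3
    exact h3.hasDerivWithinAt
  have hftc : (∫ s in (0:ℝ)..t, g' s) = g t - g 0 :=
    intervalIntegral.integral_eq_sub_of_hasDeriv_right_of_le h0.le hgc hgderiv
      (hg'c.intervalIntegrable_of_Icc h0.le)
  have hig : 0 ≤ ∫ s in (0:ℝ)..t, g' s := by
    rw [intervalIntegral.integral_of_le h0.le]
    refine setIntegral_nonneg measurableSet_Ioc ?_
    intro s hs
    have hsIcc : s ∈ Icc (0:ℝ) T := ⟨hs.1.le, hs.2.trans ht.2⟩
    have hsIoc : s ∈ Ioc (0:ℝ) T := ⟨hs.1, hsIcc.2⟩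
    have h1 := hineq x₀ hx₀ s hsIoc
    have h2 : 0 ≤ ∫ y in Ω, J x₀ y * u y s := by
      refine setIntegral_nonneg hΩopen.measurableSet ?_
      intro y hy
      exact mul_nonneg (hJnn x₀ y) (hnonneg s hsIcc y (subset_closure hy))
    have h3 : 0 ≤ u x₀ s := hnonneg s hsIcc x₀ hx₀
    have hp := abs_le.1 (hpM x₀ hx₀ s hsIcc)
    have h4 : -(M * u x₀ s) ≤ p x₀ s * u x₀ s := by nlinarith
    have h5 : 0 ≤ ut x₀ s + M * u x₀ s := by linarith
    exact mul_nonneg h5 (Real.exp_nonneg _)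
  have hgt : 0 < g t := by
    have hg0 : g 0 = u x₀ 0 := by rw [hgdef]; simp
    have : g 0 ≤ g t := by linarith [hftc ▸ hig]
    rw [hg0] at this
    linarith
  have hexp : 0 < Real.exp (M * t) := Real.exp_pos _
  rcases mul_pos_iff.1 hgt with ⟨h1, _⟩ | ⟨_, h2⟩
  · exact h1
  · exact absurd hexp (not_lt.2 h2.le)
end

section
/- Let p : Q̄_T → ℝ be bounded and measurable, and let u ∈ Z^1 satisfy u(x,t) ≥ 0 for all (x,t) ∈ Q̄_T and ∂_t u(x,t) ≥ ∫_Ω J(x,y) u(y,t) dy + p(x,t) u(x,t) for all (x,t) ∈ Q_T. If u(x₀,t₀) = 0 for some (x₀,t₀) ∈ Q_T, then u(x₀,t) = 0 for all t ∈ [0,t₀]. -/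
open MeasureTheory Set Function

/-- if `u ≥ 0` on `Q̄_T` satisfies the differential inequality on `Q_T`
and vanishes at some point `(x₀,t₀) ∈ Q_T`, then `u(x₀,·) ≡ 0` on `[0,t₀]`. -/
theorem stmt_3 {N : ℕ} (Ω : Set (Fin N → ℝ)) (hΩne : Ω.Nonempty)
    (hΩopen : IsOpen Ω) (hΩbdd : Bornology.IsBounded Ω)
    (T : ℝ) (hT : 0 < T)
    -- the kernel J satisfies condition (J)
    (J : (Fin N → ℝ) → (Fin N → ℝ) → ℝ)
    (hJcont : Continuous (Function.uncurry J))
    (hJnn : ∀ x y, 0 ≤ J x y)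
    (hJdiag : ∀ x, 0 < J x x)
    (hJint : ∀ x, (∫ y, J x y) = 1)
    -- p is bounded and measurable on Q̄_T
    (p : (Fin N → ℝ) → ℝ → ℝ)
    (hpmeas : Measurable (Function.uncurry p))
    (hpbdd : ∃ M : ℝ, ∀ x ∈ closure Ω, ∀ t ∈ Icc (0:ℝ) T, |p x t| ≤ M)
    -- u ∈ Z¹ : bounded measurable, with u(x,·) ∈ C¹([0,T]) with derivative ut
    (u ut : (Fin N → ℝ) → ℝ → ℝ)
    (humeas : Measurable (Function.uncurry u))
    (hubdd : ∃ M : ℝ, ∀ x ∈ closure Ω, ∀ t ∈ Icc (0:ℝ) T, |u x t| ≤ M)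
    (huderiv : ∀ x ∈ closure Ω, ∀ t ∈ Icc (0:ℝ) T,
      HasDerivWithinAt (u x) (ut x t) (Icc (0:ℝ) T) t)
    (hutcont : ∀ x ∈ closure Ω, ContinuousOn (ut x) (Icc (0:ℝ) T))
    (hunn : ∀ x ∈ closure Ω, ∀ t ∈ Icc (0:ℝ) T, 0 ≤ u x t)
    (hineq : ∀ x ∈ closure Ω, ∀ t ∈ Ioc (0:ℝ) T,
      (∫ y in Ω, J x y * u y t) + p x t * u x t ≤ ut x t)
    (x₀ : Fin N → ℝ) (hx₀ : x₀ ∈ closure Ω)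
    (t₀ : ℝ) (ht₀ : t₀ ∈ Ioc (0:ℝ) T) (hzero : u x₀ t₀ = 0) :
    ∀ t ∈ Icc (0:ℝ) t₀, u x₀ t = 0 := by
  obtain ⟨M, hM⟩ := hpbdd
  have ht₀T : t₀ ≤ T := ht₀.2
  set g : ℝ → ℝ := fun t => u x₀ t * Real.exp (M * t) with hgdef
  have hgderiv : ∀ t ∈ Icc (0:ℝ) T,
      HasDerivWithinAt g ((ut x₀ t + M * u x₀ t) * Real.exp (M * t)) (Icc (0:ℝ) T) t := by
    intro t ht
    have h1 := huderiv x₀ hx₀ t ht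
    have h2 : HasDerivWithinAt (fun s => Real.exp (M * s)) (M * Real.exp (M * t)) (Icc (0:ℝ) T) t := by
      have hd : HasDerivAt (fun s => Real.exp (M * s)) (Real.exp (M * t) * M) t := by
        have h0 : HasDerivAt (fun s : ℝ => M * s) M t := by
          simpa using (hasDerivAt_id t).const_mul M
        exact (Real.hasDerivAt_exp (M * t)).comp t h0
      simpa [mul_comm] using hd.hasDerivWithinAt
    have := h1.mul h2
    convert this using 1
    · rfl
    · rfl
    · rfl
    · ring
  have hgcont : ContinuousOn g (Icc (0:ℝ) T) := fun t ht => (hgderiv t ht).continuousWithinAt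
  have hIcc : Icc (0:ℝ) t₀ ⊆ Icc (0:ℝ) T := Icc_subset_Icc le_rfl ht₀T
  have hmono : MonotoneOn g (Icc (0:ℝ) t₀) := by
    have hderivAt : ∀ t ∈ interior (Icc (0:ℝ) t₀),
        HasDerivAt g ((ut x₀ t + M * u x₀ t) * Real.exp (M * t)) t := by
      intro t ht
      rw [interior_Icc] at ht
      have htT : t ∈ Icc (0:ℝ) T := ⟨ht.1.le, ht.2.le.trans ht₀T⟩
      exact (hgderiv t htT).hasDerivAt
        (Icc_mem_nhds ht.1 (lt_of_lt_of_le ht.2 ht₀T))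
    apply monotoneOn_of_deriv_nonneg (convex_Icc 0 t₀) (hgcont.mono hIcc)
    · intro t ht
      exact ((hderivAt t ht).differentiableAt).differentiableWithinAt
    · intro t ht
      rw [(hderivAt t ht).deriv]
      rw [interior_Icc] at ht
      have htT : t ∈ Icc (0:ℝ) T := ⟨ht.1.le, ht.2.le.trans ht₀T⟩
      have hint : 0 ≤ ∫ y in Ω, J x₀ y * u y t :=
        setIntegral_nonneg hΩopen.measurableSet fun y hy =>
          mul_nonneg (hJnn _ _) (hunn y (subset_closure hy) t htT)
      have hp : -M ≤ p x₀ t := neg_le_of_abs_le (hM x₀ hx₀ t htT)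
      have hu0 : 0 ≤ u x₀ t := hunn x₀ hx₀ t htT
      have h := hineq x₀ hx₀ t ⟨ht.1, htT.2⟩
      have : 0 ≤ ut x₀ t + M * u x₀ t := by nlinarith
      positivity
  intro t ht
  have h1 : g t ≤ g t₀ := hmono ht (right_mem_Icc.mpr ht₀.1.le) ht.2
  have h2 : g t₀ = 0 := by simp [hgdef, hzero]
  have h3 : 0 ≤ g t :=
    mul_nonneg (hunn x₀ hx₀ t ⟨ht.1, ht.2.trans ht₀T⟩) (Real.exp_nonneg _)
  have : g t = 0 := le_antisymm (h2 ▸ h1) h3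
  have hexp : Real.exp (M * t) ≠ 0 := Real.exp_ne_zero _
  have := mul_eq_zero.mp this
  tauto
end

section
/- (Comparison principle) For i = 1,…,m let d_i > 0, let J_i satisfy (J), and let d*_i be as in (D). Let each f_i : Q̄_T × [0,∞)^m → ℝ be continuous, locally Lipschitz in u uniformly in (x,t), and cooperative: f_i(x,t,u) ≤ f_i(x,t,v) whenever 0 ≤ u ≤ v componentwise and u_i = v_i. Suppose ū, u̲ ∈ Z^m are nonnegative on Q̄_T and satisfy, for all i and all (x,t) ∈ Q_T: ∂_t ū_i ≥ d_i ∫_Ω J_i(x,y) ū_i(y,t) dy − d*_i(x) ū_i + f_i(x,t,ū) and ∂_t u̲_i ≤ d_i ∫_Ω J_i(x,y) u̲_i(y,t) dy − d*_i(x) u̲_i + f_i(x,t,u̲), together with ū(x,0) ≥ u̲(x,0) for all x ∈ Ω̄. Then ū(x,t) ≥ u̲(x,t) componentwise for all (x,t) ∈ Q̄_T. -/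
open MeasureTheory Set Function Filter Topology

lemma aux_gron {w w' : ℝ → ℝ} {a b K ε δ : ℝ} (hε : 0 ≤ ε)
    (hw : ∀ t ∈ Icc a b, HasDerivWithinAt w (w' t) (Icc a b) t)
    (hbound : ∀ t ∈ Ico a b, w' t ≤ K * |w t| + ε)
    (hδ : max (w a) 0 ≤ δ) :
    ∀ t ∈ Icc a b, max (w t) 0 ≤ gronwallBound δ K ε (t - a) := by
  have hwc : ContinuousOn w (Icc a b) := fun t ht => (hw t ht).continuousWithinAt
  apply le_gronwallBound_of_liminf_deriv_right_le (f := fun t => max (w t) 0)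
    (f' := fun t => K * max (w t) 0 + ε)
    ((continuous_id.max continuous_const).comp_continuousOn hwc) _ hδ
    (fun x hx => le_refl _)
  intro x hx r hr
  have hxb : x < b := hx.2
  have hd1 : HasDerivWithinAt w (w' x) (Ioi x) x := by
    refine ((hw x ⟨hx.1, hx.2.le⟩).mono ?_).mono_of_mem_nhdsWithin
      (Ioc_mem_nhdsGT_of_mem ⟨le_refl x, hxb⟩)
    exact fun z hz => ⟨hx.1.trans hz.1.le, hz.2⟩
  have hslope : Tendsto (slope w x) (𝓝[>] x) (𝓝 (w' x)) := by
    have := hasDerivWithinAt_iff_tendsto_slope.1 hd1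
    rwa [Set.diff_singleton_eq_self (by simp)] at this
  have hwcont : Tendsto w (𝓝[>] x) (𝓝 (w x)) := hd1.continuousWithinAt
  have hb := hbound x hx
  rcases lt_trichotomy (w x) 0 with hneg | hzero | hpos
  · have h0 : max (w x) 0 = 0 := max_eq_right hneg.le
    have hr0 : (0:ℝ) < r := by
      have : K * max (w x) 0 + ε = ε := by rw [h0]; ring
      linarith [this ▸ hr]
    refine ((hwcont.eventually_lt_const hneg).mono ?_).frequently
    intro z hz
    show (z - x)⁻¹ * (max (w z) 0 - max (w x) 0) < r
    have : max (w z) 0 = 0 := max_eq_right hz.le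
    rw [this, h0, sub_zero, mul_zero]
    exact hr0
  · have h0 : max (w x) 0 = 0 := by rw [hzero]; exact max_self 0
    have hr0 : ε < r := by
      have : K * max (w x) 0 + ε = ε := by rw [h0]; ring
      linarith [this ▸ hr]
    have hwle : w' x ≤ ε := by
      have : |w x| = 0 := by rw [hzero, abs_zero]
      rw [this, mul_zero, zero_add] at hb; exact hb
    have hsl : ∀ᶠ z in 𝓝[>] x, slope w x z < r :=
      hslope.eventually_lt_const (lt_of_le_of_lt hwle hr0)
    refine ((hsl.and self_mem_nhdsWithin).mono ?_).frequently
    intro z ⟨hzr, hzx⟩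
    show (z - x)⁻¹ * (max (w z) 0 - max (w x) 0) < r
    have hzx' : (0:ℝ) < z - x := sub_pos.2 hzx
    have : (z - x)⁻¹ * (max (w z) 0 - max (w x) 0) = max ((z - x)⁻¹ * (w z - w x)) 0 := by
      rw [h0, sub_zero, hzero, sub_zero] at *
      rw [mul_max_of_nonneg _ _ (inv_nonneg.2 hzx'.le), mul_zero]
    rw [this]
    have hsv : (z - x)⁻¹ * (w z - w x) = slope w x z := by
      rw [slope_def_field, div_eq_inv_mul]
    rw [hsv]
    exact max_lt hzr (lt_of_le_of_lt hε hr0)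
  · have h0 : max (w x) 0 = w x := max_eq_left hpos.le
    have hwle : w' x < r := by
      have : |w x| = w x := abs_of_pos hpos
      rw [this] at hb
      rw [h0] at hr
      linarith
    have h1 : ∀ᶠ z in 𝓝[>] x, 0 < w z := hwcont.eventually_const_lt hpos
    have h2 : ∀ᶠ z in 𝓝[>] x, slope w x z < r := hslope.eventually_lt_const hwle
    refine ((h1.and (h2.and self_mem_nhdsWithin)).mono ?_).frequently
    intro z ⟨hz0, hzr, hzx⟩
    show (z - x)⁻¹ * (max (w z) 0 - max (w x) 0) < r
    have : max (w z) 0 = w z := max_eq_left hz0.le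
    rw [this, h0]
    have hsv : (z - x)⁻¹ * (w z - w x) = slope w x z := by
      rw [slope_def_field, div_eq_inv_mul]
    rw [hsv]; exact hzr

set_option maxHeartbeats 2000000 in
/-- comparison principle for cooperative nonlocal dispersal systems. -/
theorem stmt_4 {N m : ℕ} (Ω : Set (Fin N → ℝ)) (hΩne : Ω.Nonempty)
    (hΩopen : IsOpen Ω) (hΩbdd : Bornology.IsBounded Ω)
    (T : ℝ) (hT : 0 < T)
    (d : Fin m → ℝ) (hd : ∀ i, 0 < d i)
    -- each kernel Jᵢ satisfies condition (J)
    (J : Fin m → (Fin N → ℝ) → (Fin N → ℝ) → ℝ)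
    (hJcont : ∀ i, Continuous (Function.uncurry (J i)))
    (hJnn : ∀ i x y, 0 ≤ J i x y)
    (hJdiag : ∀ i x, 0 < J i x x)
    (hJint : ∀ i x, (∫ y, J i x y) = 1)
    -- condition (D)
    (dstar : Fin m → (Fin N → ℝ) → ℝ)
    (hdstar : ∀ i, (∀ x, dstar i x = d i) ∨ (∀ x, dstar i x = d i * ∫ y in Ω, J i y x))
    -- f : continuous, locally Lipschitz in u uniformly in (x,t), cooperative
    (f : Fin m → (Fin N → ℝ) → ℝ → (Fin m → ℝ) → ℝ)
    (hfcont : ∀ i, ContinuousOn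
      (fun q : ((Fin N → ℝ) × ℝ) × (Fin m → ℝ) => f i q.1.1 q.1.2 q.2)
      ((closure Ω ×ˢ Icc (0:ℝ) T) ×ˢ {v : Fin m → ℝ | 0 ≤ v}))
    (hflip : ∀ R > (0:ℝ), ∃ L : ℝ, ∀ x ∈ closure Ω, ∀ t ∈ Icc (0:ℝ) T,
      ∀ v w : Fin m → ℝ, 0 ≤ v → 0 ≤ w → ‖v‖ ≤ R → ‖w‖ ≤ R →
        ∀ i, |f i x t v - f i x t w| ≤ L * ‖v - w‖)
    (hfcoop : ∀ i, ∀ x ∈ closure Ω, ∀ t ∈ Icc (0:ℝ) T, ∀ v w : Fin m → ℝ,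
      0 ≤ v → v ≤ w → v i = w i → f i x t v ≤ f i x t w)
    -- ū, u̲ ∈ Z^m, nonnegative
    (ub ubt lb lbt : Fin m → (Fin N → ℝ) → ℝ → ℝ)
    (hubmeas : ∀ i, Measurable (Function.uncurry (ub i)))
    (hubbdd : ∀ i, ∃ M : ℝ, ∀ x ∈ closure Ω, ∀ t ∈ Icc (0:ℝ) T, |ub i x t| ≤ M)
    (hubderiv : ∀ i, ∀ x ∈ closure Ω, ∀ t ∈ Icc (0:ℝ) T,
      HasDerivWithinAt (ub i x) (ubt i x t) (Icc (0:ℝ) T) t)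
    (hubtcont : ∀ i, ∀ x ∈ closure Ω, ContinuousOn (ubt i x) (Icc (0:ℝ) T))
    (hlbmeas : ∀ i, Measurable (Function.uncurry (lb i)))
    (hlbbdd : ∀ i, ∃ M : ℝ, ∀ x ∈ closure Ω, ∀ t ∈ Icc (0:ℝ) T, |lb i x t| ≤ M)
    (hlbderiv : ∀ i, ∀ x ∈ closure Ω, ∀ t ∈ Icc (0:ℝ) T,
      HasDerivWithinAt (lb i x) (lbt i x t) (Icc (0:ℝ) T) t)
    (hlbtcont : ∀ i, ∀ x ∈ closure Ω, ContinuousOn (lbt i x) (Icc (0:ℝ) T))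
    (hubnn : ∀ i, ∀ x ∈ closure Ω, ∀ t ∈ Icc (0:ℝ) T, 0 ≤ ub i x t)
    (hlbnn : ∀ i, ∀ x ∈ closure Ω, ∀ t ∈ Icc (0:ℝ) T, 0 ≤ lb i x t)
    -- differential inequalities (3c.3) on Q_T
    (hubineq : ∀ i, ∀ x ∈ closure Ω, ∀ t ∈ Ioc (0:ℝ) T,
      d i * (∫ y in Ω, J i x y * ub i y t) - dstar i x * ub i x t
        + f i x t (fun k => ub k x t) ≤ ubt i x t)
    (hlbineq : ∀ i, ∀ x ∈ closure Ω, ∀ t ∈ Ioc (0:ℝ) T,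
      lbt i x t ≤ d i * (∫ y in Ω, J i x y * lb i y t) - dstar i x * lb i x t
        + f i x t (fun k => lb k x t))
    -- ordered initial data
    (hinit : ∀ i, ∀ x ∈ closure Ω, lb i x 0 ≤ ub i x 0) :
    ∀ i, ∀ x ∈ closure Ω, ∀ t ∈ Icc (0:ℝ) T, lb i x t ≤ ub i x t := by
  classical
  set K : Set (Fin N → ℝ) := closure Ω with hKdef
  have hKclosed : IsClosed K := isClosed_closure
  have hKcomp : IsCompact K := Metric.isCompact_of_isClosed_isBounded hKclosed hΩbdd.closure
  obtain ⟨x₀, hx₀Ω⟩ := hΩne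
  have hx₀ : x₀ ∈ K := subset_closure hx₀Ω
  have hΩK : Ω ⊆ K := subset_closure
  have hΩmeas : MeasurableSet Ω := hΩopen.measurableSet
  have hvolfin : volume Ω < ⊤ := hΩbdd.measure_lt_top
  have h0T : (0:ℝ) ∈ Icc (0:ℝ) T := ⟨le_refl _, hT.le⟩
  -- uniform bound M
  set M : ℝ := ∑ i, ((hubbdd i).choose + (hlbbdd i).choose) with hMdef
  have hMu0 : ∀ i, 0 ≤ (hubbdd i).choose :=
    fun i => (abs_nonneg _).trans ((hubbdd i).choose_spec x₀ hx₀ 0 h0T)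
  have hMl0 : ∀ i, 0 ≤ (hlbbdd i).choose :=
    fun i => (abs_nonneg _).trans ((hlbbdd i).choose_spec x₀ hx₀ 0 h0T)
  have hterm : ∀ i : Fin m, (hubbdd i).choose + (hlbbdd i).choose ≤ M := by
    intro i
    exact Finset.single_le_sum (f := fun j => (hubbdd j).choose + (hlbbdd j).choose)
      (fun j _ => add_nonneg (hMu0 j) (hMl0 j)) (Finset.mem_univ i)
  have hMub : ∀ i, ∀ x ∈ K, ∀ t ∈ Icc (0:ℝ) T, |ub i x t| ≤ M := by
    intro i x hx t ht
    have := (hubbdd i).choose_spec x hx t ht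
    have := hterm i; have := hMl0 i; linarith
  have hMlb : ∀ i, ∀ x ∈ K, ∀ t ∈ Icc (0:ℝ) T, |lb i x t| ≤ M := by
    intro i x hx t ht
    have := (hlbbdd i).choose_spec x hx t ht
    have := hterm i; have := hMu0 i; linarith
  have hM0 : 0 ≤ M := Finset.sum_nonneg (fun i _ => add_nonneg (hMu0 i) (hMl0 i))
  -- Lipschitz constant
  obtain ⟨L₀, hL₀⟩ := hflip (M + 1) (by linarith)
  set L : ℝ := max L₀ 1 with hLdef
  have hL1 : (1:ℝ) ≤ L := le_max_right _ _
  have hL0 : (0:ℝ) ≤ L := by linarith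
  have hL : ∀ x ∈ K, ∀ t ∈ Icc (0:ℝ) T, ∀ v w : Fin m → ℝ, 0 ≤ v → 0 ≤ w →
      ‖v‖ ≤ M + 1 → ‖w‖ ≤ M + 1 → ∀ i, |f i x t v - f i x t w| ≤ L * ‖v - w‖ := by
    intro x hx t ht v w hv hw hvn hwn i
    exact (hL₀ x hx t ht v w hv hw hvn hwn i).trans
      (mul_le_mul_of_nonneg_right (le_max_left _ _) (norm_nonneg _))
  -- bound for the kernels on K × K
  have hJbdd : ∀ i, ∃ Cj : ℝ, ∀ p ∈ K ×ˢ K, ‖Function.uncurry (J i) p‖ ≤ Cj :=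
    fun i => (hKcomp.prod hKcomp).exists_bound_of_continuousOn (hJcont i).continuousOn
  set Jb : Fin m → ℝ := fun i => (hJbdd i).choose with hJbdef
  have hJb : ∀ i, ∀ x ∈ K, ∀ y ∈ K, J i x y ≤ Jb i := by
    intro i x hx y hy
    have := (hJbdd i).choose_spec (x, y) ⟨hx, hy⟩
    exact (le_abs_self _).trans this
  have hJb0 : ∀ i, 0 ≤ Jb i :=
    fun i => (norm_nonneg _).trans ((hJbdd i).choose_spec (x₀, x₀) ⟨hx₀, hx₀⟩)
  have hJabs : ∀ i, ∀ x ∈ K, ∀ y ∈ K, |J i x y| ≤ Jb i := by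
    intro i x hx y hy
    rw [abs_of_nonneg (hJnn i x y)]; exact hJb i x hx y hy
  -- integrability of the kernels
  have hJint' : ∀ i x, Integrable (fun y => J i x y) := by
    intro i x
    by_contra hcon
    have h1 := hJint i x
    rw [integral_undef hcon] at h1
    exact one_ne_zero h1.symm
  have hJsetnn : ∀ i x, 0 ≤ ∫ y in Ω, J i x y :=
    fun i x => setIntegral_nonneg hΩmeas (fun y _ => hJnn i x y)
  have hJsetle : ∀ i x, (∫ y in Ω, J i x y) ≤ 1 := by
    intro i x
    rw [← hJint i x]
    exact setIntegral_le_integral (hJint' i x) (Eventually.of_forall (fun y => hJnn i x y))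
  -- bounds on dstar
  set D : ℝ := ∑ i, d i * (Jb i * (volume Ω).toReal + 1) with hDdef
  have hDterm : ∀ i : Fin m, d i * (Jb i * (volume Ω).toReal + 1) ≤ D := by
    intro i
    refine Finset.single_le_sum (f := fun j => d j * (Jb j * (volume Ω).toReal + 1))
      (fun j _ => mul_nonneg (hd j).le (add_nonneg (mul_nonneg (hJb0 j) ENNReal.toReal_nonneg) zero_le_one)) (Finset.mem_univ i)
  have hdstar0 : ∀ i, ∀ x ∈ K, 0 ≤ dstar i x := by
    intro i x hx
    rcases hdstar i with h | h
    · rw [h x]; exact (hd i).le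
    · rw [h x]; exact mul_nonneg (hd i).le (setIntegral_nonneg hΩmeas (fun y _ => hJnn i y x))
  have hdstarD : ∀ i, ∀ x ∈ K, dstar i x ≤ D := by
    intro i x hx
    have hJv0 : 0 ≤ Jb i * (volume Ω).toReal := mul_nonneg (hJb0 i) ENNReal.toReal_nonneg
    refine le_trans ?_ (hDterm i)
    rcases hdstar i with h | h
    · rw [h x]
      exact le_mul_of_one_le_right (hd i).le (by linarith)
    · rw [h x]
      have hib : (∫ y in Ω, J i y x) ≤ Jb i * (volume Ω).toReal := by
        have := norm_setIntegral_le_of_norm_le_const (μ := volume) (s := Ω)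
          (f := fun y => J i y x) hvolfin (C := Jb i)
          (fun y hy => by rw [Real.norm_eq_abs]; exact hJabs i y (hΩK hy) x hx)
        calc (∫ y in Ω, J i y x) ≤ ‖∫ y in Ω, J i y x‖ := le_abs_self _
        _ ≤ Jb i * (volume Ω).toReal := this
      have := mul_le_mul_of_nonneg_left hib (hd i).le
      nlinarith [(hd i).le]
  have hD0 : 0 ≤ D := by
    exact Finset.sum_nonneg (fun j _ => mul_nonneg (hd j).le
      (add_nonneg (mul_nonneg (hJb0 j) ENNReal.toReal_nonneg) zero_le_one))
  -- constants
  set B : ℝ := 2 * M + 1 with hBdef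
  have hB0 : 0 < B := by linarith
  set C : ℝ := (∑ i, d i) + L with hCdef
  have hdsum : ∀ i : Fin m, d i ≤ ∑ j, d j :=
    fun i => Finset.single_le_sum (fun j _ => (hd j).le) (Finset.mem_univ i)
  have hsum0 : 0 ≤ ∑ j, d j := Finset.sum_nonneg (fun j _ => (hd j).le)
  have hC1 : (1:ℝ) ≤ C := by simp only [hCdef]; linarith
  have hC0 : (0:ℝ) < C := by linarith
  set K₀ : ℝ := D + L with hK₀def
  have hK₀1 : (1:ℝ) ≤ K₀ := by simp only [hK₀def]; linarith
  have hK₀0 : (0:ℝ) < K₀ := by linarith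
  set E : ℝ := 1 + K₀ / (2 * C) with hEdef
  have hE1 : 1 < E := by
    have : 0 < K₀ / (2 * C) := div_pos hK₀0 (by linarith)
    simp only [hEdef]; linarith
  set τ : ℝ := Real.log E / K₀ with hτdef
  have hτ0 : 0 < τ := div_pos (Real.log_pos hE1) hK₀0
  have hexpτ : Real.exp (K₀ * τ) = E := by
    rw [hτdef, mul_div_cancel₀ _ (ne_of_gt hK₀0)]
    exact Real.exp_log (by linarith)
  clear hMdef hLdef hJbdef hDdef hτdef
  clear_value M L Jb D B C K₀ E τ
  -- integrability of the nonlocal terms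
  have hmeasJ : ∀ i (x : Fin N → ℝ), Measurable (fun y => J i x y) := by
    intro i x
    exact ((hJcont i).comp (continuous_const.prodMk continuous_id)).measurable
  have hIgen : ∀ (g : Fin m → (Fin N → ℝ) → ℝ → ℝ),
      (∀ i, Measurable (Function.uncurry (g i))) →
      (∀ i, ∀ x ∈ K, ∀ t ∈ Icc (0:ℝ) T, |g i x t| ≤ M) →
      ∀ i, ∀ x ∈ K, ∀ t ∈ Icc (0:ℝ) T,
        IntegrableOn (fun y => J i x y * g i y t) Ω volume := by
    intro g hgmeas hgbdd i x hx t ht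
    have hmg : Measurable (fun y => g i y t) :=
      (hgmeas i).comp (measurable_id.prodMk measurable_const)
    refine Integrable.mono' (g := fun _ => Jb i * M)
      ((integrableOn_const_iff (C := Jb i * M)).2 (Or.inr hvolfin))
      (((hmeasJ i x).mul hmg).aestronglyMeasurable) ?_
    refine (ae_restrict_iff' hΩmeas).2 (Eventually.of_forall (fun y hy => ?_))
    rw [Real.norm_eq_abs, abs_mul]
    exact mul_le_mul (hJabs i x hx y (hΩK hy)) (hgbdd i y (hΩK hy) t ht)
      (abs_nonneg _) (hJb0 i)
  have hIub := hIgen ub hubmeas hMub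
  have hIlb := hIgen lb hlbmeas hMlb
  -- the key pointwise derivative estimate
  have key : ∀ (Bn : ℝ), 0 ≤ Bn → ∀ i, ∀ x, x ∈ K → ∀ s, s ∈ Ioc (0:ℝ) T →
      (∀ k, ∀ y ∈ K, lb k y s - ub k y s ≤ Bn) →
      lbt i x s - ubt i x s ≤ K₀ * |lb i x s - ub i x s| + C * Bn := by
    intro Bn hBn i x hx s hs hall
    have hsIcc : s ∈ Icc (0:ℝ) T := ⟨hs.1.le, hs.2⟩
    have h1 := hlbineq i x hx s hs
    have h2 := hubineq i x hx s hs
    -- Step 1 : nonlocal term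
    have hstep1 : d i * (∫ y in Ω, J i x y * lb i y s) -
        d i * (∫ y in Ω, J i x y * ub i y s) ≤ d i * Bn := by
      have hsub : (∫ y in Ω, J i x y * lb i y s) - (∫ y in Ω, J i x y * ub i y s)
          = ∫ y in Ω, (J i x y * lb i y s - J i x y * ub i y s) :=
        (integral_sub (hIlb i x hx s hsIcc) (hIub i x hx s hsIcc)).symm
      have hmono : (∫ y in Ω, (J i x y * lb i y s - J i x y * ub i y s))
          ≤ ∫ y in Ω, J i x y * Bn := by
        refine setIntegral_mono_on
          ((hIlb i x hx s hsIcc).sub (hIub i x hx s hsIcc))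
          (((hJint' i x).integrableOn).mul_const Bn) hΩmeas ?_
        intro y hy
        have h3 : lb i y s - ub i y s ≤ Bn := hall i y (hΩK hy)
        have h4 := hJnn i x y
        nlinarith
      have hJle : (∫ y in Ω, J i x y * Bn) ≤ Bn := by
        rw [integral_mul_const]
        calc (∫ y in Ω, J i x y) * Bn ≤ 1 * Bn :=
          mul_le_mul_of_nonneg_right (hJsetle i x) hBn
        _ = Bn := one_mul Bn
      have h5 : (∫ y in Ω, J i x y * lb i y s) - (∫ y in Ω, J i x y * ub i y s) ≤ Bn := by
        rw [hsub]; exact hmono.trans hJle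
      nlinarith [(hd i).le]
    -- Step 2 : dstar term
    have hstep2 : -(dstar i x * lb i x s) + dstar i x * ub i x s
        ≤ D * |lb i x s - ub i x s| := by
      have h6 := hdstar0 i x hx
      have h7 := hdstarD i x hx
      have h8 : -(lb i x s - ub i x s) ≤ |lb i x s - ub i x s| := neg_le_abs _
      have h9 : (0:ℝ) ≤ |lb i x s - ub i x s| := abs_nonneg _
      have h10 : dstar i x * (-(lb i x s - ub i x s)) ≤ dstar i x * |lb i x s - ub i x s| :=
        mul_le_mul_of_nonneg_left h8 h6
      have h11 : dstar i x * |lb i x s - ub i x s| ≤ D * |lb i x s - ub i x s| :=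
        mul_le_mul_of_nonneg_right h7 h9
      have h12 : -(dstar i x * lb i x s) + dstar i x * ub i x s
          = dstar i x * (-(lb i x s - ub i x s)) := by ring
      rw [h12]; exact h10.trans h11
    -- Step 3 : reaction term
    have hstep3 : f i x s (fun k => lb k x s) - f i x s (fun k => ub k x s)
        ≤ L * |lb i x s - ub i x s| + L * Bn := by
      set lbv : Fin m → ℝ := fun k => lb k x s with hlbv
      set ubv : Fin m → ℝ := fun k => ub k x s with hubv
      set bv : Fin m → ℝ := Function.update lbv i (ubv i) with hbv
      set cv : Fin m → ℝ := Function.update (fun k => min (lbv k) (ubv k)) i (ubv i) with hcv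
      have hlbv0 : (0:ℝ) ≤ lb i x s - lb i x s := by linarith
      have hnn_lbv : 0 ≤ lbv := fun k => hlbnn k x hx s hsIcc
      have hnn_ubv : 0 ≤ ubv := fun k => hubnn k x hx s hsIcc
      have hnn_bv : 0 ≤ bv := by
        intro k
        by_cases hk : k = i
        · subst hk; rw [hbv, Function.update_self]; exact hnn_ubv k
        · rw [hbv, Function.update_of_ne hk]; exact hnn_lbv k
      have hnn_cv : 0 ≤ cv := by
        intro k
        by_cases hk : k = i
        · subst hk; rw [hcv, Function.update_self]; exact hnn_ubv k
        · rw [hcv, Function.update_of_ne hk]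
          exact le_min (hnn_lbv k) (hnn_ubv k)
      have hnlbv : ‖lbv‖ ≤ M + 1 := by
        refine (pi_norm_le_iff_of_nonneg (by linarith)).2 (fun k => ?_)
        rw [Real.norm_eq_abs]
        have := hMlb k x hx s hsIcc
        linarith
      have hnubv : ‖ubv‖ ≤ M + 1 := by
        refine (pi_norm_le_iff_of_nonneg (by linarith)).2 (fun k => ?_)
        rw [Real.norm_eq_abs]
        have := hMub k x hx s hsIcc
        linarith
      have hnbv : ‖bv‖ ≤ M + 1 := by
        refine (pi_norm_le_iff_of_nonneg (by linarith)).2 (fun k => ?_)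
        rw [Real.norm_eq_abs]
        by_cases hk : k = i
        · subst hk; rw [hbv, Function.update_self]
          have := hMub k x hx s hsIcc; linarith
        · rw [hbv, Function.update_of_ne hk]
          have := hMlb k x hx s hsIcc; linarith
      have hncv : ‖cv‖ ≤ M + 1 := by
        refine (pi_norm_le_iff_of_nonneg (by linarith)).2 (fun k => ?_)
        rw [Real.norm_eq_abs]
        by_cases hk : k = i
        · subst hk; rw [hcv, Function.update_self]
          have := hMub k x hx s hsIcc; linarith
        · rw [hcv, Function.update_of_ne hk]
          have h10 := le_min (hnn_lbv k) (hnn_ubv k)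
          have h11 : min (lbv k) (ubv k) ≤ lbv k := min_le_left _ _
          have := hMlb k x hx s hsIcc
          rw [abs_of_nonneg h10]
          have h12 : lbv k ≤ M := by
            have := hMlb k x hx s hsIcc
            exact (le_abs_self _).trans this
          linarith
      -- first difference
      have e1 : |f i x s lbv - f i x s bv| ≤ L * ‖lbv - bv‖ :=
        hL x hx s hsIcc lbv bv hnn_lbv hnn_bv hnlbv hnbv i
      have n1 : ‖lbv - bv‖ ≤ |lb i x s - ub i x s| := by
        refine (pi_norm_le_iff_of_nonneg (abs_nonneg _)).2 (fun k => ?_)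
        rw [Pi.sub_apply, Real.norm_eq_abs]
        by_cases hk : k = i
        · subst hk; rw [hbv, Function.update_self]
        · rw [hbv, Function.update_of_ne hk, sub_self, abs_zero]
          exact abs_nonneg _
      -- second difference
      have e2 : |f i x s bv - f i x s cv| ≤ L * ‖bv - cv‖ :=
        hL x hx s hsIcc bv cv hnn_bv hnn_cv hnbv hncv i
      have n2 : ‖bv - cv‖ ≤ Bn := by
        refine (pi_norm_le_iff_of_nonneg hBn).2 (fun k => ?_)
        rw [Pi.sub_apply, Real.norm_eq_abs]
        by_cases hk : k = i
        · subst hk; rw [hbv, hcv, Function.update_self, Function.update_self,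
            sub_self, abs_zero]; exact hBn
        · rw [hbv, hcv, Function.update_of_ne hk, Function.update_of_ne hk]
          have h13 : 0 ≤ lbv k - min (lbv k) (ubv k) := sub_nonneg.2 (min_le_left _ _)
          rw [abs_of_nonneg h13]
          rcases min_cases (lbv k) (ubv k) with ⟨hmin, _⟩ | ⟨hmin, _⟩
          · rw [hmin]; simpa using hBn
          · rw [hmin]
            exact hall k x hx
      -- third difference
      have e3 : f i x s cv ≤ f i x s ubv := by
        refine hfcoop i x hx s hsIcc cv ubv hnn_cv ?_ ?_
        · intro k
          by_cases hk : k = i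
          · subst hk; rw [hcv, Function.update_self]
          · rw [hcv, Function.update_of_ne hk]; exact min_le_right _ _
        · rw [hcv, Function.update_self]
      have b1 : f i x s lbv - f i x s bv ≤ L * |lb i x s - ub i x s| :=
        (le_abs_self _).trans (e1.trans (mul_le_mul_of_nonneg_left n1 hL0))
      have b2 : f i x s bv - f i x s cv ≤ L * Bn :=
        (le_abs_self _).trans (e2.trans (mul_le_mul_of_nonneg_left n2 hL0))
      have : f i x s lbv - f i x s ubv =
        (f i x s lbv - f i x s bv) + (f i x s bv - f i x s cv)
          + (f i x s cv - f i x s ubv) := by ring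
      rw [this]
      have : f i x s cv - f i x s ubv ≤ 0 := by linarith
      linarith
    -- combine
    have hiC : d i + L ≤ C := by
      have := hdsum i
      simp only [hCdef]; linarith
    have hKK : D + L ≤ K₀ := le_of_eq hK₀def.symm
    have habs0 : (0:ℝ) ≤ |lb i x s - ub i x s| := abs_nonneg _
    have hfin : lbt i x s - ubt i x s ≤
        d i * Bn + D * |lb i x s - ub i x s| + (L * |lb i x s - ub i x s| + L * Bn) := by
      linarith
    have hC' : d i * Bn + L * Bn ≤ C * Bn := by nlinarith
    nlinarith
  -- continuity of w in time
  have hwcont : ∀ i, ∀ x ∈ K, ContinuousOn (fun s => lb i x s - ub i x s) (Icc (0:ℝ) T) :=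
    fun i x hx s hs => ((hlbderiv i x hx s hs).sub (hubderiv i x hx s hs)).continuousWithinAt
  -- the window lemma
  have window : ∀ t₀ t₁ : ℝ, 0 ≤ t₀ → t₁ ≤ T → t₁ - t₀ ≤ τ →
      (∀ i, ∀ x ∈ K, lb i x t₀ ≤ ub i x t₀) →
      ∀ i, ∀ x ∈ K, ∀ t, t₀ ≤ t → t ≤ t₁ → lb i x t ≤ ub i x t := by
    intro t₀ t₁ ht₀0 ht₁T hlen hstart
    have QQ : ∀ n : ℕ, ∀ i, ∀ x ∈ K, ∀ t, t₀ ≤ t → t ≤ t₁ →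
        lb i x t - ub i x t ≤ B / 2 ^ n := by
      intro n
      induction n with
      | zero =>
        intro i x hx t h1 h2
        have htT : t ∈ Icc (0:ℝ) T := ⟨ht₀0.trans h1, h2.trans ht₁T⟩
        have hu := hMub i x hx t htT
        have hl := hMlb i x hx t htT
        rw [abs_le] at hu hl
        rw [pow_zero, div_one, hBdef]
        linarith [hu.1, hu.2, hl.1, hl.2]
      | succ n ih =>
        intro i x hx t h1 h2
        have hBn0 : (0:ℝ) < B / 2 ^ n := by positivity
        have hBsucc : B / 2 ^ (n + 1) = (B / 2 ^ n) / 2 := by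
          rw [pow_succ]; ring
        rcases eq_or_lt_of_le h1 with heq | hlt
        · rw [← heq]
          have := hstart i x hx
          have h3 : (0:ℝ) ≤ B / 2 ^ (n+1) := by positivity
          linarith
        · -- t₀ < t
          have htT : t ≤ T := h2.trans ht₁T
          set w : ℝ → ℝ := fun s => lb i x s - ub i x s with hwdef
          have hgron : ∀ a ∈ Ioo t₀ t,
              max (w t) 0 ≤ max (w a) 0 * E + (B / 2 ^ n) / 2 := by
            rintro a ⟨ha1, ha2⟩
            have ha0 : 0 < a := lt_of_le_of_lt ht₀0 ha1
            have hIccsub : Icc a t ⊆ Icc (0:ℝ) T := Icc_subset_Icc ha0.le htT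
            have hbound : ∀ s ∈ Ico a t,
                lbt i x s - ubt i x s ≤ K₀ * |w s| + C * (B / 2 ^ n) := by
              intro s hs
              refine key (B / 2 ^ n) hBn0.le i x hx s ⟨lt_of_lt_of_le ha0 hs.1,
                (hs.2.le).trans htT⟩ ?_
              intro k y hy
              exact ih k y hy s ((ha1.trans_le hs.1).le) (hs.2.le.trans h2)
            have hb1 := aux_gron (w := w) (w' := fun s => lbt i x s - ubt i x s)
              (a := a) (b := t) (K := K₀) (ε := C * (B / 2 ^ n)) (δ := max (w a) 0)
              (mul_nonneg hC0.le hBn0.le)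
              (fun s hs => ((hlbderiv i x hx s (hIccsub hs)).sub
                (hubderiv i x hx s (hIccsub hs))).mono hIccsub)
              hbound (le_refl _) t (right_mem_Icc.2 ha2.le)
            rw [gronwallBound_of_K_ne_0 (ne_of_gt hK₀0)] at hb1
            have hta : t - a ≤ τ := by linarith
            have hta0 : 0 ≤ t - a := by linarith
            have hexple : Real.exp (K₀ * (t - a)) ≤ E := by
              rw [← hexpτ]
              exact Real.exp_le_exp.2 (mul_le_mul_of_nonneg_left hta hK₀0.le)
            have hexp1 : 1 ≤ Real.exp (K₀ * (t - a)) :=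
              Real.one_le_exp (mul_nonneg hK₀0.le hta0)
            have hmax0 : (0:ℝ) ≤ max (w a) 0 := le_max_right _ _
            have hterm1 : max (w a) 0 * Real.exp (K₀ * (t - a)) ≤ max (w a) 0 * E :=
              mul_le_mul_of_nonneg_left hexple hmax0
            have hterm2 : C * (B / 2 ^ n) / K₀ * (Real.exp (K₀ * (t - a)) - 1)
                ≤ (B / 2 ^ n) / 2 := by
              have hq : (0:ℝ) ≤ C * (B / 2 ^ n) / K₀ :=
                div_nonneg (mul_nonneg hC0.le hBn0.le) hK₀0.le
              have h5 : C * (B / 2 ^ n) / K₀ * (Real.exp (K₀ * (t - a)) - 1)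
                  ≤ C * (B / 2 ^ n) / K₀ * (E - 1) :=
                mul_le_mul_of_nonneg_left (by linarith) hq
              have h6 : C * (B / 2 ^ n) / K₀ * (E - 1) = (B / 2 ^ n) / 2 := by
                rw [hEdef]
                field_simp
                ring
              linarith
            calc max (w t) 0 ≤ _ := hb1
            _ ≤ max (w a) 0 * E + (B / 2 ^ n) / 2 := by linarith
          -- limit a → t₀⁺
          have ht₀T : t₀ < T := lt_of_lt_of_le hlt htT
          have htend : Tendsto w (𝓝[>] t₀) (𝓝 (w t₀)) := by
            have hc := hwcont i x hx t₀ ⟨ht₀0, ht₀T.le⟩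
            have hc2 : Tendsto w (𝓝[Ioc t₀ T] t₀) (𝓝 (w t₀)) :=
              hc.mono_left (nhdsWithin_mono _ (fun z hz => ⟨ht₀0.trans hz.1.le, hz.2⟩))
            rwa [nhdsWithin_Ioc_eq_nhdsGT ht₀T] at hc2
          have hmax0 : max (w t₀) 0 = 0 := max_eq_right (sub_nonpos.2 (hstart i x hx))
          have htendmax : Tendsto (fun a => max (w a) 0 * E + (B / 2 ^ n) / 2)
              (𝓝[>] t₀) (𝓝 ((B / 2 ^ n) / 2)) := by
            have h7 : Tendsto (fun a => max (w a) 0) (𝓝[>] t₀) (𝓝 0) := by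
              have hcont2 : Continuous (fun y : ℝ => max y 0) :=
                continuous_id.max continuous_const
              have h7' := (hcont2.tendsto (w t₀)).comp htend
              simp only [Function.comp_def] at h7'
              rwa [hmax0] at h7'
            have h8 := (h7.mul_const E).add_const ((B / 2 ^ n) / 2)
            rwa [zero_mul, zero_add] at h8
          have hev : ∀ᶠ a in 𝓝[>] t₀, max (w t) 0 ≤ max (w a) 0 * E + (B / 2 ^ n) / 2 :=
            eventually_of_mem (Ioo_mem_nhdsGT_of_mem ⟨le_refl t₀, hlt⟩)
              (fun a ha => hgron a ha)
          have hfin : max (w t) 0 ≤ (B / 2 ^ n) / 2 := ge_of_tendsto htendmax hev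
          have hwle : w t ≤ max (w t) 0 := le_max_left _ _
          rw [hBsucc]
          exact le_trans hwle hfin
    -- let n → ∞
    intro i x hx t h1 h2
    have hlim : Tendsto (fun n : ℕ => B / 2 ^ n) atTop (𝓝 0) := by
      have h9 : Tendsto (fun n : ℕ => ((1:ℝ)/2) ^ n) atTop (𝓝 0) :=
        tendsto_pow_atTop_nhds_zero_of_lt_one (by norm_num) (by norm_num)
      have h10 := h9.const_mul B
      rw [mul_zero] at h10
      convert h10 using 2 with n
      rw [div_pow, one_pow]
      ring
    have h11 : lb i x t - ub i x t ≤ 0 :=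
      ge_of_tendsto' hlim (fun n => QQ n i x hx t h1 h2)
    linarith
  -- time stepping
  have main : ∀ k : ℕ, ∀ i, ∀ x ∈ K, ∀ t, 0 ≤ t → t ≤ min ((k:ℝ) * τ) T →
      lb i x t ≤ ub i x t := by
    intro k
    induction k with
    | zero =>
      intro i x hx t h1 h2
      rw [Nat.cast_zero, zero_mul, min_eq_left hT.le] at h2
      have ht0 : t = 0 := le_antisymm h2 h1
      rw [ht0]
      exact hinit i x hx
    | succ k ih =>
      intro i x hx t h1 h2
      have ht₀0 : 0 ≤ min ((k:ℝ) * τ) T := le_min (by positivity) hT.le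
      have ht₁T : min (((k:ℝ) + 1) * τ) T ≤ T := min_le_right _ _
      have hlen : min (((k:ℝ) + 1) * τ) T - min ((k:ℝ) * τ) T ≤ τ := by
        rcases le_total ((k:ℝ) * τ) T with h | h
        · have e1 : min ((k:ℝ) * τ) T = (k:ℝ) * τ := min_eq_left h
          have e2 : min (((k:ℝ) + 1) * τ) T ≤ ((k:ℝ) + 1) * τ := min_le_left _ _
          rw [e1]; nlinarith
        · have e1 : min ((k:ℝ) * τ) T = T := min_eq_right h
          rw [e1]; linarith [min_le_right (((k:ℝ) + 1) * τ) T, hτ0]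
      have hstart : ∀ i', ∀ x' ∈ K, lb i' x' (min ((k:ℝ) * τ) T) ≤
          ub i' x' (min ((k:ℝ) * τ) T) :=
        fun i' x' hx' => ih i' x' hx' _ ht₀0 (le_refl _)
      have h2' : t ≤ min (((k:ℝ) + 1) * τ) T := by
        rwa [Nat.cast_succ] at h2
      rcases le_total t (min ((k:ℝ) * τ) T) with h | h
      · exact ih i x hx t h1 h
      · exact window _ _ ht₀0 ht₁T hlen hstart i x hx t h h2'
  -- conclusion
  intro i x hx t ht
  obtain ⟨k, hk⟩ := exists_nat_ge (T / τ)
  have hkτ : T ≤ (k:ℝ) * τ := by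
    rw [div_le_iff₀ hτ0] at hk
    linarith
  refine main k i x hx t ht.1 ?_
  rw [min_eq_right hkτ]
  exact ht.2
end

section
/- For i = 1,…,m let d_i > 0, let J_i satisfy (J), and let d*_i be as in (D). Let p_ik : Q̄_T → ℝ (1 ≤ i,k ≤ m) be bounded and measurable with p_ik ≥ 0 on Q̄_T whenever i ≠ k. Suppose U ∈ Z^m satisfies U ≥ 0 on Q̄_T and, for every i and every (x,t) ∈ Q̄_T, the strict inequality ∂_t U_i(x,t) > d_i ∫_Ω J_i(x,y) U_i(y,t) dy − d*_i(x) U_i(x,t) + Σ_{k=1}^m p_ik(x,t) U_k(x,t), together with U_i(x,0) ≥ U_i(x,T) for all x ∈ Ω̄. Then for every i, U_i(x,t) > 0 for all (x,t) ∈ Q̄_T and inf_{(x,t) ∈ Q_T} U_i(x,t) > 0. -/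
open MeasureTheory Set Function

/-- ODE comparison lemma: if `f' > δ - C f` on `[0,T]` and `f T ≤ f 0`, then
`f T` is positive, bounded below in terms of `δ`, and `f` is bounded below on `[0,T]`. -/
lemma ode_aux {T C δ : ℝ} (hT : 0 < T) (hC : 0 < C) (hδ : 0 ≤ δ)
    {f f' : ℝ → ℝ}
    (hderiv : ∀ t ∈ Icc 0 T, HasDerivWithinAt f (f' t) (Icc (0:ℝ) T) t)
    (hineq : ∀ t ∈ Icc 0 T, δ - C * f t < f' t)
    (hper : f T ≤ f 0) :
    0 < f T ∧ δ * T < f T * (Real.exp (C * T) - 1) ∧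
      ∀ t ∈ Icc 0 T, f T * Real.exp (-(C * T)) ≤ f t := by
  set g : ℝ → ℝ := fun t => f t * Real.exp (C * t) - δ * t with hg
  have hgd : ∀ t ∈ Icc (0:ℝ) T, HasDerivWithinAt g
      ((f' t + C * f t) * Real.exp (C * t) - δ) (Icc (0:ℝ) T) t := by
    intro t ht
    have he : HasDerivAt (fun s => Real.exp (C * s)) (Real.exp (C * t) * C) t := by
      have h1 : HasDerivAt (fun s : ℝ => C * s) C t := by
        simpa using (hasDerivAt_id t).const_mul C
      exact (Real.hasDerivAt_exp (C * t)).comp t h1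
    have hδt : HasDerivAt (fun s : ℝ => δ * s) δ t := by
      simpa using (hasDerivAt_id t).const_mul δ
    have := ((hderiv t ht).mul he.hasDerivWithinAt).sub hδt.hasDerivWithinAt
    convert this using 1
    · rfl
    · rfl
    · rfl
    ring
  have hmono : StrictMonoOn g (Icc 0 T) := by
    apply strictMonoOn_of_hasDerivWithinAt_pos (convex_Icc 0 T)
      (fun t ht => (hgd t ht).continuousWithinAt)
      (f' := fun t => (f' t + C * f t) * Real.exp (C * t) - δ)
      (fun t ht => ((hgd t (interior_subset ht)).mono interior_subset))
    intro t ht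
    rw [interior_Icc] at ht
    have h1 := hineq t (Ioo_subset_Icc_self ht)
    have h2 : 1 ≤ Real.exp (C * t) := Real.one_le_exp (by nlinarith [ht.1])
    nlinarith
  have hkey : g 0 < g T := hmono (by simp [hT.le]) (by simp [hT.le]) hT
  have hg0 : g 0 = f 0 := by simp [hg]
  have hgT : g T = f T * Real.exp (C * T) - δ * T := rfl
  have hpart1 : δ * T < f T * (Real.exp (C * T) - 1) := by
    rw [hg0, hgT] at hkey; nlinarith
  have hE : 1 < Real.exp (C * T) := by nlinarith [Real.add_one_le_exp (C*T), hC, hT]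
  have hfT : 0 < f T := by nlinarith
  refine ⟨hfT, hpart1, ?_⟩
  intro t ht
  have hle : g 0 ≤ g t := hmono.monotoneOn (by simp [hT.le]) ht ht.1
  rw [hg0] at hle
  have h1 : f T + δ * t ≤ f t * Real.exp (C * t) := by
    have : g t = f t * Real.exp (C * t) - δ * t := rfl
    nlinarith [this ▸ hle]
  have h2 : Real.exp (C * t) * Real.exp (-(C * t)) = 1 := by
    rw [← Real.exp_add]; ring_nf; exact Real.exp_zero
  have h3 : 0 < Real.exp (-(C * t)) := Real.exp_pos _
  have h4 : Real.exp (-(C * T)) ≤ Real.exp (-(C * t)) :=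
    Real.exp_le_exp.mpr (by nlinarith [ht.2])
  have h6 : f t * Real.exp (C * t) * Real.exp (-(C * t)) = f t := by
    rw [mul_assoc, h2, mul_one]
  have h5 : f T * Real.exp (-(C * t)) ≤ f t := by
    nlinarith [mul_le_mul_of_nonneg_right h1 h3.le, mul_nonneg (mul_nonneg hδ ht.1) h3.le]
  nlinarith

/-- strict differential inequality on all of `Q̄_T` forces every
component to be positive on `Q̄_T` with positive infimum over `Q_T`. -/
theorem stmt_6 {N m : ℕ} (Ω : Set (Fin N → ℝ)) (hΩne : Ω.Nonempty)
    (hΩopen : IsOpen Ω) (hΩbdd : Bornology.IsBounded Ω)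
    (T : ℝ) (hT : 0 < T)
    (d : Fin m → ℝ) (hd : ∀ i, 0 < d i)
    -- each kernel Jᵢ satisfies condition (J)
    (J : Fin m → (Fin N → ℝ) → (Fin N → ℝ) → ℝ)
    (hJcont : ∀ i, Continuous (Function.uncurry (J i)))
    (hJnn : ∀ i x y, 0 ≤ J i x y)
    (hJdiag : ∀ i x, 0 < J i x x)
    (hJint : ∀ i x, (∫ y, J i x y) = 1)
    -- condition (D)
    (dstar : Fin m → (Fin N → ℝ) → ℝ)
    (hdstar : ∀ i, (∀ x, dstar i x = d i) ∨ (∀ x, dstar i x = d i * ∫ y in Ω, J i y x))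
    -- p_ik bounded, measurable, cooperative
    (p : Fin m → Fin m → (Fin N → ℝ) → ℝ → ℝ)
    (hpmeas : ∀ i k, Measurable (Function.uncurry (p i k)))
    (hpbdd : ∀ i k, ∃ M : ℝ, ∀ x ∈ closure Ω, ∀ t ∈ Icc (0:ℝ) T, |p i k x t| ≤ M)
    (hpcoop : ∀ i k, i ≠ k → ∀ x ∈ closure Ω, ∀ t ∈ Icc (0:ℝ) T, 0 ≤ p i k x t)
    (U Ut : Fin m → (Fin N → ℝ) → ℝ → ℝ)
    (hUmeas : ∀ i, Measurable (Function.uncurry (U i)))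
    (hUbdd : ∀ i, ∃ M : ℝ, ∀ x ∈ closure Ω, ∀ t ∈ Icc (0:ℝ) T, |U i x t| ≤ M)
    (hUderiv : ∀ i, ∀ x ∈ closure Ω, ∀ t ∈ Icc (0:ℝ) T,
      HasDerivWithinAt (U i x) (Ut i x t) (Icc (0:ℝ) T) t)
    (hUtcont : ∀ i, ∀ x ∈ closure Ω, ContinuousOn (Ut i x) (Icc (0:ℝ) T))
    (hUnn : ∀ i, ∀ x ∈ closure Ω, ∀ t ∈ Icc (0:ℝ) T, 0 ≤ U i x t)
    -- strict differential inequality on Q̄_T and periodicity inequality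
    (hineq : ∀ i, ∀ x ∈ closure Ω, ∀ t ∈ Icc (0:ℝ) T,
      d i * (∫ y in Ω, J i x y * U i y t) - dstar i x * U i x t
        + (∑ k, p i k x t * U k x t) < Ut i x t)
    (hper : ∀ i, ∀ x ∈ closure Ω, U i x T ≤ U i x 0) :
    ∀ i, (∀ x ∈ closure Ω, ∀ t ∈ Icc (0:ℝ) T, 0 < U i x t) ∧
      ∃ c > 0, ∀ x ∈ closure Ω, ∀ t ∈ Ioc (0:ℝ) T, c ≤ U i x t := by
  classical
  set K := closure Ω with hK
  have hΩK : Ω ⊆ K := subset_closure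
  have hKcomp : IsCompact K := hΩbdd.isCompact_closure
  have hKne : K.Nonempty := hΩne.closure
  have hΩmeas : MeasurableSet Ω := hΩopen.measurableSet
  have hvol : volume Ω < ⊤ :=
    lt_of_le_of_lt (measure_mono hΩK) hKcomp.measure_lt_top
  intro i
  -- bound on J i over K × K
  obtain ⟨z, hz, hmaxJ⟩ := (hKcomp.prod hKcomp).exists_isMaxOn
    (hKne.prod hKne) (hJcont i).continuousOn
  set MJ := J i z.1 z.2 with hMJ
  have hMJnn : 0 ≤ MJ := hJnn i z.1 z.2
  have hMJle : ∀ x ∈ K, ∀ y ∈ K, J i x y ≤ MJ := by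
    intro x hx y hy
    exact hmaxJ (Set.mk_mem_prod hx hy)
  -- bound on U i
  obtain ⟨M0, hM0⟩ := hUbdd i
  set MU := max M0 0 with hMU
  have hMUnn : 0 ≤ MU := le_max_right _ _
  have hMUle : ∀ x ∈ K, ∀ t ∈ Icc (0:ℝ) T, |U i x t| ≤ MU := by
    intro x hx t ht; exact le_trans (hM0 x hx t ht) (le_max_left _ _)
  -- bound on p i i
  obtain ⟨Mp, hMp⟩ := hpbdd i i
  set Cp := max Mp 0 with hCp
  have hCpnn : 0 ≤ Cp := le_max_right _ _
  have hCple : ∀ x ∈ K, ∀ t ∈ Icc (0:ℝ) T, -Cp ≤ p i i x t := by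
    intro x hx t ht
    have h1 : |p i i x t| ≤ Cp := le_trans (hMp x hx t ht) (le_max_left Mp 0)
    have h2 := abs_le.mp h1
    linarith [h2.1]
  -- bound on dstar i over K
  set Vol := (volume Ω).toReal with hVol
  have hVolnn : 0 ≤ Vol := ENNReal.toReal_nonneg
  set Cd := max (d i) (d i * (MJ * Vol)) with hCdd
  have hCdnn : 0 ≤ Cd := le_trans (hd i).le (le_max_left _ _)
  have hCdle : ∀ x ∈ K, dstar i x ≤ Cd := by
    intro x hx
    rcases hdstar i with h | h
    · rw [h x]; exact le_max_left _ _
    · rw [h x]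
      have hb : ‖∫ y in Ω, J i y x‖ ≤ MJ * Vol := by
        apply norm_setIntegral_le_of_norm_le_const hvol
        intro y hy
        rw [Real.norm_eq_abs, abs_of_nonneg (hJnn i y x)]
        exact hMJle y (hΩK hy) x hx
      have : (∫ y in Ω, J i y x) ≤ MJ * Vol := le_trans (le_abs_self _) hb
      calc d i * ∫ y in Ω, J i y x ≤ d i * (MJ * Vol) :=
            mul_le_mul_of_nonneg_left this (hd i).le
        _ ≤ Cd := le_max_right _ _
  set C := Cd + Cp + 1 with hCdef
  have hC : 0 < C := by positivity
  -- nonnegativity of the integral term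
  have hintnn : ∀ x, ∀ t ∈ Icc (0:ℝ) T, 0 ≤ ∫ y in Ω, J i x y * U i y t := by
    intro x t ht
    apply setIntegral_nonneg hΩmeas
    intro y hy
    exact mul_nonneg (hJnn i x y) (hUnn i y (hΩK hy) t ht)
  -- key step: the ODE lemma applies for any admissible δ
  have key : ∀ δ : ℝ, 0 ≤ δ →
      (∀ x ∈ K, ∀ t ∈ Icc (0:ℝ) T, δ ≤ d i * ∫ y in Ω, J i x y * U i y t) →
      ∀ x ∈ K, 0 < U i x T ∧ δ * T < U i x T * (Real.exp (C * T) - 1) ∧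
        ∀ t ∈ Icc (0:ℝ) T, U i x T * Real.exp (-(C * T)) ≤ U i x t := by
    intro δ hδ hδle x hx
    apply ode_aux hT hC hδ (hUderiv i x hx) ?_ (hper i x hx)
    intro t ht
    have hsum : p i i x t * U i x t ≤ ∑ k, p i k x t * U k x t := by
      have herase : (0:ℝ) ≤ ∑ k ∈ Finset.univ.erase i, p i k x t * U k x t := by
        apply Finset.sum_nonneg
        intro k hk
        have hki : k ≠ i := Finset.ne_of_mem_erase hk
        exact mul_nonneg (hpcoop i k (Ne.symm hki) x hx t ht) (hUnn k x hx t ht)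
      have heq := Finset.add_sum_erase Finset.univ (fun k => p i k x t * U k x t)
        (Finset.mem_univ i)
      linarith
    have hU0 : 0 ≤ U i x t := hUnn i x hx t ht
    have hds : dstar i x * U i x t ≤ Cd * U i x t :=
      mul_le_mul_of_nonneg_right (hCdle x hx) hU0
    have hpi : -Cp * U i x t ≤ p i i x t * U i x t :=
      mul_le_mul_of_nonneg_right (hCple x hx t ht) hU0
    have hmain := hineq i x hx t ht
    have hδ2 := hδle x hx t ht
    nlinarith
  -- Step 1 : pointwise positivity
  have step1 := key 0 le_rfl (fun x hx t ht => mul_nonneg (hd i).le (hintnn x t ht))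
  have hpos : ∀ x ∈ K, ∀ t ∈ Icc (0:ℝ) T, 0 < U i x t := by
    intro x hx t ht
    have h1 := (step1 x hx).1
    have h2 := (step1 x hx).2.2 t ht
    have h3 : 0 < U i x T * Real.exp (-(C * T)) := mul_pos h1 (Real.exp_pos _)
    linarith
  -- Step 2 : uniform positive lower bound on the integral term
  set F : ((Fin N → ℝ) × ℝ) → ℝ := fun q => ∫ y in Ω, J i q.1 y * U i y q.2 with hF
  set S : Set ((Fin N → ℝ) × ℝ) := K ×ˢ Icc (0:ℝ) T with hS
  have hScomp : IsCompact S := hKcomp.prod isCompact_Icc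
  have hSne : S.Nonempty := hKne.prod (nonempty_Icc.mpr hT.le)
  have hmeasy : ∀ (x : Fin N → ℝ) (t : ℝ),
      AEStronglyMeasurable (fun y => J i x y * U i y t) (volume.restrict Ω) := by
    intro x t
    have h1 : Continuous (fun y => J i x y) := (hJcont i).comp (Continuous.prodMk_right x)
    have h2 : Measurable (fun y => U i y t) :=
      (hUmeas i).comp (measurable_id.prodMk measurable_const)
    exact (h1.measurable.mul h2).aestronglyMeasurable
  have hFcont : ContinuousOn F S := by
    apply continuousOn_of_dominated (bound := fun _ => MJ * MU)
    · intro q hq; exact hmeasy q.1 q.2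
    · intro q hq
      rw [ae_restrict_iff' hΩmeas]
      apply Filter.Eventually.of_forall
      intro y hy
      rw [Real.norm_eq_abs, abs_mul, abs_of_nonneg (hJnn i q.1 y)]
      rw [hS, Set.mem_prod] at hq
      exact mul_le_mul (hMJle q.1 hq.1 y (hΩK hy)) (hMUle y (hΩK hy) q.2 hq.2)
        (abs_nonneg _) hMJnn
    · exact integrableOn_const hvol.ne
    · rw [ae_restrict_iff' hΩmeas]
      apply Filter.Eventually.of_forall
      intro y hy
      have h1 : ContinuousOn (fun q : (Fin N → ℝ) × ℝ => J i q.1 y) S :=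
        ((hJcont i).comp (continuous_fst.prodMk continuous_const)).continuousOn
      have h2 : ContinuousOn (U i y) (Icc (0:ℝ) T) :=
        fun t ht => (hUderiv i y (hΩK hy) t ht).continuousWithinAt
      have h3 : ContinuousOn (fun q : (Fin N → ℝ) × ℝ => U i y q.2) S := by
        apply h2.comp continuous_snd.continuousOn
        intro q hq
        rw [hS, Set.mem_prod] at hq
        exact hq.2
      exact h1.mul h3
  have hFpos : ∀ q ∈ S, 0 < F q := by
    rintro ⟨x, t⟩ hq
    rw [hS, Set.mem_prod] at hq
    obtain ⟨hx, ht⟩ := hq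
    rw [hF]
    have hInt : IntegrableOn (fun y => J i x y * U i y t) Ω := by
      apply Integrable.mono' (integrableOn_const (C := MJ * MU) hvol.ne) (hmeasy x t)
      rw [ae_restrict_iff' hΩmeas]
      apply Filter.Eventually.of_forall
      intro y hy
      rw [Real.norm_eq_abs, abs_mul, abs_of_nonneg (hJnn i x y)]
      exact mul_le_mul (hMJle x hx y (hΩK hy)) (hMUle y (hΩK hy) t ht)
        (abs_nonneg _) hMJnn
    have hae : 0 ≤ᵐ[volume.restrict Ω] fun y => J i x y * U i y t := by
      filter_upwards [ae_restrict_mem hΩmeas] with y hy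
      exact mul_nonneg (hJnn i x y) (hUnn i y (hΩK hy) t ht)
    rw [setIntegral_pos_iff_support_of_nonneg_ae hae hInt]
    · -- positive measure of the support
      set V : Set (Fin N → ℝ) := {y | 0 < J i x y} with hV
      have hVopen : IsOpen V :=
        isOpen_lt continuous_const ((hJcont i).comp (Continuous.prodMk_right x))
      have hxV : x ∈ V := hJdiag i x
      obtain ⟨w, hwV, hwΩ⟩ := mem_closure_iff.mp hx V hVopen hxV
      have hsub : V ∩ Ω ⊆ support (fun y => J i x y * U i y t) ∩ Ω := by
        rintro y ⟨hyV, hyΩ⟩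
        refine ⟨?_, hyΩ⟩
        have := hpos y (hΩK hyΩ) t ht
        exact ne_of_gt (mul_pos hyV this)
      calc (0:ENNReal) < volume (V ∩ Ω) :=
            (hVopen.inter hΩopen).measure_pos volume ⟨w, hwV, hwΩ⟩
        _ ≤ volume (support (fun y => J i x y * U i y t) ∩ Ω) := measure_mono hsub
  obtain ⟨q0, hq0, hminF⟩ := hScomp.exists_isMinOn hSne hFcont
  set δ0 := F q0 with hδ0
  have hδ0pos : 0 < δ0 := hFpos q0 hq0
  -- Step 2 application
  have hδle2 : ∀ x ∈ K, ∀ t ∈ Icc (0:ℝ) T,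
      d i * δ0 ≤ d i * ∫ y in Ω, J i x y * U i y t := by
    intro x hx t ht
    exact mul_le_mul_of_nonneg_left (hminF (Set.mk_mem_prod hx ht)) (hd i).le
  have step2 := key (d i * δ0) (mul_nonneg (hd i).le hδ0pos.le) hδle2
  have hE : 1 < Real.exp (C * T) := by
    nlinarith [Real.add_one_le_exp (C * T), hC, hT]
  set c := (d i * δ0 * T / (Real.exp (C * T) - 1)) * Real.exp (-(C * T)) with hc
  have hcpos : 0 < c := by
    apply mul_pos _ (Real.exp_pos _)
    exact div_pos (mul_pos (mul_pos (hd i) hδ0pos) hT) (by linarith)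
  refine ⟨hpos, c, hcpos, ?_⟩
  intro x hx t ht
  have h1 := (step2 x hx).2.1
  have h2 := (step2 x hx).2.2 t (Ioc_subset_Icc_self ht)
  have h3 : d i * δ0 * T / (Real.exp (C * T) - 1) ≤ U i x T := by
    rw [div_le_iff₀ (by linarith)]
    nlinarith
  calc c ≤ U i x T * Real.exp (-(C * T)) :=
        mul_le_mul_of_nonneg_right h3 (Real.exp_pos _).le
    _ ≤ U i x t := h2
end

section
/- For i = 1,…,m let d_i > 0, let J_i satisfy (J), and let ℓ_ik ∈ C(Q̄_T) satisfy (L1). Let P be a bounded linear operator on C(Ω̄, ℝ^m) with the defining property: for every v₀ ∈ C(Ω̄, ℝ^m) there exists v : Q̄_T → ℝ^m, continuous and continuously differentiable in t, with ∂_t v_i(x,t) = d_i ∫_Ω J_i(x,y) v_i(y,t) dy + Σ_{k=1}^m ℓ_ik(x,t) v_k(x,t) for all x ∈ Ω̄, t ∈ (0,T], v(·,0) = v₀, and (P v₀)(x) = v(x,T) for all x. Suppose there exist β ∈ ℝ and φ ∈ X^m such that φ ≥ 0 on Q̄_T, φ(·,0) ≢ 0, 𝓛[φ] ≥ βφ on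 Q̄_T, and φ_i(x,T) ≥ φ_i(x,0) for all x ∈ Ω̄ and all i. Then the spectral radius r(P) = lim_{n→∞} ‖P^n‖^{1/n} (operator norm with respect to the sup norm on C(Ω̄, ℝ^m)) satisfies r(P) ≥ e^{βT}. -/
open MeasureTheory Set Function Filter

open Topology

set_option maxHeartbeats 1000000

lemma stmt12_max_principle {N m : ℕ} (Ω : Set (Fin N → ℝ))
    (hΩopen : IsOpen Ω) (hΩbdd : Bornology.IsBounded Ω)
    (T : ℝ) (hT : 0 < T)
    (d : Fin m → ℝ) (hd : ∀ i, 0 < d i)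
    (J : Fin m → (Fin N → ℝ) → (Fin N → ℝ) → ℝ)
    (hJcont : ∀ i, Continuous (Function.uncurry (J i)))
    (hJnn : ∀ i x y, 0 ≤ J i x y)
    (hJint : ∀ i x, (∫ y, J i x y) = 1)
    (ℓ : Fin m → Fin m → (Fin N → ℝ) → ℝ → ℝ)
    (hℓcont : ∀ i k, ContinuousOn (fun q : (Fin N → ℝ) × ℝ => ℓ i k q.1 q.2)
      (closure Ω ×ˢ Icc (0:ℝ) T))
    (hL1 : ∀ i k, i ≠ k → ∀ x ∈ closure Ω, ∀ t ∈ Icc (0:ℝ) T, 0 ≤ ℓ i k x t)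
    (w wt : Fin m → (Fin N → ℝ) → ℝ → ℝ)
    (hwcont : ∀ i, ContinuousOn (fun q : (Fin N → ℝ) × ℝ => w i q.1 q.2)
      (closure Ω ×ˢ Icc (0:ℝ) T))
    (hwderiv : ∀ i, ∀ x ∈ closure Ω, ∀ t ∈ Icc (0:ℝ) T,
      HasDerivWithinAt (w i x) (wt i x t) (Icc (0:ℝ) T) t)
    (hwineq : ∀ i, ∀ x ∈ closure Ω, ∀ t ∈ Ioc (0:ℝ) T,
      d i * (∫ y in Ω, J i x y * w i y t) + ∑ k, ℓ i k x t * w k x t ≤ wt i x t)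
    (hw0 : ∀ i, ∀ x ∈ closure Ω, 0 ≤ w i x 0) :
    ∀ i, ∀ x ∈ closure Ω, ∀ t ∈ Icc (0:ℝ) T, 0 ≤ w i x t := by
  have hKc : IsCompact (closure Ω) := hΩbdd.isCompact_closure
  have hQc : IsCompact (closure Ω ×ˢ Icc (0:ℝ) T) := hKc.prod isCompact_Icc
  have hQcl : IsClosed (closure Ω ×ˢ Icc (0:ℝ) T) := isClosed_closure.prod isClosed_Icc
  -- bound on ℓ
  have hCex : ∀ p : Fin m × Fin m, ∃ Cp : ℝ,
      ∀ q ∈ closure Ω ×ˢ Icc (0:ℝ) T, |ℓ p.1 p.2 q.1 q.2| ≤ Cp := by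
    intro p
    obtain ⟨Cp, hCp⟩ := hQc.exists_bound_of_continuousOn (hℓcont p.1 p.2)
    exact ⟨Cp, fun q hq => by simpa using hCp q hq⟩
  choose F hF using hCex
  obtain ⟨C', hC'⟩ := Finite.exists_le F
  set C : ℝ := max C' 0 with hCdef
  have hC0 : 0 ≤ C := le_max_right _ _
  have hC : ∀ i k, ∀ x ∈ closure Ω, ∀ t ∈ Icc (0:ℝ) T, |ℓ i k x t| ≤ C := by
    intro i k x hx t ht
    exact le_trans (hF (i,k) (x,t) ⟨hx, ht⟩) (le_trans (hC' (i,k)) (le_max_left _ _))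
  -- bound on d
  obtain ⟨D', hD'⟩ := Finite.exists_le d
  set D : ℝ := max D' 0 with hDdef
  have hD0 : 0 ≤ D := le_max_right _ _
  have hD : ∀ i, d i ≤ D := fun i => le_trans (hD' i) (le_max_left _ _)
  set K₀ : ℝ := D + m * C + 1 with hK₀def
  have hK₀pos : 0 < K₀ := by positivity
  -- continuity in t of w for fixed x
  have hwct : ∀ i, ∀ x ∈ closure Ω, ContinuousOn (fun t => w i x t) (Icc (0:ℝ) T) := by
    intro i x hx
    exact (hwcont i).comp ((continuous_const.prodMk continuous_id).continuousOn)
      (fun t ht => ⟨hx, ht⟩)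
  -- continuity in x of w for fixed t
  have hwcx : ∀ i, ∀ t ∈ Icc (0:ℝ) T, ContinuousOn (fun x => w i x t) (closure Ω) := by
    intro i t ht
    exact (hwcont i).comp ((continuous_id.prodMk continuous_const).continuousOn)
      (fun x hx => ⟨hx, ht⟩)
  -- main claim
  have claim : ∀ ε : ℝ, 0 < ε → ∀ i, ∀ x ∈ closure Ω, ∀ t ∈ Icc (0:ℝ) T,
      0 < w i x t + ε * Real.exp (K₀ * t) := by
    intro ε hε
    by_contra hcon
    push_neg at hcon
    obtain ⟨i₁, x₁, hx₁, t₁, ht₁, hle₁⟩ := hcon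
    set A : Set ((Fin N → ℝ) × ℝ) :=
      (⋃ i, (closure Ω ×ˢ Icc (0:ℝ) T) ∩
        ((fun q : (Fin N → ℝ) × ℝ => w i q.1 q.2 + ε * Real.exp (K₀ * q.2)) ⁻¹' Iic 0))
      with hAdef
    have hAc : IsCompact A := by
      apply isCompact_iUnion
      intro i
      apply hQc.of_isClosed_subset _ inter_subset_left
      exact ContinuousOn.preimage_isClosed_of_isClosed
        ((hwcont i).add (Continuous.continuousOn (continuous_const.mul (Real.continuous_exp.comp (continuous_const.mul continuous_snd))))) hQcl isClosed_Iic
    set S : Set ℝ := Prod.snd '' A with hSdef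
    have hSc : IsCompact S := hAc.image continuous_snd
    have hSne : S.Nonempty := ⟨t₁, ⟨(x₁, t₁), mem_iUnion.2 ⟨i₁, ⟨⟨hx₁, ht₁⟩, hle₁⟩⟩, rfl⟩⟩
    have hSsub : S ⊆ Icc (0:ℝ) T := by
      rintro t ⟨q, hq, rfl⟩
      obtain ⟨i, hq'⟩ := mem_iUnion.1 hq
      exact hq'.1.2
    set t₀ : ℝ := sInf S with ht₀def
    have ht₀S : t₀ ∈ S := hSc.isClosed.csInf_mem hSne hSc.bddBelow
    obtain ⟨⟨x₀, t₀'⟩, hq₀, ht₀'⟩ := ht₀S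
    obtain ⟨i₀, hq₀'⟩ := mem_iUnion.1 hq₀
    have hx₀ : x₀ ∈ closure Ω := hq₀'.1.1
    have ht₀Icc : t₀ ∈ Icc (0:ℝ) T := by rw [← ht₀'] at *; exact hq₀'.1.2
    have hle₀ : w i₀ x₀ t₀ + ε * Real.exp (K₀ * t₀) ≤ 0 := by
      have := hq₀'.2; rw [← ht₀'] at *; exact this
    have ht₀pos : 0 < t₀ := by
      rcases lt_or_eq_of_le ht₀Icc.1 with h | h
      · exact h
      · exfalso
        rw [← h] at hle₀
        have h1 : 0 ≤ w i₀ x₀ 0 := hw0 i₀ x₀ hx₀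
        have h2 : Real.exp (K₀ * 0) = 1 := by norm_num
        rw [h2] at hle₀; linarith
    -- strict positivity strictly before t₀
    have hlow : ∀ t ∈ Ico (0:ℝ) t₀, ∀ j, ∀ x ∈ closure Ω,
        0 < w j x t + ε * Real.exp (K₀ * t) := by
      intro t ht j x hx
      by_contra hle
      push_neg at hle
      have htIcc : t ∈ Icc (0:ℝ) T := ⟨ht.1, le_trans ht.2.le ht₀Icc.2⟩
      have : t ∈ S := ⟨(x, t), mem_iUnion.2 ⟨j, ⟨⟨hx, htIcc⟩, hle⟩⟩, rfl⟩
      exact absurd (csInf_le hSc.bddBelow this) (not_le.2 ht.2)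
    -- NeBot filter from the left
    haveI hNB : (𝓝[Ico (0:ℝ) t₀] t₀).NeBot := by
      rw [← mem_closure_iff_nhdsWithin_neBot, closure_Ico (ne_of_lt ht₀pos)]
      exact ⟨ht₀pos.le, le_refl _⟩
    -- nonnegativity at t₀
    have hnn : ∀ j, ∀ x ∈ closure Ω, 0 ≤ w j x t₀ + ε * Real.exp (K₀ * t₀) := by
      intro j x hx
      have hcont : ContinuousOn (fun t => w j x t + ε * Real.exp (K₀ * t)) (Icc (0:ℝ) T) :=
        (hwct j x hx).add (Continuous.continuousOn (continuous_const.mul (Real.continuous_exp.comp (continuous_const.mul continuous_id))))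
      have htend : Tendsto (fun t => w j x t + ε * Real.exp (K₀ * t)) (𝓝[Ico (0:ℝ) t₀] t₀)
          (𝓝 (w j x t₀ + ε * Real.exp (K₀ * t₀))) :=
        (hcont t₀ ht₀Icc).mono_left
          (nhdsWithin_mono _ (fun s hs => ⟨hs.1, le_trans hs.2.le ht₀Icc.2⟩))
      refine ge_of_tendsto htend ?_
      filter_upwards [eventually_mem_nhdsWithin] with t ht
      exact (hlow t ht j x hx).le
    have heq₀ : w i₀ x₀ t₀ + ε * Real.exp (K₀ * t₀) = 0 :=
      le_antisymm hle₀ (hnn i₀ x₀ hx₀)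
    -- derivative of the perturbed function at t₀ within Icc 0 t₀
    set E : ℝ := Real.exp (K₀ * t₀) with hEdef
    have hEpos : 0 < E := Real.exp_pos _
    have hexp : HasDerivAt (fun t : ℝ => Real.exp (K₀ * t)) (K₀ * E) t₀ := by
      have h1 : HasDerivAt (fun t : ℝ => K₀ * t) K₀ t₀ := by
        simpa using (hasDerivAt_id t₀).const_mul K₀
      simpa [hEdef, mul_comm] using h1.exp
    have hder : HasDerivWithinAt (fun t => w i₀ x₀ t + ε * Real.exp (K₀ * t))
        (wt i₀ x₀ t₀ + ε * (K₀ * E)) (Icc (0:ℝ) t₀) t₀ := by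
      exact ((hwderiv i₀ x₀ hx₀ t₀ ht₀Icc).add
        ((hexp.const_mul ε).hasDerivWithinAt)).mono (Icc_subset_Icc_right ht₀Icc.2)
    -- the derivative is ≤ 0
    have hderle : wt i₀ x₀ t₀ + ε * (K₀ * E) ≤ 0 := by
      rw [hasDerivWithinAt_iff_tendsto_slope] at hder
      have hIcoNe : (𝓝[Icc (0:ℝ) t₀ \ {t₀}] t₀).NeBot := by
        rw [Icc_sdiff_right]; exact hNB
      refine le_of_tendsto hder ?_
      filter_upwards [eventually_mem_nhdsWithin] with t ht
      rw [Icc_sdiff_right] at ht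
      have h1 : 0 ≤ w i₀ x₀ t + ε * Real.exp (K₀ * t) := (hlow t ht i₀ x₀ hx₀).le
      have h2 : slope (fun t => w i₀ x₀ t + ε * Real.exp (K₀ * t)) t₀ t =
          ((w i₀ x₀ t + ε * Real.exp (K₀ * t)) - (w i₀ x₀ t₀ + ε * Real.exp (K₀ * t₀)))
            / (t - t₀) := by
        rw [slope_def_field]
      rw [h2, heq₀, sub_zero]
      exact div_nonpos_of_nonneg_of_nonpos h1 (by linarith [ht.2])
    -- lower bound on wt from the inequality
    have hws := hwineq i₀ x₀ hx₀ t₀ ⟨ht₀pos, ht₀Icc.2⟩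
    -- integral bound
    have hεE : 0 < ε * E := mul_pos hε hEpos
    have hJintg : Integrable (J i₀ x₀) := by
      by_contra h
      have h' := hJint i₀ x₀
      rw [integral_undef h] at h'
      exact one_ne_zero h'.symm
    have hJx₀cont : Continuous (J i₀ x₀) := by
      have := (hJcont i₀).comp (continuous_const.prodMk continuous_id : Continuous fun y : Fin N → ℝ => (x₀, y))
      exact this
    have hIw : IntegrableOn (fun y => J i₀ x₀ y * w i₀ y t₀) Ω := by
      apply IntegrableOn.mono_set _ subset_closure
      exact (hJx₀cont.continuousOn.mul (hwcx i₀ t₀ ht₀Icc)).integrableOn_compact hKc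
    have hIJ : IntegrableOn (J i₀ x₀) Ω := hJintg.integrableOn
    have hJΩle : (∫ y in Ω, J i₀ x₀ y) ≤ 1 := by
      rw [← hJint i₀ x₀]
      exact setIntegral_le_integral hJintg (ae_of_all _ (hJnn i₀ x₀))
    have hJΩnn : 0 ≤ ∫ y in Ω, J i₀ x₀ y :=
      setIntegral_nonneg hΩopen.measurableSet (fun y _ => hJnn i₀ x₀ y)
    have hintlb : -(ε * E) ≤ ∫ y in Ω, J i₀ x₀ y * w i₀ y t₀ := by
      have h1 : ∫ y in Ω, (-(ε * E)) * J i₀ x₀ y ≤ ∫ y in Ω, J i₀ x₀ y * w i₀ y t₀ := by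
        apply setIntegral_mono_on (hIJ.const_mul _) hIw hΩopen.measurableSet
        intro y hy
        have hyK : y ∈ closure Ω := subset_closure hy
        have hwy : -(ε * E) ≤ w i₀ y t₀ := by have := hnn i₀ y hyK; linarith
        calc (-(ε * E)) * J i₀ x₀ y = J i₀ x₀ y * (-(ε * E)) := by ring
          _ ≤ J i₀ x₀ y * w i₀ y t₀ :=
            mul_le_mul_of_nonneg_left hwy (hJnn i₀ x₀ y)
      have h2 : ∫ y in Ω, (-(ε * E)) * J i₀ x₀ y = (-(ε * E)) * ∫ y in Ω, J i₀ x₀ y := by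
        exact integral_const_mul _ _
      rw [h2] at h1
      have h3 : -(ε * E) ≤ (-(ε * E)) * ∫ y in Ω, J i₀ x₀ y := by
        nlinarith
      linarith
    -- sum bound
    have hsumlb : -(m * C * (ε * E)) ≤ ∑ k, ℓ i₀ k x₀ t₀ * w k x₀ t₀ := by
      have h1 : ∀ k : Fin m, -(C * (ε * E)) ≤ ℓ i₀ k x₀ t₀ * w k x₀ t₀ := by
        intro k
        have hℓb := hC i₀ k x₀ hx₀ t₀ ht₀Icc
        have hwk : -(ε * E) ≤ w k x₀ t₀ := by have := hnn k x₀ hx₀; linarith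
        rcases eq_or_ne k i₀ with h | h
        · subst h
          have hwk0 : w k x₀ t₀ = -(ε * E) := by linarith [heq₀]
          rw [hwk0]
          have := abs_le.1 hℓb
          nlinarith
        · have hℓnn : 0 ≤ ℓ i₀ k x₀ t₀ := hL1 i₀ k (Ne.symm h) x₀ hx₀ t₀ ht₀Icc
          have := abs_le.1 hℓb
          nlinarith
      calc -(m * C * (ε * E)) = ∑ _k : Fin m, -(C * (ε * E)) := by
            rw [Finset.sum_const, Finset.card_univ, Fintype.card_fin]; ring
        _ ≤ ∑ k, ℓ i₀ k x₀ t₀ * w k x₀ t₀ := Finset.sum_le_sum (fun k _ => h1 k)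
    -- combine
    have hd₀ : 0 < d i₀ := hd i₀
    have hwtlb : -(D * (ε * E)) - m * C * (ε * E) ≤ wt i₀ x₀ t₀ := by
      have h1 : d i₀ * (-(ε * E)) ≤ d i₀ * (∫ y in Ω, J i₀ x₀ y * w i₀ y t₀) :=
        mul_le_mul_of_nonneg_left hintlb hd₀.le
      have h2 : -(D * (ε * E)) ≤ d i₀ * (-(ε * E)) := by nlinarith [hD i₀]
      linarith
    have : 0 < wt i₀ x₀ t₀ + ε * (K₀ * E) := by
      have hK₀E : ε * (K₀ * E) = K₀ * (ε * E) := by ring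
      rw [hK₀E, hK₀def]
      nlinarith
    linarith
  -- conclude
  intro i x hx t ht
  have hB : 0 < Real.exp (K₀ * T) := Real.exp_pos _
  refine le_of_forall_pos_le_add ?_
  intro ε' hε'
  have hεp : 0 < ε' / Real.exp (K₀ * T) := div_pos hε' hB
  have h1 := claim _ hεp i x hx t ht
  have h2 : Real.exp (K₀ * t) ≤ Real.exp (K₀ * T) :=
    Real.exp_le_exp.2 (mul_le_mul_of_nonneg_left ht.2 hK₀pos.le)
  have h3 : ε' / Real.exp (K₀ * T) * Real.exp (K₀ * t) ≤ ε' := by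
    rw [div_mul_eq_mul_div, div_le_iff₀ hB]
    nlinarith
  linarith

/-- lower bound `r(P) ≥ e^{βT}` for the spectral radius of the period map. -/
theorem stmt_12 {N m : ℕ} (Ω : Set (Fin N → ℝ)) (hΩne : Ω.Nonempty)
    (hΩopen : IsOpen Ω) (hΩbdd : Bornology.IsBounded Ω)
    (T : ℝ) (hT : 0 < T)
    (d : Fin m → ℝ) (hd : ∀ i, 0 < d i)
    -- each kernel Jᵢ satisfies condition (J)
    (J : Fin m → (Fin N → ℝ) → (Fin N → ℝ) → ℝ)
    (hJcont : ∀ i, Continuous (Function.uncurry (J i)))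
    (hJnn : ∀ i x y, 0 ≤ J i x y)
    (hJdiag : ∀ i x, 0 < J i x x)
    (hJint : ∀ i x, (∫ y, J i x y) = 1)
    -- coefficients ℓ_ik ∈ C(Q̄_T) satisfying (L1)
    (ℓ : Fin m → Fin m → (Fin N → ℝ) → ℝ → ℝ)
    (hℓcont : ∀ i k, ContinuousOn (fun q : (Fin N → ℝ) × ℝ => ℓ i k q.1 q.2)
      (closure Ω ×ˢ Icc (0:ℝ) T))
    (hL1 : ∀ i k, i ≠ k → ∀ x ∈ closure Ω, ∀ t ∈ Icc (0:ℝ) T, 0 ≤ ℓ i k x t)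
    -- P is the period-T solution map on C(Ω̄, ℝ^m) (with the sup norm)
    (P : BoundedContinuousFunction (↥(closure Ω)) (Fin m → ℝ) →L[ℝ] BoundedContinuousFunction (↥(closure Ω)) (Fin m → ℝ))
    (hP : ∀ v₀ : BoundedContinuousFunction (↥(closure Ω)) (Fin m → ℝ),
      ∃ v vt : Fin m → (Fin N → ℝ) → ℝ → ℝ,
        (∀ i, ContinuousOn (fun q : (Fin N → ℝ) × ℝ => v i q.1 q.2)
          (closure Ω ×ˢ Icc (0:ℝ) T)) ∧
        (∀ i, ∀ x ∈ closure Ω, ∀ t ∈ Icc (0:ℝ) T,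
          HasDerivWithinAt (v i x) (vt i x t) (Icc (0:ℝ) T) t) ∧
        (∀ i, ∀ x ∈ closure Ω, ContinuousOn (vt i x) (Icc (0:ℝ) T)) ∧
        (∀ i, ∀ x ∈ closure Ω, ∀ t ∈ Ioc (0:ℝ) T,
          vt i x t = d i * (∫ y in Ω, J i x y * v i y t)
            + ∑ k, ℓ i k x t * v k x t) ∧
        (∀ x : ↥(closure Ω), ∀ i, v i (↑x) 0 = v₀ x i) ∧
        (∀ x : ↥(closure Ω), ∀ i, P v₀ x i = v i (↑x) T))
    -- the test function φ ∈ X^m and the number β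
    (β : ℝ) (φ φt : Fin m → (Fin N → ℝ) → ℝ → ℝ)
    (hφcont : ∀ i, ContinuousOn (fun q : (Fin N → ℝ) × ℝ => φ i q.1 q.2)
      (closure Ω ×ˢ Icc (0:ℝ) T))
    (hφderiv : ∀ i, ∀ x ∈ closure Ω, ∀ t ∈ Icc (0:ℝ) T,
      HasDerivWithinAt (φ i x) (φt i x t) (Icc (0:ℝ) T) t)
    (hφtcont : ∀ i, ∀ x ∈ closure Ω, ContinuousOn (φt i x) (Icc (0:ℝ) T))
    (hφnn : ∀ i, ∀ x ∈ closure Ω, ∀ t ∈ Icc (0:ℝ) T, 0 ≤ φ i x t)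
    (hφne : ∃ i, ∃ x ∈ closure Ω, φ i x 0 ≠ 0)
    -- 𝓛[φ] ≥ βφ on Q̄_T
    (hLφ : ∀ i, ∀ x ∈ closure Ω, ∀ t ∈ Icc (0:ℝ) T,
      β * φ i x t ≤ d i * (∫ y in Ω, J i x y * φ i y t)
        + (∑ k, ℓ i k x t * φ k x t) - φt i x t)
    (hφT : ∀ i, ∀ x ∈ closure Ω, φ i x 0 ≤ φ i x T) :
    ∀ r : ℝ,
      Tendsto (fun n : ℕ => ‖P ^ n‖ ^ (1 / (n:ℝ))) atTop (nhds r) →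
      Real.exp (β * T) ≤ r := by
  have hKc : IsCompact (closure Ω) := hΩbdd.isCompact_closure
  haveI : CompactSpace (↥(closure Ω)) := isCompact_iff_compactSpace.mp hKc
  have hTmem : (0:ℝ) ∈ Icc (0:ℝ) T := left_mem_Icc.mpr hT.le
  have hTmem' : T ∈ Icc (0:ℝ) T := right_mem_Icc.mpr hT.le
  -- the initial datum φ₀
  have hφ0cont : Continuous (fun x : ↥(closure Ω) => fun i => φ i (↑x) 0) := by
    apply continuous_pi
    intro i
    exact (hφcont i).comp_continuous
      (continuous_subtype_val.prodMk continuous_const)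
      (fun x => ⟨x.2, hTmem⟩)
  set φ₀ : BoundedContinuousFunction (↥(closure Ω)) (Fin m → ℝ) :=
    BoundedContinuousFunction.mkOfCompact ⟨_, hφ0cont⟩ with hφ₀def
  have hφ₀app : ∀ (x : ↥(closure Ω)) i, φ₀ x i = φ i (↑x) 0 := fun x i => rfl
  -- (b) positivity of P
  have hPpos : ∀ v₀ : BoundedContinuousFunction (↥(closure Ω)) (Fin m → ℝ),
      (∀ x i, 0 ≤ v₀ x i) → ∀ x i, 0 ≤ P v₀ x i := by
    intro v₀ h0 x i
    obtain ⟨v, vt, hc, hder, _, heq, hinit, hfin⟩ := hP v₀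
    have hmp := stmt12_max_principle Ω hΩopen hΩbdd T hT d hd J hJcont hJnn hJint
      ℓ hℓcont hL1 v vt hc hder
      (fun i x hx t ht => le_of_eq (heq i x hx t ht).symm)
      (fun i x hx => by rw [hinit ⟨x, hx⟩ i]; exact h0 ⟨x, hx⟩ i)
    rw [hfin x i]
    exact hmp i (↑x) x.2 T hTmem'
  -- (a) comparison: P φ₀ ≥ e^{βT} φ₀
  have hPφ₀ : ∀ (x : ↥(closure Ω)) i, Real.exp (β * T) * φ i (↑x) 0 ≤ P φ₀ x i := by
    obtain ⟨v, vt, hc, hder, hvtc, heq, hinit, hfin⟩ := hP φ₀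
    have hexpc : Continuous (fun q : (Fin N → ℝ) × ℝ => Real.exp (β * q.2)) :=
      Real.continuous_exp.comp (continuous_const.mul continuous_snd)
    have hexpd : ∀ t : ℝ, HasDerivAt (fun s : ℝ => Real.exp (β * s)) (Real.exp (β * t) * β) t := by
      intro t
      have h1 : HasDerivAt (fun s : ℝ => β * s) β t := by
        simpa using (hasDerivAt_id t).const_mul β
      simpa using h1.exp
    set w : Fin m → (Fin N → ℝ) → ℝ → ℝ :=
      fun i x t => v i x t - Real.exp (β * t) * φ i x t with hwdef
    set wt : Fin m → (Fin N → ℝ) → ℝ → ℝ :=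
      fun i x t => vt i x t - (Real.exp (β * t) * β * φ i x t + Real.exp (β * t) * φt i x t)
      with hwtdef
    have hwcont : ∀ i, ContinuousOn (fun q : (Fin N → ℝ) × ℝ => w i q.1 q.2)
        (closure Ω ×ˢ Icc (0:ℝ) T) :=
      fun i => (hc i).sub (hexpc.continuousOn.mul (hφcont i))
    have hwderiv : ∀ i, ∀ x ∈ closure Ω, ∀ t ∈ Icc (0:ℝ) T,
        HasDerivWithinAt (w i x) (wt i x t) (Icc (0:ℝ) T) t := by
      intro i x hx t ht
      exact (hder i x hx t ht).sub
        (((hexpd t).hasDerivWithinAt).mul (hφderiv i x hx t ht))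
    have hwineq : ∀ i, ∀ x ∈ closure Ω, ∀ t ∈ Ioc (0:ℝ) T,
        d i * (∫ y in Ω, J i x y * w i y t) + ∑ k, ℓ i k x t * w k x t ≤ wt i x t := by
      intro i x hx t ht
      have htIcc : t ∈ Icc (0:ℝ) T := ⟨ht.1.le, ht.2⟩
      have hE : (0:ℝ) < Real.exp (β * t) := Real.exp_pos _
      -- integrability of each piece
      have hJxc : Continuous (J i x) := by
        have := (hJcont i).comp
          (continuous_const.prodMk continuous_id : Continuous fun y : Fin N → ℝ => (x, y))
        exact this
      have hvcy : ContinuousOn (fun y => v i y t) (closure Ω) :=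
        (hc i).comp ((continuous_id.prodMk continuous_const).continuousOn)
          (fun y hy => ⟨hy, htIcc⟩)
      have hφcy : ContinuousOn (fun y => φ i y t) (closure Ω) :=
        (hφcont i).comp ((continuous_id.prodMk continuous_const).continuousOn)
          (fun y hy => ⟨hy, htIcc⟩)
      have hIv : IntegrableOn (fun y => J i x y * v i y t) Ω :=
        ((hJxc.continuousOn.mul hvcy).integrableOn_compact hKc).mono_set subset_closure
      have hIφ : IntegrableOn (fun y => J i x y * φ i y t) Ω :=
        ((hJxc.continuousOn.mul hφcy).integrableOn_compact hKc).mono_set subset_closure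
      have hsplit : (∫ y in Ω, J i x y * w i y t)
          = (∫ y in Ω, J i x y * v i y t) - Real.exp (β * t) * ∫ y in Ω, J i x y * φ i y t := by
        have h1 : (∫ y in Ω, J i x y * w i y t)
            = ∫ y in Ω, (J i x y * v i y t - Real.exp (β * t) * (J i x y * φ i y t)) := by
          apply setIntegral_congr_fun hΩopen.measurableSet
          intro y hy
          simp only [hwdef]; ring
        rw [h1, integral_sub hIv (hIφ.const_mul _), integral_const_mul]
      have hsum : (∑ k, ℓ i k x t * w k x t)
          = (∑ k, ℓ i k x t * v k x t) - Real.exp (β * t) * ∑ k, ℓ i k x t * φ k x t := by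
        rw [Finset.mul_sum, ← Finset.sum_sub_distrib]
        apply Finset.sum_congr rfl
        intro k _
        simp only [hwdef]; ring
      have hvt := heq i x hx t ht
      have hφb := hLφ i x hx t htIcc
      simp only [hwtdef, hsplit, hsum, hvt]
      nlinarith [mul_le_mul_of_nonneg_left hφb hE.le]
    have hw0 : ∀ i, ∀ x ∈ closure Ω, 0 ≤ w i x 0 := by
      intro i x hx
      have h1 : v i x 0 = φ i x 0 := by
        have := hinit ⟨x, hx⟩ i
        rwa [hφ₀app] at this
      simp only [hwdef, h1, mul_comm, Real.exp_zero]
      simp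
    have hmp := stmt12_max_principle Ω hΩopen hΩbdd T hT d hd J hJcont hJnn hJint
      ℓ hℓcont hL1 w wt hwcont hwderiv hwineq hw0
    intro x i
    have h1 := hmp i (↑x) x.2 T hTmem'
    have h2 : Real.exp (β * T) * φ i (↑x) T ≤ v i (↑x) T := by
      simp only [hwdef] at h1; linarith
    have h3 : Real.exp (β * T) * φ i (↑x) 0 ≤ Real.exp (β * T) * φ i (↑x) T :=
      mul_le_mul_of_nonneg_left (hφT i (↑x) x.2) (Real.exp_pos _).le
    rw [hfin x i]
    linarith
  -- iterate
  have hiter : ∀ n : ℕ, ∀ (x : ↥(closure Ω)) i,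
      (Real.exp (β * T)) ^ n * φ i (↑x) 0 ≤ ((P ^ n) φ₀) x i := by
    intro n
    induction n with
    | zero =>
      intro x i
      simp [hφ₀app]
    | succ n ih =>
      intro x i
      set c : ℝ := (Real.exp (β * T)) ^ n with hcdef
      have hc0 : 0 ≤ c := pow_nonneg (Real.exp_pos _).le n
      have hψ : ∀ (x : ↥(closure Ω)) i, 0 ≤ ((P ^ n) φ₀ - c • φ₀) x i := by
        intro x i
        have := ih x i
        simp only [BoundedContinuousFunction.coe_sub, Pi.sub_apply,
          BoundedContinuousFunction.coe_smul, Pi.smul_apply, smul_eq_mul, hφ₀app]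
        linarith
      have hpos := hPpos _ hψ x i
      have hPψ : (P ^ (n+1)) φ₀ = P ((P ^ n) φ₀ - c • φ₀) + c • (P φ₀) := by
        rw [map_sub, P.map_smul, _root_.pow_succ' P n, ContinuousLinearMap.mul_apply]
        abel
      have h2 := hPφ₀ x i
      have h3 : ((P ^ (n+1)) φ₀) x i
          = (P ((P ^ n) φ₀ - c • φ₀)) x i + c * (P φ₀) x i := by
        rw [hPψ]
        simp [Pi.smul_apply, smul_eq_mul]
      rw [h3, pow_succ]
      have h4 : c * (Real.exp (β * T) * φ i (↑x) 0) ≤ c * ((P φ₀) x i) :=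
        mul_le_mul_of_nonneg_left h2 hc0
      have h5 := hpos
      nlinarith
  -- the witness point
  obtain ⟨i₀, x₀, hx₀, hne⟩ := hφne
  have hc₀pos : 0 < φ i₀ x₀ 0 :=
    lt_of_le_of_ne (hφnn i₀ x₀ hx₀ 0 hTmem) (Ne.symm hne)
  set c₀ : ℝ := φ i₀ x₀ 0 with hc₀def
  set X₀ : ↥(closure Ω) := ⟨x₀, hx₀⟩ with hX₀def
  -- norm lower bounds
  have hval : ∀ n : ℕ, (Real.exp (β * T)) ^ n * c₀ ≤ ‖(P ^ n) φ₀‖ := by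
    intro n
    have h1 := hiter n X₀ i₀
    calc (Real.exp (β * T)) ^ n * c₀ ≤ ((P ^ n) φ₀) X₀ i₀ := h1
      _ ≤ |((P ^ n) φ₀) X₀ i₀| := le_abs_self _
      _ = ‖((P ^ n) φ₀) X₀ i₀‖ := rfl
      _ ≤ ‖((P ^ n) φ₀) X₀‖ := norm_le_pi_norm _ i₀
      _ ≤ ‖(P ^ n) φ₀‖ := BoundedContinuousFunction.norm_coe_le_norm _ _
  have hφ₀pos : 0 < ‖φ₀‖ := by
    have h1 : c₀ ≤ ‖φ₀‖ := by
      calc c₀ = φ₀ X₀ i₀ := (hφ₀app X₀ i₀).symm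
        _ ≤ |φ₀ X₀ i₀| := le_abs_self _
        _ = ‖φ₀ X₀ i₀‖ := rfl
        _ ≤ ‖φ₀ X₀‖ := norm_le_pi_norm _ i₀
        _ ≤ ‖φ₀‖ := BoundedContinuousFunction.norm_coe_le_norm _ _
    linarith
  have hnorm : ∀ n : ℕ, (Real.exp (β * T)) ^ n * (c₀ / ‖φ₀‖) ≤ ‖P ^ n‖ := by
    intro n
    have h1 := hval n
    have h2 : ‖(P ^ n) φ₀‖ ≤ ‖P ^ n‖ * ‖φ₀‖ := (P ^ n).le_opNorm φ₀
    have h3 : (Real.exp (β * T)) ^ n * (c₀ / ‖φ₀‖)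
        = ((Real.exp (β * T)) ^ n * c₀) / ‖φ₀‖ := by ring
    rw [h3, div_le_iff₀ hφ₀pos]
    linarith
  -- pass to the limit
  intro r hr
  set q : ℝ := c₀ / ‖φ₀‖ with hqdef
  have hq : 0 < q := div_pos hc₀pos hφ₀pos
  have hrpow : ∀ n : ℕ, 1 ≤ n →
      Real.exp (β * T) * q ^ (1 / (n:ℝ)) ≤ ‖P ^ n‖ ^ (1 / (n:ℝ)) := by
    intro n hn
    have hinvn : 0 ≤ 1 / (n:ℝ) := by positivity
    have hbase : (0:ℝ) ≤ (Real.exp (β * T)) ^ n * q :=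
      mul_nonneg (pow_nonneg (Real.exp_pos _).le n) hq.le
    have h1 : ((Real.exp (β * T)) ^ n * q) ^ (1 / (n:ℝ)) ≤ ‖P ^ n‖ ^ (1 / (n:ℝ)) :=
      Real.rpow_le_rpow hbase (hnorm n) hinvn
    have hne' : (n:ℝ) ≠ 0 := Nat.cast_ne_zero.2 (by omega)
    have h2 : ((Real.exp (β * T)) ^ n * q) ^ (1 / (n:ℝ))
        = Real.exp (β * T) * q ^ (1 / (n:ℝ)) := by
      rw [Real.mul_rpow (pow_nonneg (Real.exp_pos _).le n) hq.le]
      congr 1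
      rw [← Real.rpow_natCast (Real.exp (β * T)) n, ← Real.rpow_mul (Real.exp_pos _).le]
      rw [mul_one_div, div_self hne', Real.rpow_one]
    rw [← h2]
    exact h1
  have htend : Tendsto (fun n : ℕ => Real.exp (β * T) * q ^ (1 / (n:ℝ)))
      atTop (𝓝 (Real.exp (β * T))) := by
    have h1 : Tendsto (fun n : ℕ => (1:ℝ) / n) atTop (𝓝 0) :=
      tendsto_one_div_atTop_nhds_zero_nat
    have h2 : Tendsto (fun n : ℕ => q ^ (1 / (n:ℝ))) atTop (𝓝 1) := by
      have h3 : Tendsto (fun n : ℕ => Real.exp (Real.log q * (1 / (n:ℝ)))) atTop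
          (𝓝 (Real.exp (Real.log q * 0))) :=
        (Real.continuous_exp.tendsto _).comp (tendsto_const_nhds.mul h1)
      rw [mul_zero, Real.exp_zero] at h3
      refine h3.congr (fun n => ?_)
      rw [← Real.rpow_def_of_pos hq]
    have := h2.const_mul (Real.exp (β * T))
    simpa using this
  refine le_of_tendsto_of_tendsto htend hr ?_
  filter_upwards [eventually_ge_atTop 1] with n hn
  exact hrpow n hn
end

section
/- For i = 1,…,m let d_i > 0, let J_i satisfy (J), and let ℓ_ik ∈ C(Q̄_T) satisfy (L1). Let P be a bounded linear operator on C(Ω̄, ℝ^m) with the defining property: for every v₀ ∈ C(Ω̄, ℝ^m) there exists v : Q̄_T → ℝ^m, continuous and continuously differentiable in t, with ∂_t v_i(x,t) = d_i ∫_Ω J_i(x,y) v_i(y,t) dy + Σ_{k=1}^m ℓ_ik(x,t) v_k(x,t) for all x ∈ Ω̄, t ∈ (0,T], v(·,0) = v₀, and (P v₀)(x) = v(x,T) for all x. Suppose there exist β ∈ ℝ and φ ∈ X^m such that φ_i(x,t) > 0 for all (x,t) ∈ Q̄_T and all i, 𝓛[φ] ≤ βφ on Q̄_T, and φ_i(x,T)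 ≤ φ_i(x,0) for all x ∈ Ω̄ and all i. Then the spectral radius r(P) = lim_{n→∞} ‖P^n‖^{1/n} (operator norm with respect to the sup norm on C(Ω̄, ℝ^m)) satisfies r(P) ≤ e^{βT}. -/
open MeasureTheory Set Function Filter

/-- Comparison / maximum principle for the nonlocal system. -/
lemma stmt13_comparison {N m : ℕ} {Ω : Set (Fin N → ℝ)}
    (hΩopen : IsOpen Ω) (hΩbdd : Bornology.IsBounded Ω)
    {T : ℝ} (hT : 0 < T)
    {d : Fin m → ℝ} (hd : ∀ i, 0 < d i)
    {J : Fin m → (Fin N → ℝ) → (Fin N → ℝ) → ℝ}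
    (hJcont : ∀ i, Continuous (Function.uncurry (J i)))
    (hJnn : ∀ i x y, 0 ≤ J i x y)
    {ℓ : Fin m → Fin m → (Fin N → ℝ) → ℝ → ℝ}
    (hL1 : ∀ i k, i ≠ k → ∀ x ∈ closure Ω, ∀ t ∈ Icc (0:ℝ) T, 0 ≤ ℓ i k x t)
    {β : ℝ} {φ φt : Fin m → (Fin N → ℝ) → ℝ → ℝ}
    (hφcont : ∀ i, ContinuousOn (fun q : (Fin N → ℝ) × ℝ => φ i q.1 q.2)
      (closure Ω ×ˢ Icc (0:ℝ) T))
    (hφderiv : ∀ i, ∀ x ∈ closure Ω, ∀ t ∈ Icc (0:ℝ) T,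
      HasDerivWithinAt (φ i x) (φt i x t) (Icc (0:ℝ) T) t)
    (hφpos : ∀ i, ∀ x ∈ closure Ω, ∀ t ∈ Icc (0:ℝ) T, 0 < φ i x t)
    (hLφ : ∀ i, ∀ x ∈ closure Ω, ∀ t ∈ Icc (0:ℝ) T,
      d i * (∫ y in Ω, J i x y * φ i y t)
        + (∑ k, ℓ i k x t * φ k x t) - φt i x t ≤ β * φ i x t)
    {v vt : Fin m → (Fin N → ℝ) → ℝ → ℝ}
    (hvcont : ∀ i, ContinuousOn (fun q : (Fin N → ℝ) × ℝ => v i q.1 q.2)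
      (closure Ω ×ˢ Icc (0:ℝ) T))
    (hvderiv : ∀ i, ∀ x ∈ closure Ω, ∀ t ∈ Icc (0:ℝ) T,
      HasDerivWithinAt (v i x) (vt i x t) (Icc (0:ℝ) T) t)
    (hpde : ∀ i, ∀ x ∈ closure Ω, ∀ t ∈ Ioc (0:ℝ) T,
      vt i x t = d i * (∫ y in Ω, J i x y * v i y t) + ∑ k, ℓ i k x t * v k x t)
    {K : ℝ} (hK : 0 ≤ K)
    (hinit : ∀ i, ∀ x ∈ closure Ω, v i x 0 ≤ K * φ i x 0)
    {ε : ℝ} (hε : 0 < ε) :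
    ∀ i, ∀ x ∈ closure Ω, ∀ t ∈ Icc (0:ℝ) T,
      v i x t ≤ (K + ε) * (Real.exp ((β + ε) * t) * φ i x t) := by
  classical
  set C := closure Ω with hC
  set Kc : Set ((Fin N → ℝ) × ℝ) := C ×ˢ Icc (0:ℝ) T with hKc
  have hCcomp : IsCompact C := hΩbdd.isCompact_closure
  have hKcomp : IsCompact Kc := hCcomp.prod isCompact_Icc
  have hKclosed : IsClosed Kc := (isClosed_closure).prod isClosed_Icc
  -- the difference function
  set w : Fin m → (Fin N → ℝ) → ℝ → ℝ :=
    fun i x t => v i x t - (K + ε) * (Real.exp ((β + ε) * t) * φ i x t) with hw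
  have hwcont : ∀ i, ContinuousOn (fun q : (Fin N → ℝ) × ℝ => w i q.1 q.2) Kc := by
    intro i
    exact (hvcont i).sub (continuousOn_const.mul
      (((Real.continuous_exp.comp (continuous_const.mul continuous_snd)).continuousOn).mul
        (hφcont i)))
  -- derivative of w
  set Dw : Fin m → (Fin N → ℝ) → ℝ → ℝ := fun i x t =>
    vt i x t - (K + ε) * ((β + ε) * Real.exp ((β + ε) * t) * φ i x t
      + Real.exp ((β + ε) * t) * φt i x t) with hDw
  have hwder : ∀ i, ∀ x ∈ C, ∀ t ∈ Icc (0:ℝ) T,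
      HasDerivWithinAt (w i x) (Dw i x t) (Icc (0:ℝ) T) t := by
    intro i x hx t ht
    have hexp : HasDerivWithinAt (fun s : ℝ => Real.exp ((β + ε) * s))
        ((β + ε) * Real.exp ((β + ε) * t)) (Icc (0:ℝ) T) t := by
      have h := ((Real.hasDerivAt_exp ((β + ε) * t)).comp t
        ((hasDerivAt_id t).const_mul (β + ε))).hasDerivWithinAt
        (s := Icc (0:ℝ) T)
      have he : (β + ε) * Real.exp ((β + ε) * t)
          = Real.exp ((β + ε) * t) * ((β + ε) * 1) := by ring
      rw [he]
      exact h
    have hmul := hexp.mul (hφderiv i x hx t ht)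
    exact (hvderiv i x hx t ht).sub (hmul.const_mul (K + ε))
  -- main claim via contradiction
  by_contra hcon
  push_neg at hcon
  obtain ⟨i₁, x₁, hx₁, t₁, ht₁, hlt₁⟩ := hcon
  -- the "bad" set
  set S : Set ((Fin N → ℝ) × ℝ) :=
    ⋃ i, (Kc ∩ (fun q : (Fin N → ℝ) × ℝ => w i q.1 q.2) ⁻¹' (Ici 0)) with hS
  have hSclosed : IsClosed S :=
    isClosed_iUnion_of_finite fun i =>
      (hwcont i).preimage_isClosed_of_isClosed hKclosed isClosed_Ici
  have hSsub : S ⊆ Kc := by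
    intro q hq; simp only [hS, mem_iUnion] at hq; obtain ⟨i, hi, _⟩ := hq; exact hi
  have hScomp : IsCompact S := hKcomp.of_isClosed_subset hSclosed hSsub
  have hSne : S.Nonempty := by
    refine ⟨(x₁, t₁), ?_⟩
    simp only [hS, mem_iUnion]
    exact ⟨i₁, ⟨hx₁, ht₁⟩, by simp [w, sub_nonneg.2 hlt₁.le]⟩
  obtain ⟨qS, hqSS, hqSmin⟩ := hScomp.exists_isMinOn hSne continuous_snd.continuousOn
  set x₀ := qS.1 with hx₀def
  set tS := qS.2 with htSdef
  have hqSmem : qS ∈ Kc := hSsub hqSS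
  have hx₀C : x₀ ∈ C := hqSmem.1
  have htSIcc : tS ∈ Icc (0:ℝ) T := hqSmem.2
  obtain ⟨i₀, hi₀⟩ : ∃ i, 0 ≤ w i x₀ tS := by
    have := hqSS; simp only [hS, mem_iUnion] at this
    obtain ⟨i, _, h2⟩ := this; exact ⟨i, h2⟩
  -- tS > 0
  have htSpos : 0 < tS := by
    rcases lt_or_eq_of_le htSIcc.1 with h | h
    · exact h
    · exfalso
      have h0 : w i₀ x₀ 0 < 0 := by
        have hφp := hφpos i₀ x₀ hx₀C 0 ⟨le_refl 0, hT.le⟩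
        have := hinit i₀ x₀ hx₀C
        simp only [w, mul_zero, Real.exp_zero, one_mul]
        nlinarith
      rw [← h] at hi₀
      linarith
  -- before tS everything is negative
  have hbefore : ∀ s, 0 ≤ s → s < tS → ∀ x ∈ C, ∀ i, w i x s < 0 := by
    intro s hs0 hst x hx i
    by_contra hge
    push_neg at hge
    have hsmem : (x, s) ∈ S := by
      simp only [hS, mem_iUnion]
      exact ⟨i, ⟨hx, ⟨hs0, le_trans hst.le htSIcc.2⟩⟩, hge⟩
    exact absurd (hqSmin hsmem) (not_le.2 hst)
  -- at tS everything is ≤ 0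
  have hatt : ∀ x ∈ C, ∀ i, w i x tS ≤ 0 := by
    intro x hx i
    have hcw : ContinuousWithinAt (w i x) (Icc (0:ℝ) T) tS :=
      (hwder i x hx tS htSIcc).continuousWithinAt
    have hsub : Ico (0:ℝ) tS ⊆ Icc (0:ℝ) T :=
      fun s hs => ⟨hs.1, le_trans hs.2.le htSIcc.2⟩
    have htend : Tendsto (w i x) (nhdsWithin tS (Ico (0:ℝ) tS)) (nhds (w i x tS)) :=
      hcw.tendsto.mono_left (nhdsWithin_mono _ hsub)
    haveI : (nhdsWithin tS (Ico (0:ℝ) tS)).NeBot := by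
      rw [nhdsWithin_Ico_eq_nhdsLT htSpos]
      exact nhdsLT_neBot tS
    refine le_of_tendsto htend ?_
    exact eventually_nhdsWithin_of_forall fun s hs =>
      (hbefore s hs.1 hs.2 x hx i).le
  have heq : w i₀ x₀ tS = 0 := le_antisymm (hatt x₀ hx₀C i₀) hi₀
  set E := Real.exp ((β + ε) * tS) with hE
  have hEpos : 0 < E := Real.exp_pos _
  have hKε : 0 < K + ε := by linarith
  -- derivative at the touching point is negative
  have hDneg : Dw i₀ x₀ tS < 0 := by
    have htSIoc : tS ∈ Ioc (0:ℝ) T := ⟨htSpos, htSIcc.2⟩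
    have hpde' := hpde i₀ x₀ hx₀C tS htSIoc
    -- integrability
    have hcontJv : ContinuousOn (fun y => J i₀ x₀ y * v i₀ y tS) C := by
      refine (((hJcont i₀).comp (continuous_const.prodMk continuous_id)).continuousOn).mul ?_
      exact (hvcont i₀).comp (continuous_id.prodMk continuous_const).continuousOn
        (fun y hy => ⟨hy, htSIcc⟩)
    have hcontJφ : ContinuousOn (fun y => J i₀ x₀ y * ((K + ε) * (E * φ i₀ y tS))) C := by
      refine (((hJcont i₀).comp (continuous_const.prodMk continuous_id)).continuousOn).mul ?_
      refine continuousOn_const.mul (continuousOn_const.mul ?_)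
      exact (hφcont i₀).comp (continuous_id.prodMk continuous_const).continuousOn
        (fun y hy => ⟨hy, htSIcc⟩)
    have hint1 : IntegrableOn (fun y => J i₀ x₀ y * v i₀ y tS) Ω volume :=
      (hcontJv.integrableOn_compact hCcomp).mono_set subset_closure
    have hint2 : IntegrableOn (fun y => J i₀ x₀ y * ((K + ε) * (E * φ i₀ y tS))) Ω volume :=
      (hcontJφ.integrableOn_compact hCcomp).mono_set subset_closure
    have hIle : (∫ y in Ω, J i₀ x₀ y * v i₀ y tS)
        ≤ ∫ y in Ω, J i₀ x₀ y * ((K + ε) * (E * φ i₀ y tS)) := by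
      refine setIntegral_mono_on hint1 hint2 hΩopen.measurableSet ?_
      intro y hy
      have hyC : y ∈ C := subset_closure hy
      have := hatt y hyC i₀
      have hvle : v i₀ y tS ≤ (K + ε) * (E * φ i₀ y tS) := by
        simpa [w, hE, sub_nonpos] using this
      exact mul_le_mul_of_nonneg_left hvle (hJnn i₀ x₀ y)
    have hIeq : (∫ y in Ω, J i₀ x₀ y * ((K + ε) * (E * φ i₀ y tS)))
        = (K + ε) * E * ∫ y in Ω, J i₀ x₀ y * φ i₀ y tS := by
      rw [show (fun y => J i₀ x₀ y * ((K + ε) * (E * φ i₀ y tS)))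
          = fun y => ((K + ε) * E) * (J i₀ x₀ y * φ i₀ y tS) from funext fun y => by ring]
      exact integral_const_mul _ _
    -- sum bound
    have hsum : (∑ k, ℓ i₀ k x₀ tS * v k x₀ tS)
        ≤ ∑ k, ℓ i₀ k x₀ tS * ((K + ε) * (E * φ k x₀ tS)) := by
      refine Finset.sum_le_sum fun k _ => ?_
      by_cases hk : k = i₀
      · subst hk
        have : v k x₀ tS = (K + ε) * (E * φ k x₀ tS) := by
          have := heq; simp only [w, hE, sub_eq_zero] at this; exact this
        rw [this]
      · have hvle : v k x₀ tS ≤ (K + ε) * (E * φ k x₀ tS) := by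
          simpa [w, hE, sub_nonpos] using hatt x₀ hx₀C k
        exact mul_le_mul_of_nonneg_left hvle
          (hL1 i₀ k (fun h => hk h.symm) x₀ hx₀C tS htSIcc)
    have hsumeq : (∑ k, ℓ i₀ k x₀ tS * ((K + ε) * (E * φ k x₀ tS)))
        = (K + ε) * E * ∑ k, ℓ i₀ k x₀ tS * φ k x₀ tS := by
      rw [Finset.mul_sum]
      exact Finset.sum_congr rfl fun k _ => by ring
    -- combine
    have hvt : vt i₀ x₀ tS
        ≤ (K + ε) * E * ((d i₀ * ∫ y in Ω, J i₀ x₀ y * φ i₀ y tS)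
            + ∑ k, ℓ i₀ k x₀ tS * φ k x₀ tS) := by
      rw [hpde']
      have h1 : d i₀ * (∫ y in Ω, J i₀ x₀ y * v i₀ y tS)
          ≤ d i₀ * ((K + ε) * E * ∫ y in Ω, J i₀ x₀ y * φ i₀ y tS) := by
        rw [← hIeq]
        exact mul_le_mul_of_nonneg_left hIle (hd i₀).le
      have h2 := le_trans hsum (le_of_eq hsumeq)
      calc d i₀ * (∫ y in Ω, J i₀ x₀ y * v i₀ y tS) + ∑ k, ℓ i₀ k x₀ tS * v k x₀ tS
          ≤ d i₀ * ((K + ε) * E * ∫ y in Ω, J i₀ x₀ y * φ i₀ y tS)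
            + (K + ε) * E * ∑ k, ℓ i₀ k x₀ tS * φ k x₀ tS := add_le_add h1 h2
        _ = (K + ε) * E * ((d i₀ * ∫ y in Ω, J i₀ x₀ y * φ i₀ y tS)
            + ∑ k, ℓ i₀ k x₀ tS * φ k x₀ tS) := by ring
    have hLφ' := hLφ i₀ x₀ hx₀C tS htSIcc
    have hφp := hφpos i₀ x₀ hx₀C tS htSIcc
    have hvt2 : vt i₀ x₀ tS ≤ (K + ε) * E * (β * φ i₀ x₀ tS + φt i₀ x₀ tS) := by
      refine le_trans hvt (mul_le_mul_of_nonneg_left ?_ (by positivity))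
      linarith
    simp only [hDw]
    nlinarith [mul_pos (mul_pos hKε hEpos) (mul_pos hε hφp)]
  -- slope contradiction
  have hsub2 : Ico (0:ℝ) tS ⊆ Icc (0:ℝ) T :=
    fun s hs => ⟨hs.1, le_trans hs.2.le htSIcc.2⟩
  have hder : HasDerivWithinAt (w i₀ x₀) (Dw i₀ x₀ tS) (Ico (0:ℝ) tS) tS :=
    (hwder i₀ x₀ hx₀C tS htSIcc).mono hsub2
  rw [hasDerivWithinAt_iff_tendsto_slope] at hder
  have hdiff : Ico (0:ℝ) tS \ {tS} = Ico (0:ℝ) tS := by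
    apply diff_singleton_eq_self
    simp
  rw [hdiff] at hder
  haveI : (nhdsWithin tS (Ico (0:ℝ) tS)).NeBot := by
    rw [nhdsWithin_Ico_eq_nhdsLT htSpos]
    exact nhdsLT_neBot tS
  have hDnn : 0 ≤ Dw i₀ x₀ tS := by
    refine ge_of_tendsto hder ?_
    refine eventually_nhdsWithin_of_forall fun s hs => ?_
    have hws : w i₀ x₀ s ≤ 0 := (hbefore s hs.1 hs.2 x₀ hx₀C i₀).le
    rw [slope_def_field, heq, sub_zero]
    exact div_nonneg_iff.2 (Or.inr ⟨hws, by linarith [hs.2]⟩)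
  linarith

/-- upper bound `r(P) ≤ e^{βT}` for the spectral radius of the period map. -/
theorem stmt_13 {N m : ℕ} (Ω : Set (Fin N → ℝ)) (hΩne : Ω.Nonempty)
    (hΩopen : IsOpen Ω) (hΩbdd : Bornology.IsBounded Ω)
    (T : ℝ) (hT : 0 < T)
    (d : Fin m → ℝ) (hd : ∀ i, 0 < d i)
    -- each kernel Jᵢ satisfies condition (J)
    (J : Fin m → (Fin N → ℝ) → (Fin N → ℝ) → ℝ)
    (hJcont : ∀ i, Continuous (Function.uncurry (J i)))
    (hJnn : ∀ i x y, 0 ≤ J i x y)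
    (hJdiag : ∀ i x, 0 < J i x x)
    (hJint : ∀ i x, (∫ y, J i x y) = 1)
    -- coefficients ℓ_ik ∈ C(Q̄_T) satisfying (L1)
    (ℓ : Fin m → Fin m → (Fin N → ℝ) → ℝ → ℝ)
    (hℓcont : ∀ i k, ContinuousOn (fun q : (Fin N → ℝ) × ℝ => ℓ i k q.1 q.2)
      (closure Ω ×ˢ Icc (0:ℝ) T))
    (hL1 : ∀ i k, i ≠ k → ∀ x ∈ closure Ω, ∀ t ∈ Icc (0:ℝ) T, 0 ≤ ℓ i k x t)
    -- P is the period-T solution map on C(Ω̄, ℝ^m) (with the sup norm)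
    (P : BoundedContinuousFunction (↥(closure Ω)) (Fin m → ℝ) →L[ℝ] BoundedContinuousFunction (↥(closure Ω)) (Fin m → ℝ))
    (hP : ∀ v₀ : BoundedContinuousFunction (↥(closure Ω)) (Fin m → ℝ),
      ∃ v vt : Fin m → (Fin N → ℝ) → ℝ → ℝ,
        (∀ i, ContinuousOn (fun q : (Fin N → ℝ) × ℝ => v i q.1 q.2)
          (closure Ω ×ˢ Icc (0:ℝ) T)) ∧
        (∀ i, ∀ x ∈ closure Ω, ∀ t ∈ Icc (0:ℝ) T,
          HasDerivWithinAt (v i x) (vt i x t) (Icc (0:ℝ) T) t) ∧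
        (∀ i, ∀ x ∈ closure Ω, ContinuousOn (vt i x) (Icc (0:ℝ) T)) ∧
        (∀ i, ∀ x ∈ closure Ω, ∀ t ∈ Ioc (0:ℝ) T,
          vt i x t = d i * (∫ y in Ω, J i x y * v i y t)
            + ∑ k, ℓ i k x t * v k x t) ∧
        (∀ x : ↥(closure Ω), ∀ i, v i (↑x) 0 = v₀ x i) ∧
        (∀ x : ↥(closure Ω), ∀ i, P v₀ x i = v i (↑x) T))
    -- the test function φ ∈ X^m and the number β
    (β : ℝ) (φ φt : Fin m → (Fin N → ℝ) → ℝ → ℝ)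
    (hφcont : ∀ i, ContinuousOn (fun q : (Fin N → ℝ) × ℝ => φ i q.1 q.2)
      (closure Ω ×ˢ Icc (0:ℝ) T))
    (hφderiv : ∀ i, ∀ x ∈ closure Ω, ∀ t ∈ Icc (0:ℝ) T,
      HasDerivWithinAt (φ i x) (φt i x t) (Icc (0:ℝ) T) t)
    (hφtcont : ∀ i, ∀ x ∈ closure Ω, ContinuousOn (φt i x) (Icc (0:ℝ) T))
    (hφpos : ∀ i, ∀ x ∈ closure Ω, ∀ t ∈ Icc (0:ℝ) T, 0 < φ i x t)
    -- 𝓛[φ] ≤ βφ on Q̄_T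
    (hLφ : ∀ i, ∀ x ∈ closure Ω, ∀ t ∈ Icc (0:ℝ) T,
      d i * (∫ y in Ω, J i x y * φ i y t)
        + (∑ k, ℓ i k x t * φ k x t) - φt i x t ≤ β * φ i x t)
    (hφT : ∀ i, ∀ x ∈ closure Ω, φ i x T ≤ φ i x 0) :
    ∀ r : ℝ,
      Tendsto (fun n : ℕ => ‖P ^ n‖ ^ (1 / (n:ℝ))) atTop (nhds r) →
      r ≤ Real.exp (β * T) := by
  classical
  intro r hr
  by_cases hm : m = 0
  · -- degenerate case: the target space is trivial
    have h0 : ∀ f : BoundedContinuousFunction (↥(closure Ω)) (Fin m → ℝ), ‖f‖ = 0 := by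
      intro f
      refine le_antisymm ?_ (norm_nonneg _)
      refine (BoundedContinuousFunction.norm_le le_rfl).2 fun x => ?_
      have : f x = 0 := by
        subst hm; exact Subsingleton.elim _ _
      simp [this]
    have hnorm0 : ∀ n : ℕ, ‖P ^ n‖ = 0 := by
      intro n
      refine le_antisymm ?_ (ContinuousLinearMap.opNorm_nonneg _)
      refine ContinuousLinearMap.opNorm_le_bound _ le_rfl fun f => ?_
      rw [h0, h0]
      norm_num
    have hr0 : Tendsto (fun _ : ℕ => (0:ℝ)) atTop (nhds r) := by
      refine hr.congr' ?_
      filter_upwards [eventually_ge_atTop 1] with n hn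
      rw [hnorm0 n]
      rw [Real.zero_rpow]
      · positivity
    have : r = 0 := tendsto_nhds_unique hr0 tendsto_const_nhds
    rw [this]
    positivity
  · haveI : Nonempty (Fin m) := ⟨⟨0, Nat.pos_of_ne_zero hm⟩⟩
    have hCne : (closure Ω).Nonempty := hΩne.mono subset_closure
    obtain ⟨x₀, hx₀⟩ := hCne
    have hKcomp : IsCompact ((closure Ω) ×ˢ Icc (0:ℝ) T) :=
      hΩbdd.isCompact_closure.prod isCompact_Icc
    have hKne : ((closure Ω) ×ˢ Icc (0:ℝ) T).Nonempty := ⟨(x₀, 0), hx₀, le_rfl, hT.le⟩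
    -- uniform positive lower bound c for φ
    have hminex : ∀ i : Fin m, ∃ cc : ℝ, 0 < cc ∧
        ∀ x ∈ closure Ω, ∀ t ∈ Icc (0:ℝ) T, cc ≤ φ i x t := by
      intro i
      obtain ⟨q, hq, hqmin⟩ := hKcomp.exists_isMinOn hKne (hφcont i)
      exact ⟨φ i q.1 q.2, hφpos i q.1 hq.1 q.2 hq.2,
        fun x hx t ht => hqmin (⟨hx, ht⟩ : (x, t) ∈ (closure Ω) ×ˢ Icc (0:ℝ) T)⟩
    choose cf hcfpos hcf using hminex
    obtain ⟨imin, -, himin⟩ := Finset.exists_min_image Finset.univ cf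
      ⟨Classical.arbitrary (Fin m), Finset.mem_univ _⟩
    set c := cf imin with hcdef
    have hcpos : 0 < c := hcfpos imin
    have hcle : ∀ i, ∀ x ∈ closure Ω, ∀ t ∈ Icc (0:ℝ) T, c ≤ φ i x t :=
      fun i x hx t ht => le_trans (himin i (Finset.mem_univ i)) (hcf i x hx t ht)
    -- uniform upper bound Φ for φ
    have hmaxex : ∀ i : Fin m, ∃ cc : ℝ,
        ∀ x ∈ closure Ω, ∀ t ∈ Icc (0:ℝ) T, φ i x t ≤ cc := by
      intro i
      obtain ⟨q, -, hqmax⟩ := hKcomp.exists_isMaxOn hKne (hφcont i)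
      exact ⟨φ i q.1 q.2, fun x hx t ht =>
        hqmax (⟨hx, ht⟩ : (x, t) ∈ (closure Ω) ×ˢ Icc (0:ℝ) T)⟩
    choose Cf hCf using hmaxex
    obtain ⟨imax, -, himax⟩ := Finset.exists_max_image Finset.univ Cf
      ⟨Classical.arbitrary (Fin m), Finset.mem_univ _⟩
    set Φ := Cf imax with hΦdef
    have hΦle : ∀ i, ∀ x ∈ closure Ω, ∀ t ∈ Icc (0:ℝ) T, φ i x t ≤ Φ :=
      fun i x hx t ht => le_trans (hCf i x hx t ht) (himax i (Finset.mem_univ i))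
    have hΦpos : 0 < Φ :=
      lt_of_lt_of_le hcpos (le_trans
        (hcle (Classical.arbitrary _) x₀ hx₀ 0 ⟨le_rfl, hT.le⟩)
        (hΦle (Classical.arbitrary _) x₀ hx₀ 0 ⟨le_rfl, hT.le⟩))
    -- one application of P
    have hstep : ∀ (u : BoundedContinuousFunction (↥(closure Ω)) (Fin m → ℝ)) (K : ℝ),
        0 ≤ K → (∀ x : ↥(closure Ω), ∀ i, |u x i| ≤ K * φ i (↑x) 0) →
        ∀ x : ↥(closure Ω), ∀ i, |P u x i| ≤ (K * Real.exp (β * T)) * φ i (↑x) 0 := by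
      intro u K hK hu x i
      obtain ⟨v, vt, hvcont, hvderiv, hvtcont, hpde, hv0, hvT⟩ := hP u
      have hinit : ∀ j, ∀ y ∈ closure Ω, v j y 0 ≤ K * φ j y 0 := by
        intro j y hy
        rw [hv0 ⟨y, hy⟩ j]
        exact le_trans (le_abs_self _) (hu ⟨y, hy⟩ j)
      have hinitneg : ∀ j, ∀ y ∈ closure Ω, -(v j y 0) ≤ K * φ j y 0 := by
        intro j y hy
        rw [hv0 ⟨y, hy⟩ j]
        exact le_trans (neg_le_abs _) (hu ⟨y, hy⟩ j)
      have hpdeneg : ∀ j, ∀ y ∈ closure Ω, ∀ t ∈ Ioc (0:ℝ) T,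
          -(vt j y t) = d j * (∫ z in Ω, J j y z * -(v j z t)) + ∑ k, ℓ j k y t * -(v k y t) := by
        intro j y hy t ht
        have hI : (∫ z in Ω, J j y z * -(v j z t)) = -(∫ z in Ω, J j y z * v j z t) := by
          rw [← integral_neg]
          congr 1; funext z; ring
        rw [hI, hpde j y hy t ht]
        simp only [mul_neg, Finset.sum_neg_distrib]
        ring
      have hxC : (↑x : Fin N → ℝ) ∈ closure Ω := x.2
      have hTmem : T ∈ Icc (0:ℝ) T := ⟨hT.le, le_rfl⟩
      have habs : ∀ ε : ℝ, 0 < ε →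
          |v i (↑x) T| ≤ (K + ε) * (Real.exp ((β + ε) * T) * φ i (↑x) T) := by
        intro ε hε
        have hup := stmt13_comparison hΩopen hΩbdd hT hd hJcont hJnn hL1
          hφcont hφderiv hφpos hLφ hvcont hvderiv hpde hK hinit hε i (↑x) hxC T hTmem
        have hdown := stmt13_comparison (v := fun j y t => -(v j y t))
          (vt := fun j y t => -(vt j y t)) hΩopen hΩbdd hT hd hJcont hJnn hL1
          hφcont hφderiv hφpos hLφ
          (fun j => (hvcont j).neg)
          (fun j y hy t ht => (hvderiv j y hy t ht).neg)
          hpdeneg hK hinitneg hε i (↑x) hxC T hTmem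
        have hdown' : -(v i (↑x) T) ≤ (K + ε) * (Real.exp ((β + ε) * T) * φ i (↑x) T) := hdown
        rw [abs_le]
        constructor
        · linarith
        · exact hup
      have hlim : |v i (↑x) T| ≤ K * Real.exp (β * T) * φ i (↑x) T := by
        have htend : Tendsto (fun ε : ℝ => (K + ε) * (Real.exp ((β + ε) * T) * φ i (↑x) T))
            (nhdsWithin 0 (Ioi 0))
            (nhds ((K + 0) * (Real.exp ((β + 0) * T) * φ i (↑x) T))) := by
          refine Tendsto.mono_left ?_ nhdsWithin_le_nhds
          exact Continuous.tendsto (by fun_prop) 0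
        have := ge_of_tendsto htend
          (eventually_nhdsWithin_of_forall fun ε hε => habs ε hε)
        simpa [mul_assoc] using this
      have : P u x i = v i (↑x) T := hvT x i
      rw [this]
      calc |v i (↑x) T| ≤ K * Real.exp (β * T) * φ i (↑x) T := hlim
        _ ≤ K * Real.exp (β * T) * φ i (↑x) 0 :=
          mul_le_mul_of_nonneg_left (hφT i (↑x) hxC) (by positivity)
    -- iteration
    set A := Real.exp (β * T) with hAdef
    have hApos : 0 < A := Real.exp_pos _
    have hiter : ∀ (v₀ : BoundedContinuousFunction (↥(closure Ω)) (Fin m → ℝ)) (n : ℕ),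
        ∀ x : ↥(closure Ω), ∀ i, |((P ^ n) v₀) x i| ≤ (‖v₀‖ / c * A ^ n) * φ i (↑x) 0 := by
      intro v₀ n
      induction n with
      | zero =>
        intro x i
        rw [pow_zero, ContinuousLinearMap.one_apply]
        have h1 : |v₀ x i| ≤ ‖v₀‖ := by
          rw [← Real.norm_eq_abs]
          exact le_trans (norm_le_pi_norm (v₀ x) i) (v₀.norm_coe_le_norm x)
        have h2 : ‖v₀‖ = (‖v₀‖ / c) * c := by field_simp
        calc |v₀ x i| ≤ ‖v₀‖ := h1
          _ = (‖v₀‖ / c) * c := h2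
          _ ≤ (‖v₀‖ / c) * φ i (↑x) 0 :=
            mul_le_mul_of_nonneg_left (hcle i (↑x) x.2 0 ⟨le_rfl, hT.le⟩)
              (by positivity)
          _ = (‖v₀‖ / c * A ^ 0) * φ i (↑x) 0 := by rw [pow_zero, mul_one]
      | succ n ih =>
        intro x i
        have h := hstep ((P ^ n) v₀) (‖v₀‖ / c * A ^ n) (by positivity) ih x i
        have hps : (P ^ (n + 1)) v₀ = P ((P ^ n) v₀) := by
          rw [pow_succ', ContinuousLinearMap.mul_apply]
        rw [hps]
        calc |P ((P ^ n) v₀) x i| ≤ (‖v₀‖ / c * A ^ n * A) * φ i (↑x) 0 := h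
          _ = (‖v₀‖ / c * A ^ (n + 1)) * φ i (↑x) 0 := by rw [pow_succ]; ring
    -- operator norm bound
    have hbound : ∀ n : ℕ, ‖P ^ n‖ ≤ (Φ / c) * A ^ n := by
      intro n
      refine ContinuousLinearMap.opNorm_le_bound _ (by positivity) fun v₀ => ?_
      refine (BoundedContinuousFunction.norm_le (by positivity)).2 fun x => ?_
      refine (pi_norm_le_iff_of_nonneg (by positivity)).2 fun i => ?_
      rw [Real.norm_eq_abs]
      calc |((P ^ n) v₀) x i| ≤ (‖v₀‖ / c * A ^ n) * φ i (↑x) 0 := hiter v₀ n x i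
        _ ≤ (‖v₀‖ / c * A ^ n) * Φ :=
          mul_le_mul_of_nonneg_left (hΦle i (↑x) x.2 0 ⟨le_rfl, hT.le⟩) (by positivity)
        _ = (Φ / c) * A ^ n * ‖v₀‖ := by ring
    -- pass to the limit
    set B := max (Φ / c) 1 with hBdef
    have hB1 : (1:ℝ) ≤ B := le_max_right _ _
    have hBpos : (0:ℝ) < B := lt_of_lt_of_le one_pos hB1
    have hbound' : ∀ n : ℕ, ‖P ^ n‖ ≤ B * A ^ n := fun n =>
      le_trans (hbound n) (mul_le_mul_of_nonneg_right (le_max_left _ _) (by positivity))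
    have hfle : ∀ n : ℕ, 1 ≤ n → ‖P ^ n‖ ^ (1 / (n:ℝ)) ≤ B ^ (1 / (n:ℝ)) * A := by
      intro n hn
      have hn' : (0:ℝ) < n := by exact_mod_cast hn
      have h1 : ‖P ^ n‖ ^ (1 / (n:ℝ)) ≤ (B * A ^ n) ^ (1 / (n:ℝ)) :=
        Real.rpow_le_rpow (ContinuousLinearMap.opNorm_nonneg _) (hbound' n) (by positivity)
      have h2 : (B * A ^ n : ℝ) ^ (1 / (n:ℝ))
          = B ^ (1 / (n:ℝ)) * ((A ^ n : ℝ)) ^ (1 / (n:ℝ)) :=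
        Real.mul_rpow (by positivity) (by positivity)
      have h3 : ((A ^ n : ℝ)) ^ (1 / (n:ℝ)) = A := by
        rw [← Real.rpow_natCast A n, ← Real.rpow_mul hApos.le]
        rw [mul_one_div, div_self (ne_of_gt hn'), Real.rpow_one]
      rw [h2, h3] at h1
      exact h1
    have htendB : Tendsto (fun n : ℕ => B ^ (1 / (n:ℝ)) * A) atTop (nhds (1 * A)) := by
      have h1 : Tendsto (fun n : ℕ => Real.log B * (1 / (n:ℝ))) atTop (nhds 0) := by
        simpa using tendsto_one_div_atTop_nhds_zero_nat.const_mul (Real.log B)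
      have h2 : Tendsto (fun n : ℕ => Real.exp (Real.log B * (1 / (n:ℝ)))) atTop
          (nhds (Real.exp 0)) := (Real.continuous_exp.tendsto 0).comp h1
      have h3 := h2.mul_const A
      simp only [Real.exp_zero] at h3
      refine h3.congr fun n => ?_
      rw [Real.rpow_def_of_pos hBpos]
    have hfin : r ≤ 1 * A :=
      le_of_tendsto_of_tendsto hr htendB
        (eventually_atTop.2 ⟨1, fun n hn => hfle n hn⟩)
    simpa [hAdef] using hfin
end

section
/- Assume (L1). Suppose λ ∈ ℝ and φ ∈ X^m_T with φ_i(x,t) > 0 for all (x,t) ∈ Q̄_T and all i satisfy 𝓛[φ] = λφ on Q̄_T. Suppose further there exist x̄ ∈ Ω̄, θ_M ∈ ℝ, and ψ = (ψ_1,…,ψ_m) : [0,T] → ℝ^m continuously differentiable, with ψ ≥ 0, ψ ≢ 0, ψ(0) = ψ(T), satisfying the adjoint equation Σ_{k=1}^m ℓ_{ki}(x̄,t) ψ_k(t) + ψ_i'(t) = θ_M ψ_i(t) for all i and all t ∈ [0,T]. Then λ > θ_M. -/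
open MeasureTheory Set Function

/-- An m×m real matrix is irreducible if the index set cannot be split into two
disjoint nonempty parts `I`, `Iᶜ` with `a i k = 0` for all `i ∈ I`, `k ∈ Iᶜ`. -/
def MatIrreducible {m : ℕ} (a : Fin m → Fin m → ℝ) : Prop :=
  ∀ I : Set (Fin m), I.Nonempty → Iᶜ.Nonempty → ∃ i ∈ I, ∃ k ∈ Iᶜ, a i k ≠ 0

/-- if 𝓛 has a principal eigenpair (λ, φ) with φ strongly positive,
then λ is strictly larger than any Floquet exponent θ_M admitting a nonnegative
nontrivial periodic solution of the adjoint ODE at some point x̄. -/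
theorem stmt_15 {N m : ℕ} (Ω : Set (Fin N → ℝ)) (hΩne : Ω.Nonempty)
    (hΩopen : IsOpen Ω) (hΩbdd : Bornology.IsBounded Ω)
    (T : ℝ) (hT : 0 < T)
    (d : Fin m → ℝ) (hd : ∀ i, 0 < d i)
    -- each kernel Jᵢ satisfies condition (J)
    (J : Fin m → (Fin N → ℝ) → (Fin N → ℝ) → ℝ)
    (hJcont : ∀ i, Continuous (Function.uncurry (J i)))
    (hJnn : ∀ i x y, 0 ≤ J i x y)
    (hJdiag : ∀ i x, 0 < J i x x)
    (hJint : ∀ i x, (∫ y, J i x y) = 1)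
    -- coefficients ℓ_ik ∈ C(Q̄_T)
    (ℓ : Fin m → Fin m → (Fin N → ℝ) → ℝ → ℝ)
    (hℓcont : ∀ i k, ContinuousOn (fun q : (Fin N → ℝ) × ℝ => ℓ i k q.1 q.2)
      (closure Ω ×ˢ Icc (0:ℝ) T))
    -- (L1): cooperativity
    (hL1 : ∀ i k, i ≠ k → ∀ x ∈ closure Ω, ∀ t ∈ Icc (0:ℝ) T, 0 ≤ ℓ i k x t)
    -- (λ, φ): principal eigenpair of 𝓛, φ ∈ X^m_T strongly positive
    (lam : ℝ) (φ φt : Fin m → (Fin N → ℝ) → ℝ → ℝ)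
    (hφcont : ∀ i, ContinuousOn (fun q : (Fin N → ℝ) × ℝ => φ i q.1 q.2)
      (closure Ω ×ˢ Icc (0:ℝ) T))
    (hφderiv : ∀ i, ∀ x ∈ closure Ω, ∀ t ∈ Icc (0:ℝ) T,
      HasDerivWithinAt (φ i x) (φt i x t) (Icc (0:ℝ) T) t)
    (hφtcont : ∀ i, ∀ x ∈ closure Ω, ContinuousOn (φt i x) (Icc (0:ℝ) T))
    (hφper : ∀ i, ∀ x ∈ closure Ω, φ i x 0 = φ i x T)
    (hφpos : ∀ i, ∀ x ∈ closure Ω, ∀ t ∈ Icc (0:ℝ) T, 0 < φ i x t)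
    (hφeq : ∀ i, ∀ x ∈ closure Ω, ∀ t ∈ Icc (0:ℝ) T,
      d i * (∫ y in Ω, J i x y * φ i y t) + (∑ k, ℓ i k x t * φ k x t)
        - φt i x t = lam * φ i x t)
    -- the adjoint periodic eigenfunction ψ at x̄ with exponent θ_M
    (xb : Fin N → ℝ) (hxb : xb ∈ closure Ω) (θM : ℝ)
    (ψ ψt : ℝ → Fin m → ℝ)
    (hψderiv : ∀ i, ∀ t ∈ Icc (0:ℝ) T,
      HasDerivWithinAt (fun s => ψ s i) (ψt t i) (Icc (0:ℝ) T) t)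
    (hψtcont : ∀ i, ContinuousOn (fun s => ψt s i) (Icc (0:ℝ) T))
    (hψnn : ∀ i, ∀ t ∈ Icc (0:ℝ) T, 0 ≤ ψ t i)
    (hψne : ∃ i, ∃ t ∈ Icc (0:ℝ) T, ψ t i ≠ 0)
    (hψper : ψ 0 = ψ T)
    (hψeq : ∀ i, ∀ t ∈ Icc (0:ℝ) T,
      (∑ k, ℓ k i xb t * ψ t k) + ψt t i = θM * ψ t i) :
    θM < lam := by
  by_contra hcon
  push_neg at hcon
  -- hcon : lam ≤ θM
  obtain ⟨i₀, t₀, ht₀, hψ₀ne⟩ := hψne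
  have hψ₀pos : 0 < ψ t₀ i₀ := lt_of_le_of_ne (hψnn i₀ t₀ ht₀) (Ne.symm hψ₀ne)
  have hclcomp : IsCompact (closure Ω) := hΩbdd.isCompact_closure
  -- the nonlocal term
  set F : Fin m → ℝ → ℝ := fun i t => d i * ∫ y in Ω, J i xb y * φ i y t with hF
  set W : ℝ → ℝ := fun t => ∑ i, ψ t i * φ i xb t with hW
  set R : ℝ → ℝ := fun t => ∑ i, ψ t i * F i t with hR
  -- nonnegativity of the integrals
  have hInn : ∀ i, ∀ t ∈ Icc (0:ℝ) T, 0 ≤ ∫ y in Ω, J i xb y * φ i y t := by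
    intro i t ht
    refine setIntegral_nonneg hΩopen.measurableSet fun y hy => ?_
    exact mul_nonneg (hJnn i xb y) (hφpos i y (subset_closure hy) t ht).le
  have hRnn : ∀ t ∈ Icc (0:ℝ) T, 0 ≤ R t := by
    intro t ht
    refine Finset.sum_nonneg fun i _ => mul_nonneg (hψnn i t ht) ?_
    exact mul_nonneg (hd i).le (hInn i t ht)
  -- derivative of W
  have hWd : ∀ t ∈ Icc (0:ℝ) T,
      HasDerivWithinAt W ((θM - lam) * W t + R t) (Icc (0:ℝ) T) t := by
    intro t ht
    have h1 : HasDerivWithinAt W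
        (∑ i, (ψt t i * φ i xb t + ψ t i * φt i xb t)) (Icc (0:ℝ) T) t := by
      refine HasDerivWithinAt.fun_sum fun i _ => ?_
      exact (hψderiv i t ht).mul (hφderiv i xb hxb t ht)
    have e1 : ∀ i, ψt t i = θM * ψ t i - ∑ k, ℓ k i xb t * ψ t k := by
      intro i; have := hψeq i t ht; linarith
    have e2 : ∀ i, φt i xb t
        = F i t + (∑ k, ℓ i k xb t * φ k xb t) - lam * φ i xb t := by
      intro i; have := hφeq i xb hxb t ht; simp only [hF]; linarith
    have key : (∑ i, (ψt t i * φ i xb t + ψ t i * φt i xb t))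
        = (θM - lam) * W t + R t := by
      have swap : ∑ i, (∑ k, ℓ k i xb t * ψ t k) * φ i xb t
          = ∑ i, ψ t i * ∑ k, ℓ i k xb t * φ k xb t := by
        simp_rw [Finset.sum_mul, Finset.mul_sum]
        rw [Finset.sum_comm]
        exact Finset.sum_congr rfl fun i _ => Finset.sum_congr rfl fun k _ => by ring
      calc (∑ i, (ψt t i * φ i xb t + ψ t i * φt i xb t))
          = ∑ i, (((θM - lam) * (ψ t i * φ i xb t) + ψ t i * F i t)
              + (ψ t i * ∑ k, ℓ i k xb t * φ k xb t
                - (∑ k, ℓ k i xb t * ψ t k) * φ i xb t)) := by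
            refine Finset.sum_congr rfl fun i _ => ?_
            rw [e1 i, e2 i]; ring
        _ = (θM - lam) * W t + R t := by
            rw [Finset.sum_add_distrib, Finset.sum_sub_distrib, ← swap, sub_self,
              add_zero, Finset.sum_add_distrib, ← Finset.mul_sum]
    exact key ▸ h1
  -- the auxiliary function V
  set V : ℝ → ℝ := fun t => Real.exp ((lam - θM) * t) * W t with hV
  have hVd : ∀ t ∈ Icc (0:ℝ) T,
      HasDerivWithinAt V (Real.exp ((lam - θM) * t) * R t) (Icc (0:ℝ) T) t := by
    intro t ht
    have hexp : HasDerivAt (fun s => Real.exp ((lam - θM) * s))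
        ((lam - θM) * Real.exp ((lam - θM) * t)) t := by
      simpa [mul_comm] using ((hasDerivAt_id t).const_mul (lam - θM)).exp
    have := hexp.hasDerivWithinAt.mul (hWd t ht)
    exact this.congr_deriv (by ring)
  have hVcont : ContinuousOn V (Icc (0:ℝ) T) :=
    fun t ht => (hVd t ht).continuousWithinAt
  have hVinter : ∀ t ∈ interior (Icc (0:ℝ) T),
      HasDerivAt V (Real.exp ((lam - θM) * t) * R t) t := by
    intro t ht
    rw [interior_Icc] at ht
    exact (hVd t ⟨ht.1.le, ht.2.le⟩).hasDerivAt (Icc_mem_nhds ht.1 ht.2)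
  have hVmono : MonotoneOn V (Icc (0:ℝ) T) := by
    refine monotoneOn_of_deriv_nonneg (convex_Icc 0 T) hVcont
      (fun t ht => (hVinter t ht).differentiableAt.differentiableWithinAt)
      (fun t ht => ?_)
    rw [(hVinter t ht).deriv]
    have ht' : t ∈ Icc (0:ℝ) T := by rw [interior_Icc] at ht; exact ⟨ht.1.le, ht.2.le⟩
    exact mul_nonneg (Real.exp_pos _).le (hRnn t ht')
  -- V T ≤ V 0
  have hW0 : 0 ≤ W 0 := by
    refine Finset.sum_nonneg fun i _ => mul_nonneg (hψnn i 0 ?_) ?_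
    · exact ⟨le_rfl, hT.le⟩
    · exact (hφpos i xb hxb 0 ⟨le_rfl, hT.le⟩).le
  have hWper : W T = W 0 := by
    refine Finset.sum_congr rfl fun i _ => ?_
    rw [← hψper, hφper i xb hxb]
  have hVT : V T ≤ V 0 := by
    rw [hV]
    simp only [mul_zero, Real.exp_zero, one_mul, hWper]
    refine mul_le_of_le_one_left hW0 ?_
    rw [Real.exp_le_one_iff]
    exact mul_nonpos_of_nonpos_of_nonneg (by linarith) hT.le
  -- V is constant on [0,T]
  have hVconst : ∀ t ∈ Icc (0:ℝ) T, V t = V 0 := by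
    intro t ht
    have h1 : V 0 ≤ V t := hVmono ⟨le_rfl, hT.le⟩ ht ht.1
    have h2 : V t ≤ V T := hVmono ht ⟨hT.le, le_rfl⟩ ht.2
    linarith
  -- hence the derivative at t₀ is zero
  have hzero : Real.exp ((lam - θM) * t₀) * R t₀ = 0 := by
    have hc : HasDerivWithinAt V 0 (Icc (0:ℝ) T) t₀ := by
      refine (hasDerivWithinAt_const t₀ _ (V 0)).congr (fun y hy => hVconst y hy) ?_
      exact hVconst t₀ ht₀
    have hud : UniqueDiffWithinAt ℝ (Icc (0:ℝ) T) t₀ := (uniqueDiffOn_Icc hT) t₀ ht₀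
    have := (hVd t₀ ht₀).derivWithin hud
    rw [hc.derivWithin hud] at this
    exact this.symm
  have hRt₀ : R t₀ = 0 := by
    have := (Real.exp_pos ((lam - θM) * t₀)).ne'
    exact (mul_eq_zero.1 hzero).resolve_left this
  -- but R t₀ > 0 : positivity of the nonlocal integral
  have hIpos : 0 < ∫ y in Ω, J i₀ xb y * φ i₀ y t₀ := by
    set g : (Fin N → ℝ) → ℝ := fun y => J i₀ xb y * φ i₀ y t₀ with hg
    have hgcont : ContinuousOn g (closure Ω) := by
      have h1 : Continuous fun y => J i₀ xb y :=
        (hJcont i₀).comp (continuous_const.prodMk continuous_id)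
      have h2 : ContinuousOn (fun y => φ i₀ y t₀) (closure Ω) := by
        have hc : ContinuousOn (fun y : Fin N → ℝ => ((y, t₀) : (Fin N → ℝ) × ℝ))
            (closure Ω) := (continuous_id.prodMk continuous_const).continuousOn
        exact (hφcont i₀).comp hc (fun y hy => ⟨hy, ht₀⟩)
      exact h1.continuousOn.mul h2
    have hgint : IntegrableOn g Ω := by
      exact (hgcont.integrableOn_compact hclcomp).mono_set subset_closure
    have hgnn : 0 ≤ᵐ[volume.restrict Ω] g := by
      refine (ae_restrict_iff' hΩopen.measurableSet).2 (ae_of_all _ fun y hy => ?_)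
      exact mul_nonneg (hJnn i₀ xb y) (hφpos i₀ y (subset_closure hy) t₀ ht₀).le
    rw [setIntegral_pos_iff_support_of_nonneg_ae hgnn hgint]
    set U : Set (Fin N → ℝ) := {y | 0 < J i₀ xb y} with hU
    have hUopen : IsOpen U := isOpen_lt continuous_const ((hJcont i₀).comp
      (continuous_const.prodMk continuous_id))
    have hxbU : xb ∈ U := hJdiag i₀ xb
    have hne : (U ∩ Ω).Nonempty := by
      rcases mem_closure_iff.1 hxb U hUopen hxbU with ⟨y, hyU, hyΩ⟩
      exact ⟨y, hyU, hyΩ⟩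
    have hsub : U ∩ Ω ⊆ Function.support g ∩ Ω := by
      rintro y ⟨hyU, hyΩ⟩
      refine ⟨?_, hyΩ⟩
      exact (mul_pos hyU (hφpos i₀ y (subset_closure hyΩ) t₀ ht₀)).ne'
    calc (0:ENNReal) < volume (U ∩ Ω) := (hUopen.inter hΩopen).measure_pos volume hne
      _ ≤ volume (Function.support g ∩ Ω) := measure_mono hsub
  have hRpos : 0 < R t₀ := by
    refine Finset.sum_pos' (fun i _ => mul_nonneg (hψnn i t₀ ht₀)
      (mul_nonneg (hd i).le (hInn i t₀ ht₀))) ⟨i₀, Finset.mem_univ _, ?_⟩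
    exact mul_pos hψ₀pos (mul_pos (hd i₀) hIpos)
  linarith
end

section
/- (Nonexistence of positive periodic solutions in the critical and subcritical cases under strong subhomogeneity) Assume (F1) and (F2), and assume f is strongly subhomogeneous: f(x,t,ρu) ≫ ρ f(x,t,u) (strict inequality in every component) for all (x,t) ∈ Q̄_T, u ≫ 0 and ρ ∈ (0,1). Define b_ik(x,t) = ∂_{u_k} f_i(x,t,0), ℓ_ii = b_ii − d*_i, ℓ_ik = b_ik for i ≠ k, and let 𝓛 be the associated linear operator. Assume that for every φ ∈ P^m and every μ ∈ ℝ with 𝓛[φ] ≥ μφ on Q̄_T one has μ ≤ 0 (i.e. the generalized principal eigenvalue λ(𝓛) is ≤ 0). Then problem (3.1) has no solution U with all U_i continuous on Q̄_T and U_i(x,t) > 0 for all (x,t) ∈ Q̄_T. -/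
open MeasureTheory Set Function

/-- Membership in `P^m` (positive, time-periodic, continuous on `Q̄_T`, C¹ in time),
with explicit time-derivative data `φt`. -/
def IsPm {N m : ℕ} (Ω : Set (Fin N → ℝ)) (T : ℝ)
    (φ φt : Fin m → (Fin N → ℝ) → ℝ → ℝ) : Prop :=
  (∀ i, ContinuousOn (fun q : (Fin N → ℝ) × ℝ => φ i q.1 q.2)
    (closure Ω ×ˢ Icc (0:ℝ) T)) ∧
  (∀ i, ∀ x ∈ closure Ω, ∀ t ∈ Icc (0:ℝ) T,
    HasDerivWithinAt (φ i x) (φt i x t) (Icc (0:ℝ) T) t) ∧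
  (∀ i, ∀ x ∈ closure Ω, ContinuousOn (φt i x) (Icc (0:ℝ) T)) ∧
  (∀ i, ∀ x ∈ closure Ω, φ i x 0 = φ i x T) ∧
  (∀ i, ∀ x ∈ closure Ω, ∀ t ∈ Icc (0:ℝ) T, 0 < φ i x t)

/-- The expression `𝓛_i[φ](x,t)` for the operator with coefficient matrix `L`. -/
noncomputable def calL {N m : ℕ} (Ω : Set (Fin N → ℝ)) (d : Fin m → ℝ)
    (J : Fin m → (Fin N → ℝ) → (Fin N → ℝ) → ℝ)
    (L : Fin m → Fin m → (Fin N → ℝ) → ℝ → ℝ)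
    (φ φt : Fin m → (Fin N → ℝ) → ℝ → ℝ)
    (i : Fin m) (x : Fin N → ℝ) (t : ℝ) : ℝ :=
  d i * (∫ y in Ω, J i x y * φ i y t) + (∑ k, L i k x t * φ k x t) - φt i x t

/-- nonexistence of positive periodic solutions of (3.1) when
`λ(𝓛) ≤ 0` and f is strongly subhomogeneous. -/
theorem stmt_19 {N m : ℕ} (Ω : Set (Fin N → ℝ)) (hΩne : Ω.Nonempty)
    (hΩopen : IsOpen Ω) (hΩbdd : Bornology.IsBounded Ω)
    (T : ℝ) (hT : 0 < T)
    (d : Fin m → ℝ) (hd : ∀ i, 0 < d i)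
    -- each kernel Jᵢ satisfies condition (J)
    (J : Fin m → (Fin N → ℝ) → (Fin N → ℝ) → ℝ)
    (hJcont : ∀ i, Continuous (Function.uncurry (J i)))
    (hJnn : ∀ i x y, 0 ≤ J i x y)
    (hJdiag : ∀ i x, 0 < J i x x)
    (hJint : ∀ i x, (∫ y, J i x y) = 1)
    -- condition (D)
    (dstar : Fin m → (Fin N → ℝ) → ℝ)
    (hdstar : ∀ i, (∀ x, dstar i x = d i) ∨ (∀ x, dstar i x = d i * ∫ y in Ω, J i y x))
    -- (F1): f continuous, C¹ in u with partial derivatives fd, f(x,t,0) = 0, cooperative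
    (f : Fin m → (Fin N → ℝ) → ℝ → (Fin m → ℝ) → ℝ)
    (fd : Fin m → Fin m → (Fin N → ℝ) → ℝ → (Fin m → ℝ) → ℝ)
    (hfcont : ∀ i, ContinuousOn
      (fun q : ((Fin N → ℝ) × ℝ) × (Fin m → ℝ) => f i q.1.1 q.1.2 q.2)
      ((closure Ω ×ˢ Icc (0:ℝ) T) ×ˢ {v : Fin m → ℝ | 0 ≤ v}))
    (hfzero : ∀ i, ∀ x ∈ closure Ω, ∀ t ∈ Icc (0:ℝ) T, f i x t 0 = 0)
    (hfderiv : ∀ i k, ∀ x ∈ closure Ω, ∀ t ∈ Icc (0:ℝ) T, ∀ v : Fin m → ℝ, 0 ≤ v →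
      HasDerivWithinAt (fun s => f i x t (Function.update v k s))
        (fd i k x t v) (Ici (0:ℝ)) (v k))
    (hfdcont : ∀ i k, ContinuousOn
      (fun q : ((Fin N → ℝ) × ℝ) × (Fin m → ℝ) => fd i k q.1.1 q.1.2 q.2)
      ((closure Ω ×ˢ Icc (0:ℝ) T) ×ˢ {v : Fin m → ℝ | 0 ≤ v}))
    (hfcoop : ∀ i k, i ≠ k → ∀ x ∈ closure Ω, ∀ t ∈ Icc (0:ℝ) T,
      ∀ v : Fin m → ℝ, 0 ≤ v → 0 ≤ fd i k x t v)
    -- (F2): irreducibility of the Jacobian at some (x₀,t₀) ∈ Q̄_T for all u ≥ 0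
    (hF2 : ∃ x₀ ∈ closure Ω, ∃ t₀ ∈ Icc (0:ℝ) T, ∀ v : Fin m → ℝ, 0 ≤ v →
      MatIrreducible (fun i k => fd i k x₀ t₀ v))
    -- strong subhomogeneity
    (hstrong : ∀ ρ ∈ Ioo (0:ℝ) 1, ∀ x ∈ closure Ω, ∀ t ∈ Icc (0:ℝ) T,
      ∀ v : Fin m → ℝ, (∀ i, 0 < v i) →
        ∀ i, ρ * f i x t v < f i x t (fun k => ρ * v k))
    -- λ(𝓛) ≤ 0 : every Collatz–Wielandt lower value is ≤ 0
    (hcrit : ∀ φ φt : Fin m → (Fin N → ℝ) → ℝ → ℝ, IsPm Ω T φ φt →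
      ∀ μ : ℝ, (∀ i, ∀ x ∈ closure Ω, ∀ t ∈ Icc (0:ℝ) T,
        μ * φ i x t ≤ calL Ω d J (fun i k x t => fd i k x t 0 - if i = k then dstar i x else 0) φ φt i x t) → μ ≤ 0) :
    ¬ ∃ U Ut : Fin m → (Fin N → ℝ) → ℝ → ℝ,
      (∀ i, ContinuousOn (fun q : (Fin N → ℝ) × ℝ => U i q.1 q.2)
        (closure Ω ×ˢ Icc (0:ℝ) T)) ∧
      (∀ i, ∀ x ∈ closure Ω, ∀ t ∈ Icc (0:ℝ) T,
        HasDerivWithinAt (U i x) (Ut i x t) (Icc (0:ℝ) T) t) ∧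
      (∀ i, ∀ x ∈ closure Ω, ∀ t ∈ Icc (0:ℝ) T, 0 < U i x t) ∧
      (∀ i, ∀ x ∈ closure Ω, ∀ t ∈ Ioc (0:ℝ) T,
        Ut i x t = d i * (∫ y in Ω, J i x y * U i y t) - dstar i x * U i x t
          + f i x t (fun k => U k x t)) ∧
      (∀ i, ∀ x ∈ closure Ω, U i x 0 = U i x T) := by
  rintro ⟨U, Ut, hUcont, hUderiv, hUpos, hUeq, hUper⟩
  rcases Nat.eq_zero_or_pos m with hm0 | hm
  · subst hm0
    exact absurd (hcrit (fun i => i.elim0) (fun i => i.elim0)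
      ⟨fun i => i.elim0, fun i => i.elim0, fun i => i.elim0, fun i => i.elim0,
        fun i => i.elim0⟩ 1 (fun i => i.elim0)) (by norm_num)
  haveI : Nonempty (Fin m) := ⟨⟨0, hm⟩⟩
  have hKcomp : IsCompact (closure Ω) := hΩbdd.isCompact_closure
  have hQcomp : IsCompact ((closure Ω) ×ˢ Icc (0:ℝ) T) := hKcomp.prod isCompact_Icc
  have hQne : ((closure Ω) ×ˢ Icc (0:ℝ) T).Nonempty :=
    hΩne.closure.prod (nonempty_Icc.2 hT.le)
  haveI hfinΩ : IsFiniteMeasure (volume.restrict Ω) :=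
    ⟨by rw [Measure.restrict_apply_univ]; exact hΩbdd.measure_lt_top⟩
  -- continuity of U in t for fixed x
  have hUt : ∀ i, ∀ y ∈ closure Ω, ContinuousOn (fun t => U i y t) (Icc (0:ℝ) T) := by
    intro i y hy
    exact (hUcont i).comp ((continuous_const.prodMk continuous_id).continuousOn)
      (fun t htt => ⟨hy, htt⟩)
  -- continuity of U in x for fixed t
  have hUx : ∀ i t, t ∈ Icc (0:ℝ) T →
      ContinuousOn (fun y => U i y t) (closure Ω) := by
    intro i t htt
    exact (hUcont i).comp ((continuous_id.prodMk continuous_const).continuousOn)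
      (fun y hy => ⟨hy, htt⟩)
  -- continuity of the vector (x,t) ↦ U(x,t)
  have hUvec : ContinuousOn (fun q : (Fin N → ℝ) × ℝ => fun k => U k q.1 q.2)
      ((closure Ω) ×ˢ Icc (0:ℝ) T) := continuousOn_pi.2 fun k => hUcont k
  have hUvec_mem : ∀ q ∈ (closure Ω) ×ˢ Icc (0:ℝ) T,
      (fun k => U k q.1 q.2) ∈ {v : Fin m → ℝ | 0 ≤ v} := by
    intro q hq k
    exact (hUpos k q.1 hq.1 q.2 hq.2).le
  -- continuity of (x,t) ↦ f i x t (U(x,t))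
  have hfU : ∀ i, ContinuousOn
      (fun q : (Fin N → ℝ) × ℝ => f i q.1 q.2 (fun k => U k q.1 q.2))
      ((closure Ω) ×ˢ Icc (0:ℝ) T) := fun i =>
    (hfcont i).comp (continuousOn_id.prodMk hUvec) (fun q hq => ⟨hq, hUvec_mem q hq⟩)
  have hfdU0 : ∀ i k, ContinuousOn (fun q : (Fin N → ℝ) × ℝ => fd i k q.1 q.2 0)
      ((closure Ω) ×ˢ Icc (0:ℝ) T) := fun i k =>
    (hfdcont i k).comp (continuousOn_id.prodMk continuousOn_const)
      (fun q hq => ⟨hq, le_refl (0 : Fin m → ℝ)⟩)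
  -- continuity in t of the nonlocal term
  have hIcont : ∀ i, ∀ x ∈ closure Ω,
      ContinuousOn (fun t => ∫ y in Ω, J i x y * U i y t) (Icc (0:ℝ) T) := by
    intro i x hx t₀ ht₀
    obtain ⟨CU, hCU⟩ := hQcomp.exists_bound_of_continuousOn (hUcont i)
    obtain ⟨CJ, hCJ⟩ := (hKcomp.prod hKcomp).exists_bound_of_continuousOn
      (hJcont i).continuousOn
    have hCJ0 : 0 ≤ CJ := le_trans (norm_nonneg _) (hCJ (x, x) ⟨hx, hx⟩)
    apply MeasureTheory.continuousWithinAt_of_dominated (bound := fun _ => CJ * CU)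
    · apply eventually_nhdsWithin_of_forall
      intro t htt
      apply ContinuousOn.aestronglyMeasurable _ hΩopen.measurableSet
      have h1 : ContinuousOn (fun y => J i x y) Ω :=
        ((hJcont i).comp (continuous_const.prodMk continuous_id)).continuousOn
      exact h1.mul ((hUx i t htt).mono subset_closure)
    · apply eventually_nhdsWithin_of_forall
      intro t htt
      refine (ae_restrict_mem hΩopen.measurableSet).mono fun y hy => ?_
      have hyK : y ∈ closure Ω := subset_closure hy
      calc ‖J i x y * U i y t‖ = ‖J i x y‖ * ‖U i y t‖ := norm_mul _ _
        _ ≤ CJ * CU := mul_le_mul (hCJ (x, y) ⟨hx, hyK⟩) (hCU (y, t) ⟨hyK, htt⟩)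
            (norm_nonneg _) hCJ0
    · exact integrable_const _
    · refine (ae_restrict_mem hΩopen.measurableSet).mono fun y hy => ?_
      exact (continuousWithinAt_const).mul ((hUt i y (subset_closure hy)) t₀ ht₀)
  -- continuity in t of the right-hand side G
  have hGcont : ∀ i, ∀ x ∈ closure Ω, ContinuousOn
      (fun s => d i * (∫ y in Ω, J i x y * U i y s) - dstar i x * U i x s
        + f i x s (fun k => U k x s)) (Icc (0:ℝ) T) := by
    intro i x hx
    refine ContinuousOn.add (ContinuousOn.sub (continuousOn_const.mul (hIcont i x hx))
      (continuousOn_const.mul (hUt i x hx))) ?_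
    exact (hfU i).comp ((continuous_const.prodMk continuous_id).continuousOn)
      (fun s hs => ⟨hx, hs⟩)
  -- Ut equals G on all of [0,T]
  have hUtG : ∀ i, ∀ x ∈ closure Ω, ∀ t ∈ Icc (0:ℝ) T, Ut i x t =
      d i * (∫ y in Ω, J i x y * U i y t) - dstar i x * U i x t
        + f i x t (fun k => U k x t) := by
    intro i x hx t ht
    rcases eq_or_lt_of_le ht.1 with h0 | h0
    swap
    · exact hUeq i x hx t ⟨h0, ht.2⟩
    subst h0
    set g : ℝ → ℝ := fun s => d i * (∫ y in Ω, J i x y * U i y s)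
      - dstar i x * U i x s + f i x s (fun k => U k x s) with hg
    have hderiv : ∀ s ∈ Ioo (0:ℝ) T, HasDerivAt (U i x) (Ut i x s) s := fun s hs =>
      (hUderiv i x hx s (Ioo_subset_Icc_self hs)).hasDerivAt (Icc_mem_nhds hs.1 hs.2)
    have hdiffOn : DifferentiableOn ℝ (U i x) (Ioo 0 T) := fun s hs =>
      ((hderiv s hs).differentiableAt).differentiableWithinAt
    have htends : Filter.Tendsto (fun s => deriv (U i x) s) (nhdsWithin 0 (Ioi 0))
        (nhds (g 0)) := by
      have h1 : Filter.Tendsto g (nhdsWithin 0 (Ioi 0)) (nhds (g 0)) := by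
        rw [← nhdsWithin_Ioo_eq_nhdsGT hT]
        exact (hGcont i x hx 0 ⟨le_rfl, hT.le⟩).mono Ioo_subset_Icc_self
      apply h1.congr'
      rw [← nhdsWithin_Ioo_eq_nhdsGT hT]
      filter_upwards [self_mem_nhdsWithin] with s hs
      rw [(hderiv s hs).deriv]
      exact (hUeq i x hx s ⟨hs.1, hs.2.le⟩).symm
    have hD2 : HasDerivWithinAt (U i x) (g 0) (Ici 0) 0 :=
      hasDerivWithinAt_Ici_of_tendsto_deriv hdiffOn
        ((hUt i x hx 0 ⟨le_rfl, hT.le⟩).mono Ioo_subset_Icc_self)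
        (Ioo_mem_nhdsGT_of_mem ⟨le_rfl, hT⟩) htends
    have h1 := (hUderiv i x hx 0 ⟨le_rfl, hT.le⟩).derivWithin
      ((uniqueDiffOn_Icc hT) 0 ⟨le_rfl, hT.le⟩)
    have h2 := (hD2.mono Icc_subset_Ici_self).derivWithin
      ((uniqueDiffOn_Icc hT) 0 ⟨le_rfl, hT.le⟩)
    rw [← h1, h2]
  -- the key strict inequality from strong subhomogeneity
  have key : ∀ i, ∀ x ∈ closure Ω, ∀ t ∈ Icc (0:ℝ) T,
      f i x t (fun k => U k x t) < ∑ k, fd i k x t 0 * U k x t := by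
    intro i x hx t ht
    set u : Fin m → ℝ := fun k => U k x t with hu
    have hupos : ∀ k, 0 < u k := fun k => hUpos k x hx t ht
    set A : ℝ := ∑ k, fd i k x t 0 * u k with hA
    obtain ⟨Mu, hMupos, hMu⟩ : ∃ Mu, 0 < Mu ∧ ∀ k, u k ≤ Mu :=
      ⟨Finset.univ.sup' Finset.univ_nonempty u,
        lt_of_lt_of_le (hupos (Classical.arbitrary _))
          (Finset.le_sup' u (Finset.mem_univ _)),
        fun k => Finset.le_sup' u (Finset.mem_univ k)⟩
    have hstep2 : f i x t u < 2 * f i x t (fun k => (1/2 : ℝ) * u k) := by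
      have := hstrong (1/2) ⟨by norm_num, by norm_num⟩ x hx t ht u hupos i
      linarith
    have claim : ∀ ε > (0:ℝ), ∃ ρ, ρ ∈ Ioo (0:ℝ) (1/2) ∧
        f i x t (fun k => ρ * u k) ≤ ρ * A + ρ * ε := by
      intro ε hε
      set ε' : ℝ := ε / (m * Mu + 1) with hε'def
      have hmMu : (0:ℝ) < m * Mu + 1 := by
        have : (0:ℝ) ≤ m * Mu := mul_nonneg (Nat.cast_nonneg m) hMupos.le
        linarith
      have hε'pos : 0 < ε' := div_pos hε hmMu
      have hδ : ∀ j : Fin m, ∃ δ > 0, ∀ v : Fin m → ℝ, 0 ≤ v → ‖v‖ < δ →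
          fd i j x t v < fd i j x t 0 + ε' := by
        intro j
        have hcw : ContinuousWithinAt (fun v : Fin m → ℝ => fd i j x t v)
            {v : Fin m → ℝ | 0 ≤ v} 0 := by
          have h0 := (hfdcont i j) ((x, t), 0) ⟨⟨hx, ht⟩, le_refl (0 : Fin m → ℝ)⟩
          exact h0.comp ((continuous_const.prodMk continuous_id).continuousWithinAt)
            (fun v hv => ⟨⟨hx, ht⟩, hv⟩)
        rw [Metric.continuousWithinAt_iff] at hcw
        obtain ⟨δ, hδpos, hδ⟩ := hcw ε' hε'pos
        refine ⟨δ, hδpos, fun v hv hnorm => ?_⟩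
        have h1 := hδ hv (by rwa [dist_zero_right])
        rw [Real.dist_eq] at h1
        have := abs_lt.1 h1
        linarith [this.2]
      choose δf hδfpos hδfprop using hδ
      set δ : ℝ := Finset.univ.inf' Finset.univ_nonempty δf with hδdef
      have hδpos : 0 < δ := (Finset.lt_inf'_iff _).2 fun j _ => hδfpos j
      set ρ : ℝ := min (1/4) (δ / (2 * Mu)) with hρdef
      have hρpos : 0 < ρ := lt_min (by norm_num) (div_pos hδpos (mul_pos two_pos hMupos))
      have hρlt : ρ < 1/2 := lt_of_le_of_lt (min_le_left _ _) (by norm_num)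
      have hρMu : ρ * Mu < δ := by
        have h1 : ρ * Mu ≤ (δ / (2 * Mu)) * Mu :=
          mul_le_mul_of_nonneg_right (min_le_right _ _) hMupos.le
        have h2 : (δ / (2 * Mu)) * Mu = δ / 2 := by field_simp
        linarith
      -- the telescoping vectors
      set w : ℕ → Fin m → ℝ := fun n k => if (k : ℕ) < n then ρ * u k else 0 with hw
      have hw0 : w 0 = 0 := funext fun k => by simp [hw]
      have hwm : w m = fun k => ρ * u k := funext fun k => if_pos k.isLt
      have hwnn : ∀ n, (0 : Fin m → ℝ) ≤ w n := by
        intro n k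
        simp only [hw]
        split
        · exact mul_nonneg hρpos.le (hupos _).le
        · exact le_rfl
      have hMVT : ∀ n, ∀ h : n < m,
          f i x t (w (n+1)) - f i x t (w n) ≤
            (fd i ⟨n, h⟩ x t 0 + ε') * (ρ * u ⟨n, h⟩) := by
        intro n h
        set j : Fin m := ⟨n, h⟩ with hj
        have hb : 0 < ρ * u j := mul_pos hρpos (hupos j)
        set F : ℝ → ℝ := fun s => f i x t (Function.update (w n) j s) with hF
        have hvnn : ∀ s : ℝ, 0 ≤ s → (0 : Fin m → ℝ) ≤ Function.update (w n) j s := by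
          intro s hs k
          rcases eq_or_ne k j with rfl | hk
          · rw [Function.update_self]; exact hs
          · rw [Function.update_of_ne hk]; exact hwnn n k
        have hFd : ∀ s : ℝ, 0 ≤ s → HasDerivWithinAt F
            (fd i j x t (Function.update (w n) j s)) (Ici 0) s := by
          intro s hs
          have hD := hfderiv i j x hx t ht (Function.update (w n) j s) (hvnn s hs)
          simp only [Function.update_self] at hD
          have hFeq : (fun s' => f i x t
              (Function.update (Function.update (w n) j s) j s')) = F := by
            funext s'
            rw [Function.update_idem]
          rwa [hFeq] at hD
        have hFcont : ContinuousOn F (Icc 0 (ρ * u j)) := fun s hs =>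
          ((hFd s hs.1).continuousWithinAt).mono Icc_subset_Ici_self
        have hFderiv : ∀ s ∈ Ioo (0:ℝ) (ρ * u j),
            HasDerivAt F (fd i j x t (Function.update (w n) j s)) s := fun s hs =>
          (hFd s hs.1.le).hasDerivAt (Ici_mem_nhds hs.1)
        obtain ⟨c, hc, hslope⟩ := exists_hasDerivAt_eq_slope F
          (fun s => fd i j x t (Function.update (w n) j s)) hb hFcont hFderiv
        have hwnj : w n j = 0 := by simp [hw, hj]
        have hF0 : F 0 = f i x t (w n) := by
          have : Function.update (w n) j 0 = w n := by
            rw [← hwnj]; exact Function.update_eq_self j (w n)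
          rw [hF]; simp only [this]
        have hFb : F (ρ * u j) = f i x t (w (n+1)) := by
          have hsucc : Function.update (w n) j (ρ * u j) = w (n+1) := by
            funext k
            rcases eq_or_ne k j with rfl | hk
            · rw [Function.update_self]
              simp only [hw, hj]
              rw [if_pos (Nat.lt_succ_self n)]
            · rw [Function.update_of_ne hk]
              simp only [hw]
              have hkn : (k : ℕ) ≠ n := fun hkn => hk (Fin.ext hkn)
              by_cases h' : (k : ℕ) < n
              · rw [if_pos h', if_pos (Nat.lt_succ_of_lt h')]
              · rw [if_neg h', if_neg (by omega)]
          rw [hF]; simp only [hsucc]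
        have hdiff : f i x t (w (n+1)) - f i x t (w n) =
            fd i j x t (Function.update (w n) j c) * (ρ * u j) := by
          rw [← hFb, ← hF0]
          rw [hslope]
          rw [sub_zero, div_mul_cancel₀ _ hb.ne']
        have hwcnn : (0 : Fin m → ℝ) ≤ Function.update (w n) j c := hvnn c hc.1.le
        have hwcnorm : ‖Function.update (w n) j c‖ < δf j := by
          have hle : ‖Function.update (w n) j c‖ ≤ ρ * Mu := by
            rw [pi_norm_le_iff_of_nonneg (mul_nonneg hρpos.le hMupos.le)]
            intro k
            rcases eq_or_ne k j with rfl | hk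
            · rw [Function.update_self, Real.norm_eq_abs, abs_of_nonneg hc.1.le]
              exact hc.2.le.trans (mul_le_mul_of_nonneg_left (hMu _) hρpos.le)
            · rw [Function.update_of_ne hk]
              simp only [hw]
              split
              · rw [Real.norm_eq_abs, abs_of_nonneg (mul_nonneg hρpos.le (hupos k).le)]
                exact mul_le_mul_of_nonneg_left (hMu k) hρpos.le
              · rw [norm_zero]
                exact mul_nonneg hρpos.le hMupos.le
          calc ‖Function.update (w n) j c‖ ≤ ρ * Mu := hle
            _ < δ := hρMu
            _ ≤ δf j := Finset.inf'_le _ (Finset.mem_univ j)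
        have hfdle := hδfprop j (Function.update (w n) j c) hwcnn hwcnorm
        rw [hdiff]
        exact mul_le_mul_of_nonneg_right hfdle.le hb.le
      refine ⟨ρ, ⟨hρpos, hρlt⟩, ?_⟩
      have htel : f i x t (fun k => ρ * u k) =
          ∑ n ∈ Finset.range m, (f i x t (w (n+1)) - f i x t (w n)) := by
        rw [Finset.sum_range_sub (fun n => f i x t (w n)), hwm, hw0,
          hfzero i x hx t ht, sub_zero]
      have hsum_le : ∑ n ∈ Finset.range m, (f i x t (w (n+1)) - f i x t (w n)) ≤
          ∑ n ∈ Finset.range m,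
            (if h : n < m then (fd i ⟨n, h⟩ x t 0 + ε') * (ρ * u ⟨n, h⟩) else 0) := by
        apply Finset.sum_le_sum
        intro n hn
        have h : n < m := Finset.mem_range.1 hn
        rw [dif_pos h]
        exact hMVT n h
      have hconv : (∑ n ∈ Finset.range m,
          (if h : n < m then (fd i ⟨n, h⟩ x t 0 + ε') * (ρ * u ⟨n, h⟩) else 0))
          = ∑ k, (fd i k x t 0 + ε') * (ρ * u k) := by
        rw [← Fin.sum_univ_eq_sum_range
          (fun n => if h : n < m then (fd i ⟨n, h⟩ x t 0 + ε') * (ρ * u ⟨n, h⟩) else 0) m]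
        exact Finset.sum_congr rfl fun k _ => by simp
      have hsumu : ∑ k, u k ≤ m * Mu := by
        calc ∑ k, u k ≤ ∑ _k : Fin m, Mu := Finset.sum_le_sum fun k _ => hMu k
          _ = m * Mu := by simp [Finset.sum_const, Finset.card_univ, nsmul_eq_mul]
      have hεbound : ε' * ∑ k, u k ≤ ε := by
        have h1 : ε' * ∑ k, u k ≤ ε' * (m * Mu) :=
          mul_le_mul_of_nonneg_left hsumu hε'pos.le
        have h2 : ε' * (m * Mu + 1) = ε := by
          rw [hε'def]; field_simp
        nlinarith
      have hexpand : ∑ k, (fd i k x t 0 + ε') * (ρ * u k)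
          = ρ * A + ρ * (ε' * ∑ k, u k) := by
        rw [hA, Finset.mul_sum, Finset.mul_sum, Finset.mul_sum, ← Finset.sum_add_distrib]
        exact Finset.sum_congr rfl fun k _ => by ring
      have : ρ * (ε' * ∑ k, u k) ≤ ρ * ε :=
        mul_le_mul_of_nonneg_left hεbound hρpos.le
      linarith [htel, hsum_le, hconv.le, hconv.ge]
    have h2f : 2 * f i x t (fun k => (1/2 : ℝ) * u k) ≤ A := by
      apply le_of_forall_pos_le_add
      intro ε hε
      obtain ⟨ρ, hρ, hρle⟩ := claim ε hε
      have h2ρ : 2 * ρ ∈ Ioo (0:ℝ) 1 := ⟨by linarith [hρ.1], by linarith [hρ.2]⟩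
      have hhalfpos : ∀ k, 0 < (1/2 : ℝ) * u k := fun k => by
        have := hupos k; linarith
      have hs := hstrong (2 * ρ) h2ρ x hx t ht (fun k => (1/2 : ℝ) * u k) hhalfpos i
      have heq : (fun k => (2 * ρ) * ((1/2 : ℝ) * u k)) = fun k => ρ * u k := by
        funext k; ring
      rw [heq] at hs
      nlinarith [hρ.1]
    linarith
  -- uniform positive lower bound for the gap, uniform upper bound for U
  have hc : ∀ i : Fin m, ∃ c > (0:ℝ), ∀ q ∈ (closure Ω) ×ˢ Icc (0:ℝ) T,
      c ≤ (∑ k, fd i k q.1 q.2 0 * U k q.1 q.2) - f i q.1 q.2 (fun k => U k q.1 q.2) := by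
    intro i
    have hLcont : ContinuousOn (fun q : (Fin N → ℝ) × ℝ =>
        (∑ k, fd i k q.1 q.2 0 * U k q.1 q.2) - f i q.1 q.2 (fun k => U k q.1 q.2))
        ((closure Ω) ×ˢ Icc (0:ℝ) T) := by
      apply ContinuousOn.sub _ (hfU i)
      exact continuousOn_finset_sum _ fun k _ => (hfdU0 i k).mul (hUcont k)
    obtain ⟨q₀, hq₀, hmin⟩ := hQcomp.exists_isMinOn hQne hLcont
    refine ⟨_, sub_pos.2 (key i q₀.1 hq₀.1 q₀.2 hq₀.2), fun q hq => ?_⟩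
    exact isMinOn_iff.1 hmin q hq
  choose c hcpos hcle using hc
  have hM : ∀ i : Fin m, ∃ M > (0:ℝ), ∀ q ∈ (closure Ω) ×ˢ Icc (0:ℝ) T,
      U i q.1 q.2 ≤ M := by
    intro i
    obtain ⟨q₀, hq₀, hmax⟩ := hQcomp.exists_isMaxOn hQne (hUcont i)
    exact ⟨U i q₀.1 q₀.2, hUpos i q₀.1 hq₀.1 q₀.2 hq₀.2,
      fun q hq => isMaxOn_iff.1 hmax q hq⟩
  choose M hMpos hMle using hM
  set μ : ℝ := Finset.univ.inf' Finset.univ_nonempty (fun i => c i / M i) with hμ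
  have hμpos : 0 < μ := (Finset.lt_inf'_iff _).2 fun i _ => div_pos (hcpos i) (hMpos i)
  have hμle : ∀ i, μ ≤ c i / M i := fun i => Finset.inf'_le _ (Finset.mem_univ i)
  -- U is an admissible test function
  have hUtcont : ∀ i, ∀ x ∈ closure Ω, ContinuousOn (Ut i x) (Icc (0:ℝ) T) :=
    fun i x hx => (hGcont i x hx).congr (fun t htt => hUtG i x hx t htt)
  have hPm : IsPm Ω T U Ut := ⟨hUcont, hUderiv, hUtcont, hUper, hUpos⟩
  have hineq : ∀ i, ∀ x ∈ closure Ω, ∀ t ∈ Icc (0:ℝ) T,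
      μ * U i x t ≤ calL Ω d J
        (fun i k x t => fd i k x t 0 - if i = k then dstar i x else 0) U Ut i x t := by
    intro i x hx t ht
    have hcal : calL Ω d J
        (fun i k x t => fd i k x t 0 - if i = k then dstar i x else 0) U Ut i x t
        = (∑ k, fd i k x t 0 * U k x t) - f i x t (fun k => U k x t) := by
      unfold calL
      rw [hUtG i x hx t ht]
      have hsplit : (∑ k, (fd i k x t 0 - if i = k then dstar i x else 0) * U k x t)
          = (∑ k, fd i k x t 0 * U k x t) - dstar i x * U i x t := by
        simp only [sub_mul, Finset.sum_sub_distrib]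
        congr 1
        simp [ite_mul, Finset.sum_ite_eq]
      rw [hsplit]
      ring
    rw [hcal]
    have h1 : μ * U i x t ≤ (c i / M i) * U i x t :=
      mul_le_mul_of_nonneg_right (hμle i) (hUpos i x hx t ht).le
    have h2 : (c i / M i) * U i x t ≤ (c i / M i) * M i :=
      mul_le_mul_of_nonneg_left (hMle i (x, t) ⟨hx, ht⟩)
        (div_pos (hcpos i) (hMpos i)).le
    have h3 : (c i / M i) * M i = c i := div_mul_cancel₀ _ (hMpos i).ne'
    have h4 := hcle i (x, t) ⟨hx, ht⟩
    linarith
  linarith [hcrit U Ut hPm μ hineq, hμpos]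
end
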